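/- arXiv:1205.4549 — 10 statements merged into one kernel-verified Lean document; each statement's English description precedes it below -/
import Mathlib

section
/- Let a < b be real numbers and let f : [a,b] → ℝ be differentiable on (a,b) with f' integrable on [a,b], and suppose γ ≤ f'(t) ≤ Γ for all t ∈ [a,b]. Set S = (f(b) − f(a))/(b − a). Then for all x ∈ [a, (a+b)/2], |(f(x) + f(a+b−x))/2 − (1/(b−a)) ∫_a^b f(t) dt| ≤ [(b−a)/4 + |x − (3a+b)/4|] · (S − γ). -/
set_option maxHeartbeats 1000000

open MeasureTheory Set intervalIntegral

private lemma ibp_aux (f f' : ℝ → ℝ) (u v c : ℝ) (huv : u ≤ v)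
    (hcont : ContinuousOn f (Set.Icc u v))
    (hderiv : ∀ t ∈ Set.Ioo u v, HasDerivAt f (f' t) t)
    (hint : IntervalIntegrable f' volume u v)
    (hfint : IntervalIntegrable f volume u v) :
    ∫ t in u..v, (t - c) * f' t = (v - c) * f v - (u - c) * f u - ∫ t in u..v, f t := by
  have hGint : IntervalIntegrable (fun t => (t - c) * f' t) volume u v :=
    hint.continuousOn_mul (by fun_prop)
  have key : ∫ t in u..v, (f t + (t - c) * f' t)
      = (v - c) * f v - (u - c) * f u := by
    apply integral_eq_sub_of_hasDeriv_right_of_le (f := fun t => (t - c) * f t) huv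
    · exact (continuousOn_id.sub continuousOn_const).mul hcont
    · intro t ht
      have := (((hasDerivAt_id t).sub_const c).mul (hderiv t ht)).hasDerivWithinAt
        (s := Set.Ioi t)
      convert this using 1; simp
      · rfl
      · simp
    · exact hfint.add hGint
  rw [intervalIntegral.integral_add hfint hGint] at key
  linarith

private lemma eval_aux (f f' : ℝ → ℝ) (u v c γ : ℝ) (huv : u ≤ v)
    (hcont : ContinuousOn f (Set.Icc u v))
    (hderiv : ∀ t ∈ Set.Ioo u v, HasDerivAt f (f' t) t)
    (hint : IntervalIntegrable f' volume u v) :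
    ∫ t in u..v, (t - c) * (f' t - γ)
      = (v - c) * f v - (u - c) * f u - (∫ t in u..v, f t)
        - γ * ((v - c) ^ 2 - (u - c) ^ 2) / 2 := by
  have hfint : IntervalIntegrable f volume u v := by
    apply ContinuousOn.intervalIntegrable; rwa [Set.uIcc_of_le huv]
  have h1 := ibp_aux f f' u v c huv hcont hderiv hint hfint
  have hGint : IntervalIntegrable (fun t => (t - c) * f' t) volume u v :=
    hint.continuousOn_mul (by fun_prop)
  have hlin : IntervalIntegrable (fun t => (t - c) * γ) volume u v := by
    apply Continuous.intervalIntegrable; fun_prop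
  have h2 : ∫ t in u..v, (t - c) * γ = γ * ((v - c) ^ 2 - (u - c) ^ 2) / 2 := by
    rw [intervalIntegral.integral_mul_const,
      intervalIntegral.integral_sub intervalIntegrable_id intervalIntegrable_const,
      integral_id, _root_.intervalIntegral.integral_const]
    simp only [smul_eq_mul]
    try ring
  have h3 : ∫ t in u..v, (t - c) * (f' t - γ)
      = (∫ t in u..v, (t - c) * f' t) - ∫ t in u..v, (t - c) * γ := by
    rw [← intervalIntegral.integral_sub hGint hlin]
    apply intervalIntegral.integral_congr
    intro t _
    ring
  rw [h3, h1, h2]; try ring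

private lemma piece_bound (f' : ℝ → ℝ) (γ u v c M : ℝ) (huv : u ≤ v)
    (hint : IntervalIntegrable f' volume u v)
    (hγ : ∀ t ∈ Set.Icc u v, γ ≤ f' t)
    (hM : ∀ t ∈ Set.Icc u v, |t - c| ≤ M) :
    |∫ t in u..v, (t - c) * (f' t - γ)| ≤ M * ∫ t in u..v, (f' t - γ) := by
  have hint' : IntervalIntegrable (fun t => f' t - γ) volume u v :=
    hint.sub intervalIntegrable_const
  have hprod : IntervalIntegrable (fun t => (t - c) * (f' t - γ)) volume u v :=
    hint'.continuousOn_mul (by fun_prop)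
  calc |∫ t in u..v, (t - c) * (f' t - γ)|
      ≤ ∫ t in u..v, |(t - c) * (f' t - γ)| :=
        intervalIntegral.abs_integral_le_integral_abs huv
    _ ≤ ∫ t in u..v, M * (f' t - γ) := by
        apply intervalIntegral.integral_mono_on huv hprod.abs (hint'.const_mul M)
        intro t ht
        rw [abs_mul, abs_of_nonneg (sub_nonneg.2 (hγ t ht))]
        exact mul_le_mul_of_nonneg_right (hM t ht) (sub_nonneg.2 (hγ t ht))
    _ = M * ∫ t in u..v, (f' t - γ) := intervalIntegral.integral_const_mul M _

/-- **Companion of Ostrowski's inequality, lower-bound version** (Theorem 2.1, inequality (2.1)).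
If `f : [a,b] → ℝ` is continuous on `[a,b]`, differentiable on `(a,b)` with derivative `f'`
integrable on `[a,b]` and `γ ≤ f' ≤ Γ` on `[a,b]`, then with `S = (f b - f a)/(b - a)`,
for every `x ∈ [a, (a+b)/2]`,
`|(f x + f (a+b-x))/2 - (1/(b-a)) ∫_a^b f| ≤ ((b-a)/4 + |x - (3a+b)/4|) (S - γ)`. -/
theorem companion_ostrowski_L1_lower
    (a b γ Γ : ℝ) (hab : a < b) (f f' : ℝ → ℝ)
    (hcont : ContinuousOn f (Set.Icc a b))
    (hderiv : ∀ t ∈ Set.Ioo a b, HasDerivAt f (f' t) t)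
    (hint : IntervalIntegrable f' MeasureTheory.volume a b)
    (hbound : ∀ t ∈ Set.Icc a b, γ ≤ f' t ∧ f' t ≤ Γ)
    (S : ℝ) (hS : S = (f b - f a) / (b - a)) :
    ∀ x ∈ Set.Icc a ((a + b) / 2),
      |(f x + f (a + b - x)) / 2 - (1 / (b - a)) * ∫ t in a..b, f t|
        ≤ ((b - a) / 4 + |x - (3 * a + b) / 4|) * (S - γ) := by
  intro x hx
  obtain ⟨hax, hxm⟩ := hx
  have hba : (0:ℝ) < b - a := sub_pos.2 hab
  set y := a + b - x with hy
  set m := (a + b) / 2 with hm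
  set M := (b - a) / 4 + |x - (3 * a + b) / 4| with hM
  have hxy : x ≤ y := by simp only [hy]; linarith
  have hyb : y ≤ b := by simp only [hy]; linarith
  have hay : a ≤ y := le_trans hax hxy
  have hxb : x ≤ b := le_trans hxy hyb
  -- bounds on M
  have hM1 : x - a ≤ M := by
    have := le_abs_self (x - (3 * a + b) / 4); rw [hM]; linarith
  have hM2 : m - x ≤ M := by
    have := neg_abs_le (x - (3 * a + b) / 4); rw [hM, hm]; linarith
  -- subinterval facts
  have subIcc : ∀ {u v : ℝ}, a ≤ u → v ≤ b → Set.Icc u v ⊆ Set.Icc a b :=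
    fun h1 h2 => Set.Icc_subset_Icc h1 h2
  have subint : ∀ u v : ℝ, a ≤ u → u ≤ v → v ≤ b →
      IntervalIntegrable f' volume u v := by
    intro u v h1 h2 h3
    apply hint.mono_set
    rw [Set.uIcc_of_le h2, Set.uIcc_of_le hab.le]
    exact Set.Icc_subset_Icc h1 h3
  have subcont : ∀ u v : ℝ, a ≤ u → v ≤ b → ContinuousOn f (Set.Icc u v) :=
    fun u v h1 h2 => hcont.mono (subIcc h1 h2)
  have subderiv : ∀ u v : ℝ, a ≤ u → v ≤ b → ∀ t ∈ Set.Ioo u v,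
      HasDerivAt f (f' t) t := fun u v h1 h2 t ht =>
    hderiv t ⟨lt_of_le_of_lt h1 ht.1, lt_of_lt_of_le ht.2 h2⟩
  have hfint : ∀ u v : ℝ, a ≤ u → u ≤ v → v ≤ b →
      IntervalIntegrable f volume u v := by
    intro u v h1 h2 h3
    apply ContinuousOn.intervalIntegrable
    rw [Set.uIcc_of_le h2]; exact (subcont u v h1 h3)
  -- the three pieces
  have hE1 := eval_aux f f' a x a γ hax (subcont a x le_rfl hxb)
    (subderiv a x le_rfl hxb) (subint a x le_rfl hax hxb)
  have hE2 := eval_aux f f' x y m γ hxy (subcont x y hax hyb)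
    (subderiv x y hax hyb) (subint x y hax hxy hyb)
  have hE3 := eval_aux f f' y b b γ hyb (subcont y b hay le_rfl)
    (subderiv y b hay le_rfl) (subint y b hay hyb le_rfl)
  -- splitting the integral of f
  have hsplitf : (∫ t in a..x, f t) + (∫ t in x..y, f t) + (∫ t in y..b, f t)
      = ∫ t in a..b, f t := by
    rw [intervalIntegral.integral_add_adjacent_intervals (hfint a x le_rfl hax hxb)
      (hfint x y hax hxy hyb)]
    exact intervalIntegral.integral_add_adjacent_intervals (hfint a y le_rfl hay hyb)
      (hfint y b hay hyb le_rfl)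
  -- the identity
  have hsum : (∫ t in a..x, (t - a) * (f' t - γ)) + (∫ t in x..y, (t - m) * (f' t - γ))
      + (∫ t in y..b, (t - b) * (f' t - γ))
      = (b - a) / 2 * (f x + f y) - ∫ t in a..b, f t := by
    rw [hE1, hE2, hE3, ← hsplitf, hy, hm]
    ring
  -- bounds on each piece
  have hγ' : ∀ u v : ℝ, a ≤ u → v ≤ b → ∀ t ∈ Set.Icc u v, γ ≤ f' t :=
    fun u v h1 h2 t ht => (hbound t (subIcc h1 h2 ht)).1
  have hB1 := piece_bound f' γ a x a M hax (subint a x le_rfl hax hxb)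
    (hγ' a x le_rfl hxb) (by
      intro t ht
      rw [abs_of_nonneg (by linarith [ht.1])]
      linarith [ht.2])
  have hB2 := piece_bound f' γ x y m M hxy (subint x y hax hxy hyb)
    (hγ' x y hax hyb) (by
      intro t ht
      have h1 := ht.1; have h2 := ht.2
      have hyv : y = a + b - x := hy
      have hmv : m = (a + b) / 2 := hm
      rw [abs_le]
      constructor <;> nlinarith [hM2, hyv, hmv])
  have hB3 := piece_bound f' γ y b b M hyb (subint y b hay hyb le_rfl)
    (hγ' y b hay le_rfl) (by
      intro t ht
      rw [abs_of_nonpos (by linarith [ht.2])]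
      simp only [hy] at ht ⊢; linarith [ht.1])
  -- total integral of f' - γ
  have hftc : ∫ t in a..b, f' t = f b - f a :=
    integral_eq_sub_of_hasDeriv_right_of_le hab.le hcont
      (fun t ht => (hderiv t ht).hasDerivWithinAt) hint
  have hsplit' : (∫ t in a..x, (f' t - γ)) + (∫ t in x..y, (f' t - γ))
      + (∫ t in y..b, (f' t - γ)) = (f b - f a) - γ * (b - a) := by
    have e : ∀ u v : ℝ, a ≤ u → u ≤ v → v ≤ b →
        (∫ t in u..v, (f' t - γ)) = (∫ t in u..v, f' t) - γ * (v - u) := by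
      intro u v h1 h2 h3
      rw [intervalIntegral.integral_sub (subint u v h1 h2 h3) intervalIntegrable_const,
        intervalIntegral.integral_const]
      simp [mul_comm]
    rw [e a x le_rfl hax hxb, e x y hax hxy hyb, e y b hay hyb le_rfl]
    have : (∫ t in a..x, f' t) + (∫ t in x..y, f' t) + (∫ t in y..b, f' t)
        = ∫ t in a..b, f' t := by
      rw [intervalIntegral.integral_add_adjacent_intervals (subint a x le_rfl hax hxb)
        (subint x y hax hxy hyb)]
      exact intervalIntegral.integral_add_adjacent_intervals (subint a y le_rfl hay hyb)
        (subint y b hay hyb le_rfl)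
    rw [hftc] at this
    linarith
  -- nonnegativity of the D pieces
  have hDnn : ∀ u v : ℝ, a ≤ u → u ≤ v → v ≤ b → 0 ≤ ∫ t in u..v, (f' t - γ) := by
    intro u v h1 h2 h3
    apply intervalIntegral.integral_nonneg h2
    intro t ht
    exact sub_nonneg.2 ((hbound t (subIcc h1 h3 ht)).1)
  have hMnn : 0 ≤ M := le_trans (by linarith) hM1
  -- assemble
  have key : |(∫ t in a..x, (t - a) * (f' t - γ)) + (∫ t in x..y, (t - m) * (f' t - γ))
      + (∫ t in y..b, (t - b) * (f' t - γ))| ≤ M * ((f b - f a) - γ * (b - a)) := by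
    calc |(∫ t in a..x, (t - a) * (f' t - γ)) + (∫ t in x..y, (t - m) * (f' t - γ))
        + (∫ t in y..b, (t - b) * (f' t - γ))|
        ≤ |∫ t in a..x, (t - a) * (f' t - γ)| + |∫ t in x..y, (t - m) * (f' t - γ)|
          + |∫ t in y..b, (t - b) * (f' t - γ)| := by
          exact le_trans (abs_add_le _ _) (by gcongr; exact abs_add_le _ _)
      _ ≤ M * (∫ t in a..x, (f' t - γ)) + M * (∫ t in x..y, (f' t - γ))
          + M * (∫ t in y..b, (f' t - γ)) := by linarith
      _ = M * ((f b - f a) - γ * (b - a)) := by rw [← hsplit']; ring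
  have hexp : (f x + f y) / 2 - (1 / (b - a)) * (∫ t in a..b, f t)
      = ((∫ t in a..x, (t - a) * (f' t - γ)) + (∫ t in x..y, (t - m) * (f' t - γ))
        + (∫ t in y..b, (t - b) * (f' t - γ))) / (b - a) := by
    rw [eq_div_iff hba.ne', hsum]
    field_simp
  rw [hexp, abs_div, abs_of_pos hba, div_le_iff₀ hba]
  calc |(∫ t in a..x, (t - a) * (f' t - γ)) + (∫ t in x..y, (t - m) * (f' t - γ))
      + (∫ t in y..b, (t - b) * (f' t - γ))|
      ≤ M * ((f b - f a) - γ * (b - a)) := key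
    _ = M * (S - γ) * (b - a) := by
        have h : (S - γ) * (b - a) = (f b - f a) - γ * (b - a) := by
          rw [hS]; field_simp; try ring
        rw [mul_assoc, h]
end

section
/- Let a < b be real numbers and let f : [a,b] → ℝ be differentiable on (a,b) with f' integrable on [a,b], and suppose γ ≤ f'(t) ≤ Γ for all t ∈ [a,b]. Set S = (f(b) − f(a))/(b − a). Then for all x ∈ [a, (a+b)/2], |(f(x) + f(a+b−x))/2 − (1/(b−a)) ∫_a^b f(t) dt| ≤ [(b−a)/4 + |x − (3a+b)/4|] · (Γ − S). -/
open intervalIntegral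

set_option maxHeartbeats 1000000 in
/-- **Companion of Ostrowski's inequality, upper-bound version** (Theorem 2.1, inequality (2.2)).
If `f : [a,b] → ℝ` is continuous on `[a,b]`, differentiable on `(a,b)` with derivative `f'`
integrable on `[a,b]` and `γ ≤ f' ≤ Γ` on `[a,b]`, then with `S = (f b - f a)/(b - a)`,
for every `x ∈ [a, (a+b)/2]`,
`|(f x + f (a+b-x))/2 - (1/(b-a)) ∫_a^b f| ≤ ((b-a)/4 + |x - (3a+b)/4|) (Γ - S)`. -/
theorem companion_ostrowski_L1_upper
    (a b γ Γ : ℝ) (hab : a < b) (f f' : ℝ → ℝ)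
    (hcont : ContinuousOn f (Set.Icc a b))
    (hderiv : ∀ t ∈ Set.Ioo a b, HasDerivAt f (f' t) t)
    (hint : IntervalIntegrable f' MeasureTheory.volume a b)
    (hbound : ∀ t ∈ Set.Icc a b, γ ≤ f' t ∧ f' t ≤ Γ)
    (S : ℝ) (hS : S = (f b - f a) / (b - a)) :
    ∀ x ∈ Set.Icc a ((a + b) / 2),
      |(f x + f (a + b - x)) / 2 - (1 / (b - a)) * ∫ t in a..b, f t|
        ≤ ((b - a) / 4 + |x - (3 * a + b) / 4|) * (Γ - S) := by
  intro x hx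
  obtain ⟨hax, hxm⟩ := hx
  set y : ℝ := a + b - x with hy
  set m : ℝ := (a + b) / 2 with hm
  set M : ℝ := (b - a) / 4 + |x - (3 * a + b) / 4| with hM
  set g : ℝ → ℝ := fun t => Γ - f' t with hg
  have hba : (0:ℝ) < b - a := by linarith
  have hxy : x ≤ y := by simp only [hy]; linarith
  have hyb : y ≤ b := by simp only [hy]; linarith
  have hay : a ≤ y := by simp only [hy]; linarith
  have hM1 : x - a ≤ M := by
    rcases abs_cases (x - (3 * a + b) / 4) with ⟨h1, h2⟩ | ⟨h1, h2⟩ <;>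
      simp only [hM] <;> linarith
  have hM2 : m - x ≤ M := by
    rcases abs_cases (x - (3 * a + b) / 4) with ⟨h1, h2⟩ | ⟨h1, h2⟩ <;>
      simp only [hM, hm] <;> linarith
  have hM0 : 0 ≤ M := le_trans (by linarith) hM1
  have hgnn : ∀ t ∈ Set.Icc a b, 0 ≤ g t := fun t ht => by
    have := (hbound t ht).2; simp only [hg]; linarith
  have hgint : IntervalIntegrable g MeasureTheory.volume a b :=
    intervalIntegrable_const.sub hint
  -- integrability on subintervals
  have subint : ∀ c d : ℝ, a ≤ c → c ≤ d → d ≤ b →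
      IntervalIntegrable f MeasureTheory.volume c d ∧
      IntervalIntegrable f' MeasureTheory.volume c d ∧
      IntervalIntegrable g MeasureTheory.volume c d := by
    intro c d hac hcd hdb
    have hIcc : Set.uIcc c d ⊆ Set.Icc a b := by
      rw [Set.uIcc_of_le hcd]; exact Set.Icc_subset_Icc hac hdb
    have hU : Set.uIcc c d ⊆ Set.uIcc a b := by
      rw [Set.uIcc_of_le hab.le]; exact hIcc
    exact ⟨(hcont.mono hIcc).intervalIntegrable, hint.mono_set hU, hgint.mono_set hU⟩
  -- key integration-by-parts identity on subintervals
  have key : ∀ c d e : ℝ, a ≤ c → c ≤ d → d ≤ b →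
      (∫ t in c..d, (t - e) * f' t) =
        (d - e) * f d - (c - e) * f c - ∫ t in c..d, f t := by
    intro c d e hac hcd hdb
    obtain ⟨hfi, hf'i, -⟩ := subint c d hac hcd hdb
    have hki : IntervalIntegrable (fun t => (t - e) * f' t) MeasureTheory.volume c d :=
      hf'i.continuousOn_mul (by fun_prop)
    have hIcc : Set.Icc c d ⊆ Set.Icc a b := Set.Icc_subset_Icc hac hdb
    have hFTC := integral_eq_sub_of_hasDerivAt_of_le hcd
      (f := fun t => (t - e) * f t) (f' := fun t => f t + (t - e) * f' t)
      ((continuousOn_id.sub continuousOn_const).mul (hcont.mono hIcc))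
      (fun t ht => by
        have h1 : HasDerivAt (fun u : ℝ => u - e) 1 t := (hasDerivAt_id t).sub_const e
        have h2 := h1.mul (hderiv t ⟨lt_of_le_of_lt hac ht.1, lt_of_lt_of_le ht.2 hdb⟩)
        simpa [Pi.mul_def] using h2)
      (hfi.add hki)
    rw [integral_add hfi hki] at hFTC
    linarith
  obtain ⟨hfi1, hf'i1, hgi1⟩ := subint a x le_rfl hax (by linarith)
  obtain ⟨hfi2, hf'i2, hgi2⟩ := subint x y (by linarith) hxy hyb
  obtain ⟨hfi3, hf'i3, hgi3⟩ := subint y b hay hyb le_rfl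
  -- the three kernel integrals against f'
  have hI1 := key a x a le_rfl hax (by linarith)
  have hI2 := key x y m (by linarith) hxy hyb
  have hI3 := key y b b hay hyb le_rfl
  -- splitting of ∫ f and ∫ g
  have hsplitf : (∫ t in a..x, f t) + (∫ t in x..y, f t) + (∫ t in y..b, f t)
      = ∫ t in a..b, f t := by
    rw [integral_add_adjacent_intervals hfi1 hfi2,
      integral_add_adjacent_intervals (hfi1.trans hfi2) hfi3]
  have hsplitg : (∫ t in a..x, g t) + (∫ t in x..y, g t) + (∫ t in y..b, g t)
      = ∫ t in a..b, g t := by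
    rw [integral_add_adjacent_intervals hgi1 hgi2,
      integral_add_adjacent_intervals (hgi1.trans hgi2) hgi3]
  -- kernel integrals against f' in terms of g : ∫ k f' = Γ ∫ k - ∫ k g
  have hconv : ∀ c d e : ℝ, c ≤ d →
      IntervalIntegrable f' MeasureTheory.volume c d →
      IntervalIntegrable g MeasureTheory.volume c d →
      (∫ t in c..d, (t - e) * f' t)
        = Γ * (((d - e)^2 - (c - e)^2) / 2) - ∫ t in c..d, (t - e) * g t := by
    intro c d e hcd hf'i hgi
    have hki : IntervalIntegrable (fun t => (t - e) * f' t) MeasureTheory.volume c d :=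
      hf'i.continuousOn_mul (by fun_prop)
    have hkgi : IntervalIntegrable (fun t => (t - e) * g t) MeasureTheory.volume c d :=
      hgi.continuousOn_mul (by fun_prop)
    have hid : (∫ t in c..d, (t - e)) = ((d - e)^2 - (c - e)^2) / 2 := by
      rw [intervalIntegral.integral_sub intervalIntegrable_id intervalIntegrable_const,
        integral_id, intervalIntegral.integral_const]
      rw [smul_eq_mul]; ring
    have : (∫ t in c..d, ((t - e) * Γ - (t - e) * g t)) =
        (∫ t in c..d, (t - e) * Γ) - ∫ t in c..d, (t - e) * g t :=
      intervalIntegral.integral_sub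
        ((intervalIntegrable_id.sub intervalIntegrable_const).mul_const Γ) hkgi
    have heq : (∫ t in c..d, (t - e) * f' t) =
        ∫ t in c..d, ((t - e) * Γ - (t - e) * g t) := by
      congr 1; funext t; simp only [hg]; ring
    rw [heq, this, intervalIntegral.integral_mul_const, hid]
    ring
  -- bound on kernel integrals against g
  have hbnd : ∀ c d e : ℝ, a ≤ c → c ≤ d → d ≤ b →
      (∀ t ∈ Set.Icc c d, |t - e| ≤ M) →
      IntervalIntegrable g MeasureTheory.volume c d →
      |∫ t in c..d, (t - e) * g t| ≤ M * ∫ t in c..d, g t := by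
    intro c d e hac hcd hdb hke hgi
    have hkgi : IntervalIntegrable (fun t => (t - e) * g t) MeasureTheory.volume c d :=
      hgi.continuousOn_mul (by fun_prop)
    have hIcc : Set.Icc c d ⊆ Set.Icc a b := Set.Icc_subset_Icc hac hdb
    rw [abs_le]
    constructor
    · have h := integral_mono_on hcd ((hgi.const_mul (-M)))
        hkgi (fun t ht => by
          have h1 := abs_le.1 (hke t ht)
          have h2 := hgnn t (hIcc ht)
          nlinarith)
      rw [intervalIntegral.integral_const_mul] at h
      linarith
    · have h := integral_mono_on hcd hkgi (hgi.const_mul M)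
        (fun t ht => by
          have h1 := abs_le.1 (hke t ht)
          have h2 := hgnn t (hIcc ht)
          nlinarith)
      rw [intervalIntegral.integral_const_mul] at h
      exact h
  have hB1 := hbnd a x a le_rfl hax (by linarith)
    (fun t ht => by rw [abs_of_nonneg (by linarith [ht.1])]; linarith [ht.2]) hgi1
  have hB2 := hbnd x y m (by linarith) hxy hyb
    (fun t ht => by
      obtain ⟨h1, h2⟩ := ht
      have hM2' : (a + b) / 2 - x ≤ M := by simpa only [hm] using hM2
      have h2' : t ≤ a + b - x := by simpa only [hy] using h2
      rw [abs_le]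
      constructor
      · simp only [hm]; linarith
      · simp only [hm]; linarith) hgi2
  have hB3 := hbnd y b b hay hyb le_rfl
    (fun t ht => by
      obtain ⟨h1, h2⟩ := ht
      have h1' : a + b - x ≤ t := by simpa only [hy] using h1
      rw [abs_of_nonpos (by linarith)]
      linarith) hgi3
  -- total integral of g
  have hgtot : (∫ t in a..b, g t) = (b - a) * (Γ - S) := by
    have hFTC := integral_eq_sub_of_hasDerivAt_of_le hab.le hcont hderiv hint
    have : (∫ t in a..b, g t) = (∫ t in a..b, (Γ:ℝ)) - ∫ t in a..b, f' t :=
      intervalIntegral.integral_sub intervalIntegrable_const hint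
    rw [this, hFTC, integral_const, smul_eq_mul]
    have hfb : f b - f a = S * (b - a) := by
      rw [hS]; field_simp
    rw [hfb]; ring
  have hgtotnn : 0 ≤ ∫ t in a..b, g t := by
    rw [← hsplitg]
    have n1 : 0 ≤ ∫ t in a..x, g t :=
      intervalIntegral.integral_nonneg hax
        (fun t ht => hgnn t (Set.Icc_subset_Icc le_rfl (by linarith) ht))
    have n2 : 0 ≤ ∫ t in x..y, g t :=
      intervalIntegral.integral_nonneg hxy
        (fun t ht => hgnn t (Set.Icc_subset_Icc (by linarith) hyb ht))
    have n3 : 0 ≤ ∫ t in y..b, g t :=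
      intervalIntegral.integral_nonneg hyb
        (fun t ht => hgnn t (Set.Icc_subset_Icc hay le_rfl ht))
    linarith
  -- rewrite the kernel integrals
  have hc1 := hconv a x a hax hf'i1 hgi1
  have hc2 := hconv x y m hxy hf'i2 hgi2
  have hc3 := hconv y b b hyb hf'i3 hgi3
  -- sum of the quadratic terms vanishes
  have hquad : ((x - a)^2 - (a - a)^2) / 2 + ((y - m)^2 - (x - m)^2) / 2
      + ((b - b)^2 - (y - b)^2) / 2 = 0 := by
    simp only [hy, hm]; ring
  -- main identity
  have hmain : (f x + f y) / 2 - (1 / (b - a)) * ∫ t in a..b, f t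
      = -((∫ t in a..x, (t - a) * g t) + (∫ t in x..y, (t - m) * g t)
          + (∫ t in y..b, (t - b) * g t)) / (b - a) := by
    have hsum : (∫ t in a..x, (t - a) * f' t) + (∫ t in x..y, (t - m) * f' t)
        + (∫ t in y..b, (t - b) * f' t)
        = (b - a) / 2 * (f x + f y) - ∫ t in a..b, f t := by
      rw [hI1, hI2, hI3, ← hsplitf]
      simp only [hy, hm]; ring
    have hsum2 : (∫ t in a..x, (t - a) * f' t) + (∫ t in x..y, (t - m) * f' t)
        + (∫ t in y..b, (t - b) * f' t)
        = -((∫ t in a..x, (t - a) * g t) + (∫ t in x..y, (t - m) * g t)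
            + (∫ t in y..b, (t - b) * g t)) := by
      rw [hc1, hc2, hc3]
      linear_combination Γ * hquad
    rw [← hsum2, hsum]
    field_simp
  rw [hmain, abs_div, abs_of_pos hba, div_le_iff₀ hba, abs_neg]
  have habs : |(∫ t in a..x, (t - a) * g t) + (∫ t in x..y, (t - m) * g t)
      + (∫ t in y..b, (t - b) * g t)|
      ≤ M * ∫ t in a..b, g t := by
    rw [← hsplitg]
    calc |(∫ t in a..x, (t - a) * g t) + (∫ t in x..y, (t - m) * g t)
        + (∫ t in y..b, (t - b) * g t)|
        ≤ |∫ t in a..x, (t - a) * g t| + |∫ t in x..y, (t - m) * g t|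
          + |∫ t in y..b, (t - b) * g t| := by
          exact (abs_add_le _ _).trans (by gcongr; exact abs_add_le _ _)
      _ ≤ M * (∫ t in a..x, g t) + M * (∫ t in x..y, g t) + M * (∫ t in y..b, g t) := by
          linarith
      _ = M * ((∫ t in a..x, g t) + (∫ t in x..y, g t) + (∫ t in y..b, g t)) := by ring
  calc |(∫ t in a..x, (t - a) * g t) + (∫ t in x..y, (t - m) * g t)
      + (∫ t in y..b, (t - b) * g t)|
      ≤ M * ∫ t in a..b, g t := habs
    _ = M * ((b - a) * (Γ - S)) := by rw [hgtot]
    _ = M * (Γ - S) * (b - a) := by ring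
end

section
/- Let a < b be real numbers and let f : [a,b] → ℝ be differentiable on (a,b) with f' integrable on [a,b], and suppose γ ≤ f'(t) ≤ Γ for all t ∈ [a,b]. Set S = (f(b) − f(a))/(b − a). Then |(f((3a+b)/4) + f((a+3b)/4))/2 − (1/(b−a)) ∫_a^b f(t) dt| ≤ ((b−a)/4)(S − γ) and |(f((3a+b)/4) + f((a+3b)/4))/2 − (1/(b−a)) ∫_a^b f(t) dt| ≤ ((b−a)/4)(Γ − S). -/
open MeasureTheory intervalIntegral Set

/-- Integration by parts for a linear kernel. -/
lemma parts_aux (f f' : ℝ → ℝ) (c d e : ℝ) (hcd : c ≤ d)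
    (hc : ContinuousOn f (Set.Icc c d))
    (hd : ∀ t ∈ Set.Ioo c d, HasDerivAt f (f' t) t)
    (hi : IntervalIntegrable f' volume c d) :
    ∫ t in c..d, (t - e) * f' t
      = (d - e) * f d - (c - e) * f c - ∫ t in c..d, f t := by
  have hfi : IntervalIntegrable f volume c d := hc.intervalIntegrable_of_Icc hcd
  have hgi : IntervalIntegrable (fun t => (t - e) * f' t) volume c d :=
    hi.continuousOn_mul (by fun_prop)
  have hF : ∀ t ∈ Set.Ioo c d,
      HasDerivAt (fun t => (t - e) * f t) (f t + (t - e) * f' t) t := by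
    intro t ht
    have h1 := ((hasDerivAt_id t).sub_const e).mul (hd t ht)
    have h2 : HasDerivAt (fun t => (t - e) * f t) (1 * f t + (t - e) * f' t) t := h1
    rw [one_mul] at h2; exact h2
  have hFc : ContinuousOn (fun t => (t - e) * f t) (Set.Icc c d) :=
    (continuous_id.sub continuous_const).continuousOn.mul hc
  have h := integral_eq_sub_of_hasDerivAt_of_le hcd hFc hF (hfi.add hgi)
  rw [integral_add hfi hgi] at h
  linarith

/-- Elementary integral of a linear function. -/
lemma lin_int (c d e : ℝ) :
    ∫ t in c..d, (t - e) = (d ^ 2 - c ^ 2) / 2 - e * (d - c) := by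
  rw [intervalIntegral.integral_sub intervalIntegrable_id (intervalIntegrable_const)]
  simp [integral_id, mul_comm]

lemma bnd_aux (g h : ℝ → ℝ) (c d M : ℝ) (hcd : c ≤ d)
    (hgi : IntervalIntegrable (fun t => g t * h t) volume c d)
    (hhi : IntervalIntegrable h volume c d)
    (hM : ∀ t ∈ Set.Icc c d, |g t| ≤ M) (hh : ∀ t ∈ Set.Icc c d, 0 ≤ h t) :
    |∫ t in c..d, g t * h t| ≤ M * ∫ t in c..d, h t := by
  calc |∫ t in c..d, g t * h t| ≤ ∫ t in c..d, |g t * h t| :=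
        abs_integral_le_integral_abs hcd
    _ ≤ ∫ t in c..d, M * h t := by
        apply integral_mono_on hcd hgi.abs (hhi.const_mul M)
        intro t ht
        rw [abs_mul, abs_of_nonneg (hh t ht)]
        exact mul_le_mul_of_nonneg_right (hM t ht) (hh t ht)
    _ = M * ∫ t in c..d, h t := integral_const_mul M h

lemma key_lemma (a b γ : ℝ) (hab : a < b) (f f' : ℝ → ℝ)
    (hcont : ContinuousOn f (Set.Icc a b))
    (hderiv : ∀ t ∈ Set.Ioo a b, HasDerivAt f (f' t) t)
    (hint : IntervalIntegrable f' volume a b)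
    (hb : ∀ t ∈ Set.Icc a b, γ ≤ f' t) :
    |(f ((3 * a + b) / 4) + f ((a + 3 * b) / 4)) / 2 - (1 / (b - a)) * ∫ t in a..b, f t|
      ≤ ((b - a) / 4) * ((f b - f a) / (b - a) - γ) := by
  set x₁ := (3 * a + b) / 4 with hx₁
  set x₂ := (a + 3 * b) / 4 with hx₂
  set m := (a + b) / 2 with hm
  have hax₁ : a ≤ x₁ := by rw [hx₁]; linarith
  have hx₁x₂ : x₁ ≤ x₂ := by rw [hx₁, hx₂]; linarith
  have hx₂b : x₂ ≤ b := by rw [hx₂]; linarith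
  have hpos : (0:ℝ) < b - a := by linarith
  -- subinterval hypotheses
  have sub1 : Set.Icc a x₁ ⊆ Set.Icc a b := Set.Icc_subset_Icc le_rfl (by linarith)
  have sub2 : Set.Icc x₁ x₂ ⊆ Set.Icc a b := Set.Icc_subset_Icc (by linarith) (by linarith)
  have sub3 : Set.Icc x₂ b ⊆ Set.Icc a b := Set.Icc_subset_Icc (by linarith) le_rfl
  have osub1 : Set.Ioo a x₁ ⊆ Set.Ioo a b := Set.Ioo_subset_Ioo le_rfl (by linarith)
  have osub2 : Set.Ioo x₁ x₂ ⊆ Set.Ioo a b := Set.Ioo_subset_Ioo (by linarith) (by linarith)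
  have osub3 : Set.Ioo x₂ b ⊆ Set.Ioo a b := Set.Ioo_subset_Ioo (by linarith) le_rfl
  have hint1 : IntervalIntegrable f' volume a x₁ :=
    hint.mono_set (by rw [Set.uIcc_of_le hax₁, Set.uIcc_of_le hab.le]; exact sub1)
  have hint2 : IntervalIntegrable f' volume x₁ x₂ :=
    hint.mono_set (by rw [Set.uIcc_of_le hx₁x₂, Set.uIcc_of_le hab.le]; exact sub2)
  have hint3 : IntervalIntegrable f' volume x₂ b :=
    hint.mono_set (by rw [Set.uIcc_of_le hx₂b, Set.uIcc_of_le hab.le]; exact sub3)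
  -- FTC on [a,b]
  have ftc : ∫ t in a..b, f' t = f b - f a :=
    integral_eq_sub_of_hasDerivAt_of_le hab.le hcont hderiv hint
  -- integration by parts on three pieces
  have P1 := parts_aux f f' a x₁ a hax₁ (hcont.mono sub1)
    (fun t ht => hderiv t (osub1 ht)) hint1
  have P2 := parts_aux f f' x₁ x₂ m hx₁x₂ (hcont.mono sub2)
    (fun t ht => hderiv t (osub2 ht)) hint2
  have P3 := parts_aux f f' x₂ b b hx₂b (hcont.mono sub3)
    (fun t ht => hderiv t (osub3 ht)) hint3
  -- splitting integrals of f
  have hfi : ∀ c d : ℝ, c ≤ d → Set.Icc c d ⊆ Set.Icc a b →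
      IntervalIntegrable f volume c d := fun c d hcd hsub =>
    (hcont.mono hsub).intervalIntegrable_of_Icc hcd
  have split : (∫ t in a..x₁, f t) + (∫ t in x₁..x₂, f t) + (∫ t in x₂..b, f t)
      = ∫ t in a..b, f t := by
    rw [integral_add_adjacent_intervals (hfi a x₁ hax₁ sub1) (hfi x₁ x₂ hx₁x₂ sub2),
      integral_add_adjacent_intervals (hfi a x₂ (le_trans hax₁ hx₁x₂)
        (Set.Icc_subset_Icc le_rfl (by linarith))) (hfi x₂ b hx₂b sub3)]
  have splith : (∫ t in a..x₁, f' t) + (∫ t in x₁..x₂, f' t) + (∫ t in x₂..b, f' t)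
      = ∫ t in a..b, f' t := by
    rw [integral_add_adjacent_intervals hint1 hint2,
      integral_add_adjacent_intervals (hint1.trans hint2) hint3]
  -- decompose each kernel integral: (t-e)*f' = (t-e)*(f'-γ) + γ*(t-e)
  have dec : ∀ c d e : ℝ, IntervalIntegrable f' volume c d →
      (∫ t in c..d, (t - e) * f' t)
        = (∫ t in c..d, (t - e) * (f' t - γ)) + γ * ((d^2 - c^2)/2 - e*(d - c)) := by
    intro c d e hi
    have h1 : IntervalIntegrable (fun t => (t - e) * (f' t - γ)) volume c d :=
      (hi.sub intervalIntegrable_const).continuousOn_mul (by fun_prop)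
    have h2 : IntervalIntegrable (fun t => γ * (t - e)) volume c d := by
      apply ContinuousOn.intervalIntegrable; fun_prop
    have : ∀ t, (t - e) * f' t = (t - e) * (f' t - γ) + γ * (t - e) := by intro t; ring
    rw [show (fun t => (t - e) * f' t) = fun t => (t - e) * (f' t - γ) + γ * (t - e) from
      funext this] at *
    rw [integral_add h1 h2, intervalIntegral.integral_const_mul, lin_int]
  -- integrability of h := f' - γ on pieces, and J bounds
  have hhint : ∀ c d : ℝ, IntervalIntegrable f' volume c d →
      IntervalIntegrable (fun t => f' t - γ) volume c d := fun c d hi =>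
    hi.sub intervalIntegrable_const
  have hJint : ∀ c d e : ℝ, IntervalIntegrable f' volume c d →
      IntervalIntegrable (fun t => (t - e) * (f' t - γ)) volume c d := fun c d e hi =>
    (hi.sub intervalIntegrable_const).continuousOn_mul (by fun_prop)
  have B1 : |∫ t in a..x₁, (t - a) * (f' t - γ)|
      ≤ ((b - a)/4) * ∫ t in a..x₁, (f' t - γ) := by
    apply bnd_aux _ _ _ _ _ hax₁ (hJint a x₁ a hint1) (hhint a x₁ hint1)
    · intro t ht
      rw [abs_of_nonneg (by linarith [ht.1])]
      have := ht.2; rw [hx₁] at this; linarith [ht.1]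
    · intro t ht; linarith [hb t (sub1 ht)]
  have B2 : |∫ t in x₁..x₂, (t - m) * (f' t - γ)|
      ≤ ((b - a)/4) * ∫ t in x₁..x₂, (f' t - γ) := by
    apply bnd_aux _ _ _ _ _ hx₁x₂ (hJint x₁ x₂ m hint2) (hhint x₁ x₂ hint2)
    · intro t ht
      rw [abs_le]
      have h1 := ht.1; have h2 := ht.2
      rw [hx₁] at h1; rw [hx₂] at h2; rw [hm]
      constructor <;> linarith
    · intro t ht; linarith [hb t (sub2 ht)]
  have B3 : |∫ t in x₂..b, (t - b) * (f' t - γ)|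
      ≤ ((b - a)/4) * ∫ t in x₂..b, (f' t - γ) := by
    apply bnd_aux _ _ _ _ _ hx₂b (hJint x₂ b b hint3) (hhint x₂ b hint3)
    · intro t ht
      rw [abs_of_nonpos (by linarith [ht.2]), neg_sub]
      have := ht.1; rw [hx₂] at this; linarith
    · intro t ht; linarith [hb t (sub3 ht)]
  -- sum of integrals of h
  have hsum : (∫ t in a..x₁, (f' t - γ)) + (∫ t in x₁..x₂, (f' t - γ))
      + (∫ t in x₂..b, (f' t - γ)) = (f b - f a) - γ * (b - a) := by
    have e1 : ∀ c d : ℝ, IntervalIntegrable f' volume c d →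
        (∫ t in c..d, (f' t - γ)) = (∫ t in c..d, f' t) - γ * (d - c) := by
      intro c d hi
      rw [intervalIntegral.integral_sub hi intervalIntegrable_const]
      simp [mul_comm]
    rw [e1 a x₁ hint1, e1 x₁ x₂ hint2, e1 x₂ b hint3]
    have : (∫ t in a..x₁, f' t) + (∫ t in x₁..x₂, f' t) + (∫ t in x₂..b, f' t)
        = f b - f a := by rw [splith, ftc]
    linarith
  -- master identity
  have master : (b - a) * ((f x₁ + f x₂) / 2) - (∫ t in a..b, f t)
      = (∫ t in a..x₁, (t - a) * (f' t - γ)) + (∫ t in x₁..x₂, (t - m) * (f' t - γ))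
        + (∫ t in x₂..b, (t - b) * (f' t - γ)) := by
    have d1 := dec a x₁ a hint1
    have d2 := dec x₁ x₂ m hint2
    have d3 := dec x₂ b b hint3
    rw [d1] at P1; rw [d2] at P2; rw [d3] at P3
    have hsplit := split
    simp only [hx₁, hx₂, hm] at P1 P2 P3 hsplit ⊢
    linear_combination (-P1) - P2 - P3 + hsplit
  -- final bound
  have big : |(b - a) * ((f x₁ + f x₂) / 2) - (∫ t in a..b, f t)|
      ≤ ((b - a)/4) * ((f b - f a) - γ * (b - a)) := by
    rw [master]
    have tri := abs_add_three (∫ t in a..x₁, (t - a) * (f' t - γ))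
      (∫ t in x₁..x₂, (t - m) * (f' t - γ)) (∫ t in x₂..b, (t - b) * (f' t - γ))
    have hfact : ((b - a)/4) * (∫ t in a..x₁, (f' t - γ))
        + ((b - a)/4) * (∫ t in x₁..x₂, (f' t - γ))
        + ((b - a)/4) * (∫ t in x₂..b, (f' t - γ))
        = ((b - a)/4) * ((f b - f a) - γ * (b - a)) := by
      linear_combination ((b - a)/4) * hsum
    linarith [B1, B2, B3]
  -- divide by (b - a)
  have key : (b - a) * |(f x₁ + f x₂) / 2 - (1 / (b - a)) * ∫ t in a..b, f t|
      ≤ (b - a) * (((b - a)/4) * ((f b - f a) / (b - a) - γ)) := by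
    have e : (b - a) * ((f x₁ + f x₂) / 2 - (1 / (b - a)) * ∫ t in a..b, f t)
        = (b - a) * ((f x₁ + f x₂) / 2) - (∫ t in a..b, f t) := by
      field_simp
    have e2 : (b - a) * (((b - a)/4) * ((f b - f a) / (b - a) - γ))
        = ((b - a)/4) * ((f b - f a) - γ * (b - a)) := by
      field_simp
    have e3 : (b - a) * |(f x₁ + f x₂) / 2 - (1 / (b - a)) * ∫ t in a..b, f t|
        = |(b - a) * ((f x₁ + f x₂) / 2 - (1 / (b - a)) * ∫ t in a..b, f t)| := by
      rw [abs_mul, abs_of_pos hpos]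
    rw [e2, e3, e]
    exact big
  exact le_of_mul_le_mul_left key hpos

/-- **Trapezoid type inequalities at `x = (3a+b)/4`** (Corollary of Theorem 2.1,
inequalities (2.13) and (2.14)). -/
theorem companion_ostrowski_L1_trapezoid_type
    (a b γ Γ : ℝ) (hab : a < b) (f f' : ℝ → ℝ)
    (hcont : ContinuousOn f (Set.Icc a b))
    (hderiv : ∀ t ∈ Set.Ioo a b, HasDerivAt f (f' t) t)
    (hint : IntervalIntegrable f' MeasureTheory.volume a b)
    (hbound : ∀ t ∈ Set.Icc a b, γ ≤ f' t ∧ f' t ≤ Γ)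
    (S : ℝ) (hS : S = (f b - f a) / (b - a)) :
    |(f ((3 * a + b) / 4) + f ((a + 3 * b) / 4)) / 2 - (1 / (b - a)) * ∫ t in a..b, f t|
        ≤ ((b - a) / 4) * (S - γ) ∧
    |(f ((3 * a + b) / 4) + f ((a + 3 * b) / 4)) / 2 - (1 / (b - a)) * ∫ t in a..b, f t|
        ≤ ((b - a) / 4) * (Γ - S) := by
  constructor
  · have := key_lemma a b γ hab f f' hcont hderiv hint (fun t ht => (hbound t ht).1)
    rwa [hS]
  · have h := key_lemma a b (-Γ) hab (fun t => -f t) (fun t => -f' t) hcont.neg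
      (fun t ht => (hderiv t ht).neg) hint.neg
      (fun t ht => by simpa using neg_le_neg (hbound t ht).2)
    simp only [intervalIntegral.integral_neg] at h
    have e1 : (-f ((3 * a + b) / 4) + -f ((a + 3 * b) / 4)) / 2
        - (1 / (b - a)) * -(∫ t in a..b, f t)
        = -((f ((3 * a + b) / 4) + f ((a + 3 * b) / 4)) / 2
          - (1 / (b - a)) * ∫ t in a..b, f t) := by ring
    rw [e1, abs_neg] at h
    have e2 : (-f b - -f a) / (b - a) - (-Γ) = Γ - S := by
      rw [hS]; ring
    rwa [e2] at h
end

section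
/- Let a < b be real numbers and let f : [a,b] → ℝ be differentiable on (a,b) with f' integrable on [a,b], and suppose γ ≤ f'(t) ≤ Γ for all t ∈ [a,b]. Set S = (f(b) − f(a))/(b − a). Then |(f(a) + f(b))/2 − (1/(b−a)) ∫_a^b f(t) dt| ≤ ((b−a)/2)(S − γ) and |(f(a) + f(b))/2 − (1/(b−a)) ∫_a^b f(t) dt| ≤ ((b−a)/2)(Γ − S). -/
open intervalIntegral MeasureTheory

lemma aux_kernel_bound (a b M : ℝ) (hab : a ≤ b) (p g : ℝ → ℝ)
    (hg : IntervalIntegrable g MeasureTheory.volume a b)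
    (hpg : IntervalIntegrable (fun t => p t * g t) MeasureTheory.volume a b)
    (hb : ∀ t ∈ Set.Icc a b, |p t| ≤ M ∧ 0 ≤ g t) :
    |∫ t in a..b, p t * g t| ≤ M * ∫ t in a..b, g t := by
  calc |∫ t in a..b, p t * g t| ≤ ∫ t in a..b, |p t * g t| :=
        intervalIntegral.abs_integral_le_integral_abs hab
    _ ≤ ∫ t in a..b, M * g t := by
        apply intervalIntegral.integral_mono_on hab hpg.abs (hg.const_mul M)
        intro t ht
        have h := hb t ht
        calc |p t * g t| = |p t| * g t := by rw [abs_mul, abs_of_nonneg h.2]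
          _ ≤ M * g t := mul_le_mul_of_nonneg_right h.1 h.2
    _ = M * ∫ t in a..b, g t := intervalIntegral.integral_const_mul M g

/-- **Trapezoid inequalities** (Corollary of Theorem 2.1, inequalities (2.15) and (2.16)). -/
theorem companion_ostrowski_L1_trapezoid
    (a b γ Γ : ℝ) (hab : a < b) (f f' : ℝ → ℝ)
    (hcont : ContinuousOn f (Set.Icc a b))
    (hderiv : ∀ t ∈ Set.Ioo a b, HasDerivAt f (f' t) t)
    (hint : IntervalIntegrable f' MeasureTheory.volume a b)
    (hbound : ∀ t ∈ Set.Icc a b, γ ≤ f' t ∧ f' t ≤ Γ)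
    (S : ℝ) (hS : S = (f b - f a) / (b - a)) :
    |(f a + f b) / 2 - (1 / (b - a)) * ∫ t in a..b, f t| ≤ ((b - a) / 2) * (S - γ) ∧
    |(f a + f b) / 2 - (1 / (b - a)) * ∫ t in a..b, f t| ≤ ((b - a) / 2) * (Γ - S) := by
  have hba : (0:ℝ) < b - a := by linarith
  set p : ℝ → ℝ := fun t => t - (a+b)/2 with hp
  have hpc : Continuous p := by fun_prop
  have hpcont : ContinuousOn p (Set.Icc a b) := hpc.continuousOn
  -- FTC for f
  have hftc : ∫ t in a..b, f' t = f b - f a :=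
    intervalIntegral.integral_eq_sub_of_hasDerivAt_of_le hab.le hcont
      (fun t ht => hderiv t ht) hint
  -- interval integrabilities
  have hfint : IntervalIntegrable f MeasureTheory.volume a b :=
    hcont.intervalIntegrable_of_Icc hab.le
  have hpint : IntervalIntegrable (fun t => p t * f' t) MeasureTheory.volume a b :=
    hint.continuousOn_mul hpc.continuousOn
  -- integration by parts: g = p * f
  have hgderiv : ∀ t ∈ Set.Ioo a b,
      HasDerivAt (fun t => p t * f t) (f t + p t * f' t) t := by
    intro t ht
    have h1 : HasDerivAt p 1 t := by
      simpa [hp] using (hasDerivAt_id t).sub_const ((a+b)/2)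
    have := h1.mul (hderiv t ht)
    rw [one_mul] at this; exact this
  have hgcont : ContinuousOn (fun t => p t * f t) (Set.Icc a b) := hpcont.mul hcont
  have hibp : ∫ t in a..b, (f t + p t * f' t) = p b * f b - p a * f a :=
    intervalIntegral.integral_eq_sub_of_hasDerivAt_of_le hab.le hgcont hgderiv
      (hfint.add hpint)
  have hsum : ∫ t in a..b, (f t + p t * f' t)
      = (∫ t in a..b, f t) + ∫ t in a..b, p t * f' t :=
    intervalIntegral.integral_add hfint hpint
  have key : ∫ t in a..b, p t * f' t
      = (b-a)/2 * (f a + f b) - ∫ t in a..b, f t := by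
    have hpb : p b = (b-a)/2 := by simp [hp]; ring
    have hpa : p a = -((b-a)/2) := by simp [hp]; ring
    rw [hsum, hpb, hpa] at hibp
    linarith
  -- ∫ p = 0
  have hpzero : ∫ t in a..b, p t = 0 := by
    simp [hp, intervalIntegral.integral_sub intervalIntegrable_id
      intervalIntegrable_const]
    ring
  have hE : (f a + f b) / 2 - (1 / (b - a)) * ∫ t in a..b, f t
      = (1/(b-a)) * ∫ t in a..b, p t * f' t := by
    rw [key]; field_simp
  have habs : ∀ x : ℝ, x ∈ Set.Icc a b → |p x| ≤ (b-a)/2 := by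
    intro x hx
    rw [abs_le]
    constructor <;> simp only [hp] <;> [linarith [hx.1]; linarith [hx.2]]
  constructor
  · -- γ side : use g = f' - γ
    have hg : IntervalIntegrable (fun t => f' t - γ) MeasureTheory.volume a b :=
      hint.sub intervalIntegrable_const
    have hpg : IntervalIntegrable (fun t => p t * (f' t - γ)) MeasureTheory.volume a b :=
      hg.continuousOn_mul hpc.continuousOn
    have hsplit : ∫ t in a..b, p t * (f' t - γ) = ∫ t in a..b, p t * f' t := by
      have : (fun t => p t * (f' t - γ)) = fun t => p t * f' t - γ * p t := by
        funext t; ring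
      rw [this, intervalIntegral.integral_sub hpint
        ((intervalIntegrable_id.sub intervalIntegrable_const).const_mul γ),
        intervalIntegral.integral_const_mul]
      simp only [hp] at hpzero ⊢
      rw [hpzero]; ring
    have hbnd := aux_kernel_bound a b ((b-a)/2) hab.le p (fun t => f' t - γ) hg hpg
      (fun t ht => ⟨habs t ht, sub_nonneg.mpr (hbound t ht).1⟩)
    rw [hsplit] at hbnd
    have hgint : ∫ t in a..b, (f' t - γ) = (f b - f a) - γ * (b - a) := by
      rw [intervalIntegral.integral_sub hint intervalIntegrable_const, hftc]
      simp; ring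
    rw [hgint] at hbnd
    rw [hE, abs_mul, abs_of_pos (by positivity : (0:ℝ) < 1/(b-a))]
    have hSba : f b - f a = S * (b - a) := by
      rw [hS]; field_simp
    calc 1/(b-a) * |∫ t in a..b, p t * f' t|
        ≤ 1/(b-a) * ((b-a)/2 * ((f b - f a) - γ * (b-a))) := by
          apply mul_le_mul_of_nonneg_left hbnd (by positivity)
      _ = (b-a)/2 * (S - γ) := by rw [hSba]; field_simp
  · -- Γ side : use g = Γ - f'
    have hg : IntervalIntegrable (fun t => Γ - f' t) MeasureTheory.volume a b :=
      intervalIntegrable_const.sub hint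
    have hpg : IntervalIntegrable (fun t => p t * (Γ - f' t)) MeasureTheory.volume a b :=
      hg.continuousOn_mul hpc.continuousOn
    have hsplit : ∫ t in a..b, p t * (Γ - f' t) = - ∫ t in a..b, p t * f' t := by
      have : (fun t => p t * (Γ - f' t)) = fun t => Γ * p t - p t * f' t := by
        funext t; ring
      rw [this, intervalIntegral.integral_sub
        ((intervalIntegrable_id.sub intervalIntegrable_const).const_mul Γ) hpint,
        intervalIntegral.integral_const_mul]
      simp only [hp] at hpzero ⊢
      rw [hpzero]; ring
    have hbnd := aux_kernel_bound a b ((b-a)/2) hab.le p (fun t => Γ - f' t) hg hpg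
      (fun t ht => ⟨habs t ht, sub_nonneg.mpr (hbound t ht).2⟩)
    rw [hsplit, abs_neg] at hbnd
    have hgint : ∫ t in a..b, (Γ - f' t) = Γ * (b - a) - (f b - f a) := by
      rw [intervalIntegral.integral_sub intervalIntegrable_const hint, hftc]
      simp; ring
    rw [hgint] at hbnd
    rw [hE, abs_mul, abs_of_pos (by positivity : (0:ℝ) < 1/(b-a))]
    have hSba : f b - f a = S * (b - a) := by
      rw [hS]; field_simp
    calc 1/(b-a) * |∫ t in a..b, p t * f' t|
        ≤ 1/(b-a) * ((b-a)/2 * (Γ * (b-a) - (f b - f a))) := by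
          apply mul_le_mul_of_nonneg_left hbnd (by positivity)
      _ = (b-a)/2 * (Γ - S) := by rw [hSba]; field_simp
end

section
/- Let a < b be real numbers and let f : [a,b] → ℝ be differentiable on (a,b) with f' integrable on [a,b], and suppose γ ≤ f'(t) ≤ Γ for all t ∈ [a,b]. Set S = (f(b) − f(a))/(b − a). Then |f((a+b)/2) − (1/(b−a)) ∫_a^b f(t) dt| ≤ ((b−a)/2)(S − γ) and |f((a+b)/2) − (1/(b−a)) ∫_a^b f(t) dt| ≤ ((b−a)/2)(Γ − S). -/
open MeasureTheory intervalIntegral Set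

/-- **Midpoint inequalities** (Corollary of Theorem 2.1, inequalities (2.17) and (2.18)). -/
theorem companion_ostrowski_L1_midpoint
    (a b γ Γ : ℝ) (hab : a < b) (f f' : ℝ → ℝ)
    (hcont : ContinuousOn f (Set.Icc a b))
    (hderiv : ∀ t ∈ Set.Ioo a b, HasDerivAt f (f' t) t)
    (hint : IntervalIntegrable f' MeasureTheory.volume a b)
    (hbound : ∀ t ∈ Set.Icc a b, γ ≤ f' t ∧ f' t ≤ Γ)
    (S : ℝ) (hS : S = (f b - f a) / (b - a)) :
    |f ((a + b) / 2) - (1 / (b - a)) * ∫ t in a..b, f t| ≤ ((b - a) / 2) * (S - γ) ∧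
    |f ((a + b) / 2) - (1 / (b - a)) * ∫ t in a..b, f t| ≤ ((b - a) / 2) * (Γ - S) := by
  set m : ℝ := (a + b) / 2 with hm
  have hba : (0:ℝ) < b - a := by linarith
  have ham : a ≤ m := by rw [hm]; linarith
  have hmb : m ≤ b := by rw [hm]; linarith
  have huab : uIcc a b = Icc a b := uIcc_of_le hab.le
  have hfi : IntervalIntegrable f volume a b := by
    apply ContinuousOn.intervalIntegrable; rwa [huab]
  have hsub : ∀ x y : ℝ, a ≤ x → x ≤ y → y ≤ b → uIcc x y ⊆ uIcc a b := by
    intro x y hx hxy hy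
    rw [huab, uIcc_of_le hxy]
    exact Icc_subset_Icc hx hy
  have hintc : ∀ (c x y : ℝ), a ≤ x → x ≤ y → y ≤ b → ∀ g : ℝ → ℝ,
      IntervalIntegrable g volume a b →
      IntervalIntegrable (fun t => (t - c) * g t) volume x y := by
    intro c x y hx hxy hy g hg
    exact (hg.mono_set (hsub x y hx hxy hy)).continuousOn_mul
      (continuousOn_id.sub continuousOn_const)
  -- key FTC identity
  have key : ∀ (c x y : ℝ), a ≤ x → x ≤ y → y ≤ b →
      ∫ t in x..y, (t - c) * f' t =
        ((y - c) * f y - ∫ s in a..y, f s) - ((x - c) * f x - ∫ s in a..x, f s) := by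
    intro c x y hx hxy hy
    apply integral_eq_sub_of_hasDerivAt_of_le hxy
    · apply ContinuousOn.sub
      · exact (continuousOn_id.sub continuousOn_const).mul
          (hcont.mono (Icc_subset_Icc hx hy))
      · have h := continuousOn_primitive_interval' hfi (left_mem_uIcc (a := a) (b := b))
        rw [huab] at h
        exact h.mono (Icc_subset_Icc hx hy)
    · intro t ht
      have ht' : t ∈ Ioo a b := ⟨lt_of_le_of_lt hx ht.1, lt_of_lt_of_le ht.2 hy⟩
      have h1 : HasDerivAt (fun u => (u - c) * f u) (1 * f t + (t - c) * f' t) t :=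
        ((hasDerivAt_id t).sub_const c).mul (hderiv t ht')
      have h2 : HasDerivAt (fun u => ∫ s in a..u, f s) (f t) t := by
        apply integral_hasDerivAt_right
        · exact hfi.mono_set (hsub a t le_rfl ht'.1.le ht'.2.le)
        · exact ContinuousOn.stronglyMeasurableAtFilter isOpen_Ioo
            (hcont.mono Ioo_subset_Icc_self) t ht'
        · exact hcont.continuousAt (Icc_mem_nhds ht'.1 ht'.2)
      have h3 := h1.sub h2
      exact h3.congr_deriv (by ring)
    · exact hintc c x y hx hxy hy f' hint
  have hftc : ∫ t in a..b, f' t = f b - f a :=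
    integral_eq_sub_of_hasDerivAt_of_le hab.le hcont hderiv hint
  -- linear integral
  have hlin : ∀ c x y : ℝ, ∫ t in x..y, (t - c) = (y^2 - x^2)/2 - c*(y - x) := by
    intro c x y
    rw [intervalIntegral.integral_sub intervalIntegrable_id intervalIntegrable_const,
      integral_id, intervalIntegral.integral_const]
    simp only [smul_eq_mul]; ring
  -- the main bound for an arbitrary constant c
  have B : ∀ c : ℝ, |(b - a) * f m - ∫ t in a..b, f t| ≤
      ((b - a) / 2) * ∫ t in a..b, |f' t - c| := by
    intro c
    have hgint : IntervalIntegrable (fun t => f' t - c) volume a b :=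
      hint.sub intervalIntegrable_const
    have hsplit : ∀ (c₀ x y : ℝ), a ≤ x → x ≤ y → y ≤ b →
        ∫ t in x..y, (t - c₀) * (f' t - c)
          = (∫ t in x..y, (t - c₀) * f' t) - c * ((y^2 - x^2)/2 - c₀*(y - x)) := by
      intro c₀ x y hx hxy hy
      have e : ∀ t : ℝ, (t - c₀) * (f' t - c) = (t - c₀) * f' t - c * (t - c₀) := by
        intro t; ring
      simp_rw [e]
      rw [intervalIntegral.integral_sub (hintc c₀ x y hx hxy hy f' hint)
        ((by fun_prop : Continuous fun t : ℝ => c * (t - c₀)).intervalIntegrable x y),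
        intervalIntegral.integral_const_mul, hlin]
    have h1 : ∫ t in a..m, (t - a) * (f' t - c)
        = ((m - a) * f m - ∫ s in a..m, f s) - ((a - a) * f a - ∫ s in a..a, f s)
          - c * ((m^2 - a^2)/2 - a*(m - a)) := by
      rw [hsplit a a m le_rfl ham hmb, key a a m le_rfl ham hmb]
    have h2 : ∫ t in m..b, (t - b) * (f' t - c)
        = ((b - b) * f b - ∫ s in a..b, f s) - ((m - b) * f m - ∫ s in a..m, f s)
          - c * ((b^2 - m^2)/2 - b*(b - m)) := by
      rw [hsplit b m b ham hmb le_rfl, key b m b ham hmb le_rfl]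
    have hrep : (b - a) * f m - ∫ t in a..b, f t
        = (∫ t in a..m, (t - a) * (f' t - c)) + ∫ t in m..b, (t - b) * (f' t - c) := by
      rw [h1, h2, intervalIntegral.integral_same, hm]
      ring
    -- pointwise bounds
    have habs1 : |∫ t in a..m, (t - a) * (f' t - c)|
        ≤ ∫ t in a..m, ((b - a)/2) * |f' t - c| := by
      refine le_trans (intervalIntegral.abs_integral_le_integral_abs ham) ?_
      apply intervalIntegral.integral_mono_on ham
        (hintc a a m le_rfl ham hmb _ hgint).abs
        ((hgint.abs.const_mul _).mono_set (hsub a m le_rfl ham hmb))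
      intro t ht
      rw [abs_mul]
      apply mul_le_mul_of_nonneg_right _ (abs_nonneg _)
      rw [abs_of_nonneg (by linarith [ht.1] : (0:ℝ) ≤ t - a)]
      have := ht.2; rw [hm] at this; linarith
    have habs2 : |∫ t in m..b, (t - b) * (f' t - c)|
        ≤ ∫ t in m..b, ((b - a)/2) * |f' t - c| := by
      refine le_trans (intervalIntegral.abs_integral_le_integral_abs hmb) ?_
      apply intervalIntegral.integral_mono_on hmb
        (hintc b m b ham hmb le_rfl _ hgint).abs
        ((hgint.abs.const_mul _).mono_set (hsub m b ham hmb le_rfl))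
      intro t ht
      rw [abs_mul]
      apply mul_le_mul_of_nonneg_right _ (abs_nonneg _)
      rw [abs_of_nonpos (by linarith [ht.2] : t - b ≤ (0:ℝ))]
      have := ht.1; rw [hm] at this; linarith
    have hsum : (∫ t in a..m, ((b - a)/2) * |f' t - c|)
        + ∫ t in m..b, ((b - a)/2) * |f' t - c|
        = ((b - a)/2) * ∫ t in a..b, |f' t - c| := by
      rw [intervalIntegral.integral_const_mul, intervalIntegral.integral_const_mul,
        ← mul_add,
        intervalIntegral.integral_add_adjacent_intervals
          (hgint.abs.mono_set (hsub a m le_rfl ham hmb))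
          (hgint.abs.mono_set (hsub m b ham hmb le_rfl))]
    calc |(b - a) * f m - ∫ t in a..b, f t|
        = |(∫ t in a..m, (t - a) * (f' t - c)) + ∫ t in m..b, (t - b) * (f' t - c)| := by
          rw [hrep]
      _ ≤ |∫ t in a..m, (t - a) * (f' t - c)| + |∫ t in m..b, (t - b) * (f' t - c)| :=
          abs_add_le _ _
      _ ≤ (∫ t in a..m, ((b - a)/2) * |f' t - c|)
            + ∫ t in m..b, ((b - a)/2) * |f' t - c| := add_le_add habs1 habs2
      _ = ((b - a)/2) * ∫ t in a..b, |f' t - c| := hsum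
  -- compute the two integrals of |f' - c|
  have intγ : ∫ t in a..b, |f' t - γ| = (f b - f a) - γ * (b - a) := by
    have e : EqOn (fun t => |f' t - γ|) (fun t => f' t - γ) (uIcc a b) := by
      rw [huab]; intro t ht
      exact abs_of_nonneg (by linarith [(hbound t ht).1])
    rw [intervalIntegral.integral_congr e,
      intervalIntegral.integral_sub hint intervalIntegrable_const, hftc, intervalIntegral.integral_const]
    simp only [smul_eq_mul]; ring
  have intΓ : ∫ t in a..b, |f' t - Γ| = Γ * (b - a) - (f b - f a) := by
    have e : EqOn (fun t => |f' t - Γ|) (fun t => Γ - f' t) (uIcc a b) := by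
      rw [huab]; intro t ht
      show |f' t - Γ| = Γ - f' t
      rw [abs_of_nonpos (by linarith [(hbound t ht).2])]; ring
    rw [intervalIntegral.integral_congr e,
      intervalIntegral.integral_sub intervalIntegrable_const hint, hftc, intervalIntegral.integral_const]
    simp only [smul_eq_mul]; ring
  -- assemble
  have hrw : f m - (1/(b - a)) * ∫ t in a..b, f t
      = ((b - a) * f m - ∫ t in a..b, f t) / (b - a) := by
    field_simp
  constructor
  · rw [hrw, abs_div, abs_of_pos hba, div_le_iff₀ hba]
    have hB := B γ
    rw [intγ] at hB
    have hSe : (S - γ) * (b - a) = (f b - f a) - γ * (b - a) := by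
      rw [hS]; field_simp
    nlinarith [hB]
  · rw [hrw, abs_div, abs_of_pos hba, div_le_iff₀ hba]
    have hB := B Γ
    rw [intΓ] at hB
    have hSe : (Γ - S) * (b - a) = Γ * (b - a) - (f b - f a) := by
      rw [hS]; field_simp
    nlinarith [hB]
end

section
/- Let a < b be real numbers and let f : [a,b] → ℝ be differentiable on (a,b) with f' integrable on [a,b], suppose γ ≤ f'(t) ≤ Γ for all t ∈ [a,b], and additionally assume f is symmetric about the line x = (a+b)/2, i.e., f(a+b−x) = f(x) for all x ∈ [a,b]. Set S = (f(b) − f(a))/(b − a). Then for all x ∈ [a, (a+b)/2], |f(x) − (1/(b−a)) ∫_a^b f(t) dt| ≤ [(b−a)/4 + |x − (3a+b)/4|](S − γ) and |f(x) − (1/(b−a)) ∫_a^b f(t) dt| ≤ [(b−a)/4 + |x − (3a+b)/4|](Γ − S). -/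
open MeasureTheory intervalIntegral Set

lemma ftc_piece (a b : ℝ) (f f' : ℝ → ℝ)
    (hcont : ContinuousOn f (Set.Icc a b))
    (hderiv : ∀ t ∈ Set.Ioo a b, HasDerivAt f (f' t) t)
    (hint : IntervalIntegrable f' MeasureTheory.volume a b)
    (c d e : ℝ) (hac : a ≤ c) (hcd : c ≤ d) (hdb : d ≤ b) :
    ∫ t in c..d, (t - e) * f' t
      = (d - e) * f d - (c - e) * f c - ∫ t in c..d, f t := by
  have hsub : Set.Icc c d ⊆ Set.Icc a b := Set.Icc_subset_Icc hac hdb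
  have hsubI : Set.Ioo c d ⊆ Set.Ioo a b := Set.Ioo_subset_Ioo hac hdb
  have huicc : Set.uIcc c d ⊆ Set.uIcc a b := by
    rw [Set.uIcc_of_le hcd, Set.uIcc_of_le (hac.trans (hcd.trans hdb))]
    exact hsub
  have hfint : IntervalIntegrable f MeasureTheory.volume c d :=
    (hcont.mono hsub).intervalIntegrable_of_Icc hcd
  have hf'int : IntervalIntegrable f' MeasureTheory.volume c d := hint.mono_set huicc
  have hker : IntervalIntegrable (fun t => (t - e) * f' t) MeasureTheory.volume c d :=
    hf'int.continuousOn_mul ((continuousOn_id.sub continuousOn_const))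
  have key : ∫ t in c..d, (f t + (t - e) * f' t)
      = (d - e) * f d - (c - e) * f c := by
    have := intervalIntegral.integral_eq_sub_of_hasDerivAt_of_le hcd
      (f := fun t => (t - e) * f t) (f' := fun t => f t + (t - e) * f' t)
      (((continuousOn_id.sub continuousOn_const)).mul (hcont.mono hsub))
      (fun t ht => by
        have h1 : HasDerivAt (fun t : ℝ => t - e) 1 t := (hasDerivAt_id t).sub_const e
        have := h1.mul (hderiv t (hsubI ht))
        rw [one_mul] at this; exact this)
      (hfint.add hker)
    exact this
  rw [intervalIntegral.integral_add hfint hker] at key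
  linarith

lemma piece_bound_s5 (c d e Mv : ℝ) (h : ℝ → ℝ) (hcd : c ≤ d)
    (hh : IntervalIntegrable h MeasureTheory.volume c d)
    (hpos : ∀ t ∈ Set.Icc c d, 0 ≤ h t)
    (hker : ∀ t ∈ Set.Icc c d, |t - e| ≤ Mv) :
    |∫ t in c..d, (t - e) * h t| ≤ Mv * ∫ t in c..d, h t := by
  have hki : IntervalIntegrable (fun t => (t - e) * h t) MeasureTheory.volume c d :=
    hh.continuousOn_mul (continuousOn_id.sub continuousOn_const)
  calc |∫ t in c..d, (t - e) * h t| ≤ ∫ t in c..d, |(t - e) * h t| :=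
        intervalIntegral.abs_integral_le_integral_abs hcd
    _ ≤ ∫ t in c..d, Mv * h t := by
        apply intervalIntegral.integral_mono_on hcd hki.abs (hh.const_mul Mv)
        intro t ht
        rw [abs_mul, abs_of_nonneg (hpos t ht)]
        exact mul_le_mul_of_nonneg_right (hker t ht) (hpos t ht)
    _ = Mv * ∫ t in c..d, h t := intervalIntegral.integral_const_mul Mv h

lemma ostrowski_aux (a b γ : ℝ) (hab : a < b) (f f' : ℝ → ℝ)
    (hcont : ContinuousOn f (Set.Icc a b))
    (hderiv : ∀ t ∈ Set.Ioo a b, HasDerivAt f (f' t) t)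
    (hint : IntervalIntegrable f' MeasureTheory.volume a b)
    (hlow : ∀ t ∈ Set.Icc a b, γ ≤ f' t)
    (hsym : ∀ x ∈ Set.Icc a b, f (a + b - x) = f x) :
    ∀ x ∈ Set.Icc a ((a + b) / 2),
      |f x - (1 / (b - a)) * ∫ t in a..b, f t|
          ≤ ((b - a) / 4 + |x - (3 * a + b) / 4|) * ((f b - f a) / (b - a) - γ) := by
  rintro x ⟨hax, hxm⟩
  set m : ℝ := (a + b) / 2 with hm
  set y : ℝ := a + b - x with hy
  set M : ℝ := (b - a) / 4 + |x - (3 * a + b) / 4| with hM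
  have hmy : m ≤ y := by simp [hy, hm]; linarith
  have hyb : y ≤ b := by simp [hy]; linarith
  have hxy : x ≤ y := by simp [hy]; linarith
  have hxb : x ≤ b := by linarith
  have hM1 : x - a ≤ M := by
    rcases abs_cases (x - (3 * a + b) / 4) with ⟨h, _⟩ | ⟨h, _⟩ <;> rw [hM, h] <;> linarith
  have hM2 : m - x ≤ M := by
    rcases abs_cases (x - (3 * a + b) / 4) with ⟨h, _⟩ | ⟨h, _⟩ <;> rw [hM, h, hm] <;> linarith
  have hM0 : 0 ≤ M := le_trans (by linarith) hM1
  -- FTC pieces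
  have I1 := ftc_piece a b f f' hcont hderiv hint a x a le_rfl hax hxb
  have I2 := ftc_piece a b f f' hcont hderiv hint x y m hax hxy hyb
  have I3 := ftc_piece a b f f' hcont hderiv hint y b b (le_trans hax hxy) hyb le_rfl
  -- f integrable pieces
  have hfi : ∀ c d : ℝ, a ≤ c → c ≤ d → d ≤ b → IntervalIntegrable f MeasureTheory.volume c d := by
    intro c d hac hcd hdb
    exact (hcont.mono (Set.Icc_subset_Icc hac hdb)).intervalIntegrable_of_Icc hcd
  have hadd : (∫ t in a..x, f t) + (∫ t in x..y, f t) + (∫ t in y..b, f t)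
      = ∫ t in a..b, f t := by
    rw [intervalIntegral.integral_add_adjacent_intervals (hfi a x le_rfl hax hxb)
      (hfi x y hax hxy hyb)]
    exact intervalIntegral.integral_add_adjacent_intervals (hfi a y le_rfl (hax.trans hxy) hyb)
      (hfi y b (hax.trans hxy) hyb le_rfl)
  have hfyx : f y = f x := hsym x ⟨hax, hxb⟩
  -- identity: sum of kernel integrals equals (b-a) f x - ∫ f
  have hiden : (∫ t in a..x, (t - a) * f' t) + (∫ t in x..y, (t - m) * f' t)
      + (∫ t in y..b, (t - b) * f' t) = (b - a) * f x - ∫ t in a..b, f t := by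
    rw [I1, I2, I3, hfyx, ← hadd, hy, hm]; ring
  -- subtract γ: work with h t = f' t - γ
  have hba : (0:ℝ) < b - a := by linarith
  set h : ℝ → ℝ := fun t => f' t - γ with hhdef
  have hhab : IntervalIntegrable h MeasureTheory.volume a b :=
    hint.sub intervalIntegrable_const
  have hhsub : ∀ c d : ℝ, a ≤ c → c ≤ d → d ≤ b →
      IntervalIntegrable h MeasureTheory.volume c d := by
    intro c d hac hcd hdb
    apply hhab.mono_set
    rw [Set.uIcc_of_le hcd, Set.uIcc_of_le hab.le]
    exact Set.Icc_subset_Icc hac hdb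
  have hlinaux : ∀ c d e : ℝ, c ≤ d →
      IntervalIntegrable h MeasureTheory.volume c d →
      ∫ t in c..d, (t - e) * f' t
        = (∫ t in c..d, (t - e) * h t) + ((d^2 - c^2)/2 - e*(d - c)) * γ := by
    intro c d e hcd hh
    have hki : IntervalIntegrable (fun t => (t - e) * h t) MeasureTheory.volume c d :=
      hh.continuousOn_mul (continuousOn_id.sub continuousOn_const)
    have hkγ : IntervalIntegrable (fun t : ℝ => (t - e) * γ) MeasureTheory.volume c d := by
      apply ContinuousOn.intervalIntegrable
      exact Continuous.continuousOn (by fun_prop)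
    have hcong : ∫ t in c..d, (t - e) * f' t
        = ∫ t in c..d, ((t - e) * h t + (t - e) * γ) := by
      apply intervalIntegral.integral_congr
      intro t _
      simp only [hhdef]
      ring
    have h1 : ∫ t in c..d, (t - e) * f' t
        = (∫ t in c..d, (t - e) * h t) + ∫ t in c..d, (t - e) * γ := by
      rw [hcong, intervalIntegral.integral_add hki hkγ]
    have h2 : ∫ t in c..d, (t - e) * γ = ((d^2 - c^2)/2 - e*(d - c)) * γ := by
      rw [intervalIntegral.integral_mul_const]
      congr 1
      rw [intervalIntegral.integral_sub intervalIntegrable_id intervalIntegrable_const]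
      simp [integral_id]
      ring
    rw [h1, h2]
  have hay : a ≤ y := hax.trans hxy
  have e1 := hlinaux a x a hax (hhsub a x le_rfl hax hxb)
  have e2 := hlinaux x y m hxy (hhsub x y hax hxy hyb)
  have e3 := hlinaux y b b hyb (hhsub y b hay hyb le_rfl)
  have hγzero : ((x^2 - a^2)/2 - a*(x - a)) + ((y^2 - x^2)/2 - m*(y - x))
      + ((b^2 - y^2)/2 - b*(b - y)) = 0 := by rw [hy, hm]; ring
  have hJsum : (∫ t in a..x, (t - a) * h t) + (∫ t in x..y, (t - m) * h t)
      + (∫ t in y..b, (t - b) * h t) = (b - a) * f x - ∫ t in a..b, f t := by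
    rw [e1, e2, e3] at hiden
    linear_combination hiden - γ * hγzero
  -- bounds
  have b1 : |∫ t in a..x, (t - a) * h t| ≤ M * ∫ t in a..x, h t := by
    apply piece_bound_s5 _ _ _ _ _ hax (hhsub a x le_rfl hax hxb)
    · intro t ht; exact sub_nonneg.2 (hlow t ⟨ht.1, ht.2.trans hxb⟩)
    · intro t ht
      rw [abs_of_nonneg (by linarith [ht.1])]
      linarith [ht.2, hM1]
  have b2 : |∫ t in x..y, (t - m) * h t| ≤ M * ∫ t in x..y, h t := by
    apply piece_bound_s5 _ _ _ _ _ hxy (hhsub x y hax hxy hyb)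
    · intro t ht; exact sub_nonneg.2 (hlow t ⟨hax.trans ht.1, ht.2.trans hyb⟩)
    · intro t ht
      rw [abs_le]
      constructor <;> [skip; skip] <;>
        linarith [ht.1, ht.2, hM2, hm, hy]
  have b3 : |∫ t in y..b, (t - b) * h t| ≤ M * ∫ t in y..b, h t := by
    apply piece_bound_s5 _ _ _ _ _ hyb (hhsub y b hay hyb le_rfl)
    · intro t ht; exact sub_nonneg.2 (hlow t ⟨hay.trans ht.1, ht.2⟩)
    · intro t ht
      rw [abs_of_nonpos (by linarith [ht.2])]
      linarith [ht.1, hy, hM1]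
  have haddh : (∫ t in a..x, h t) + (∫ t in x..y, h t) + (∫ t in y..b, h t)
      = ∫ t in a..b, h t := by
    rw [intervalIntegral.integral_add_adjacent_intervals (hhsub a x le_rfl hax hxb)
      (hhsub x y hax hxy hyb)]
    exact intervalIntegral.integral_add_adjacent_intervals (hhsub a y le_rfl hay hyb)
      (hhsub y b hay hyb le_rfl)
  have hftc : ∫ t in a..b, f' t = f b - f a :=
    intervalIntegral.integral_eq_sub_of_hasDerivAt_of_le hab.le hcont hderiv hint
  have hinth : ∫ t in a..b, h t = (f b - f a) - γ * (b - a) := by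
    rw [hhdef]
    rw [intervalIntegral.integral_sub hint intervalIntegrable_const]
    rw [hftc]
    simp
    ring
  have htot : |(b - a) * f x - ∫ t in a..b, f t|
      ≤ M * ((f b - f a) - γ * (b - a)) := by
    rw [← hJsum, ← hinth, ← haddh]
    calc |(∫ t in a..x, (t - a) * h t) + (∫ t in x..y, (t - m) * h t)
        + (∫ t in y..b, (t - b) * h t)|
        ≤ |∫ t in a..x, (t - a) * h t| + |∫ t in x..y, (t - m) * h t|
          + |∫ t in y..b, (t - b) * h t| := by
          exact (abs_add_le _ _).trans (by gcongr; exact abs_add_le _ _)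
      _ ≤ M * ((∫ t in a..x, h t) + (∫ t in x..y, h t) + (∫ t in y..b, h t)) := by
          rw [mul_add, mul_add]; linarith
  -- conclude
  have hfin : f x - (1/(b - a)) * ∫ t in a..b, f t
      = ((b - a) * f x - ∫ t in a..b, f t) / (b - a) := by
    field_simp
  rw [hfin, abs_div, abs_of_pos hba, div_le_iff₀ hba]
  have hre : ((f b - f a) / (b - a) - γ) * (b - a) = (f b - f a) - γ * (b - a) := by
    field_simp
  calc |(b - a) * f x - ∫ t in a..b, f t| ≤ M * ((f b - f a) - γ * (b - a)) := htot
    _ = M * ((f b - f a) / (b - a) - γ) * (b - a) := by rw [mul_assoc, hre]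

/-- **Ostrowski type inequality for symmetric functions** (Corollary 2.4, inequalities
(2.19) and (2.20)): if additionally `f (a + b - x) = f x` on `[a,b]`, then for all
`x ∈ [a, (a+b)/2]`,
`|f x - (1/(b-a)) ∫_a^b f| ≤ ((b-a)/4 + |x - (3a+b)/4|) (S - γ)` and the analogous
inequality with `Γ - S`. -/
theorem companion_ostrowski_L1_symmetric
    (a b γ Γ : ℝ) (hab : a < b) (f f' : ℝ → ℝ)
    (hcont : ContinuousOn f (Set.Icc a b))
    (hderiv : ∀ t ∈ Set.Ioo a b, HasDerivAt f (f' t) t)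
    (hint : IntervalIntegrable f' MeasureTheory.volume a b)
    (hbound : ∀ t ∈ Set.Icc a b, γ ≤ f' t ∧ f' t ≤ Γ)
    (hsym : ∀ x ∈ Set.Icc a b, f (a + b - x) = f x)
    (S : ℝ) (hS : S = (f b - f a) / (b - a)) :
    ∀ x ∈ Set.Icc a ((a + b) / 2),
      |f x - (1 / (b - a)) * ∫ t in a..b, f t|
          ≤ ((b - a) / 4 + |x - (3 * a + b) / 4|) * (S - γ) ∧
      |f x - (1 / (b - a)) * ∫ t in a..b, f t|
          ≤ ((b - a) / 4 + |x - (3 * a + b) / 4|) * (Γ - S) := by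
  intro x hx
  constructor
  · have := ostrowski_aux a b γ hab f f' hcont hderiv hint
      (fun t ht => (hbound t ht).1) hsym x hx
    rw [hS]
    exact this
  · have key := ostrowski_aux a b (-Γ) hab (fun t => -f t) (fun t => -f' t)
      hcont.neg (fun t ht => (hderiv t ht).neg) hint.neg
      (fun t ht => neg_le_neg (hbound t ht).2)
      (fun z hz => by simp [hsym z hz]) x hx
    have hba : (0:ℝ) < b - a := by linarith
    rw [intervalIntegral.integral_neg] at key
    have h1 : |-f x - 1 / (b - a) * -∫ t in a..b, f t|
        = |f x - 1 / (b - a) * ∫ t in a..b, f t| := by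
      rw [← abs_neg]; ring_nf
    rw [h1] at key
    have h2 : (-f b - -f a) / (b - a) - -Γ = Γ - (f b - f a) / (b - a) := by ring
    rw [h2] at key
    rw [hS]
    exact key
end

section
/- Let a < b be real numbers and let f : [a,b] → ℝ be twice continuously differentiable on (a,b) with f'' ∈ L²[a,b]. Then for all x ∈ [a, (a+b)/2], |(f(x) + f(a+b−x))/2 − (1/(b−a)) ∫_a^b f(t) dt| ≤ ((b−a)^{1/2}/π) · [ (b−a)²/48 + (x − (3a+b)/4)² ]^{1/2} · ‖f''‖₂, where ‖f''‖₂ = (∫_a^b (f''(t))² dt)^{1/2}. -/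
open MeasureTheory intervalIntegral Set

lemma my_cs_interval (c d : ℝ) (hcd : c ≤ d) (P F : ℝ → ℝ)
    (hPF : IntervalIntegrable (fun t => P t * F t) volume c d)
    (hP2 : IntervalIntegrable (fun t => P t ^ 2) volume c d)
    (hF2 : IntervalIntegrable (fun t => F t ^ 2) volume c d) :
    (∫ t in c..d, P t * F t) ^ 2
      ≤ (∫ t in c..d, P t ^ 2) * (∫ t in c..d, F t ^ 2) := by
  set A := ∫ t in c..d, P t ^ 2 with hA
  set B := ∫ t in c..d, F t ^ 2 with hB
  set S := ∫ t in c..d, P t * F t with hS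
  have key : ∀ l : ℝ, 0 ≤ A * (l * l) + (-2 * S) * l + B := by
    intro l
    have h0 : 0 ≤ ∫ t in c..d, (l * P t - F t) ^ 2 :=
      intervalIntegral.integral_nonneg hcd (fun t _ => sq_nonneg _)
    have heq : ∫ t in c..d, (l * P t - F t) ^ 2
        = l ^ 2 * A - 2 * l * S + B := by
      have : (fun t => (l * P t - F t) ^ 2)
          = fun t => (l ^ 2 * P t ^ 2 - 2 * l * (P t * F t)) + F t ^ 2 := by
        funext t; ring
      rw [this, intervalIntegral.integral_add ((hP2.const_mul _).sub (hPF.const_mul _)) hF2,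
        intervalIntegral.integral_sub (hP2.const_mul _) (hPF.const_mul _),
        intervalIntegral.integral_const_mul, intervalIntegral.integral_const_mul]
    nlinarith [h0, heq]
  have hd := discrim_le_zero key
  rw [discrim] at hd
  nlinarith [hd]

lemma my_poly_integral (c d e k : ℝ) :
    ∫ t in c..d, ((t - e) ^ 2 / 2 + k) ^ 2
      = ((d - e) ^ 5 / 20 + k * (d - e) ^ 3 / 3 + k ^ 2 * (d - e))
        - ((c - e) ^ 5 / 20 + k * (c - e) ^ 3 / 3 + k ^ 2 * (c - e)) := by
  apply intervalIntegral.integral_eq_sub_of_hasDerivAt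
  · intro t _
    have h1 : HasDerivAt (fun t : ℝ => t - e) 1 t := (hasDerivAt_id t).sub_const e
    have h5 := ((h1.pow 5).div_const 20)
    have h3 := ((h1.pow 3).const_mul k).div_const 3
    have hl := h1.const_mul (k ^ 2)
    have := (h5.add h3).add hl
    refine this.congr_deriv ?_
    ring
  · apply Continuous.intervalIntegrable
    fun_prop

lemma my_piece (a b c d e k : ℝ) (f g f'' : ℝ → ℝ)
    (hac : a ≤ c) (hcd : c ≤ d) (hdb : d ≤ b)
    (hf : ContinuousOn f (Set.Icc a b)) (hg : ContinuousOn g (Set.Icc a b))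
    (hfg : ∀ t ∈ Set.Ioo a b, HasDerivAt f (g t) t)
    (hg' : ∀ t ∈ Set.Ioo a b, HasDerivAt g (f'' t) t)
    (hint : IntervalIntegrable f'' volume a b) :
    ∫ t in c..d, ((t - e) ^ 2 / 2 + k) * f'' t
      = ((((d - e) ^ 2 / 2 + k) * g d - (d - e) * f d)
          - (((c - e) ^ 2 / 2 + k) * g c - (c - e) * f c))
        + ∫ t in c..d, f t := by
  have hIcc : Set.Icc c d ⊆ Set.Icc a b := Set.Icc_subset_Icc hac hdb
  have hIoo : Set.Ioo c d ⊆ Set.Ioo a b := Set.Ioo_subset_Ioo hac hdb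
  have huIcc : Set.uIcc c d = Set.Icc c d := Set.uIcc_of_le hcd
  have hfi : IntervalIntegrable f volume c d := by
    apply ContinuousOn.intervalIntegrable; rw [huIcc]; exact hf.mono hIcc
  have hint' : IntervalIntegrable f'' volume c d := by
    apply hint.mono_set
    rw [huIcc, Set.uIcc_of_le (hac.trans (hcd.trans hdb))]; exact hIcc
  have hPf : IntervalIntegrable (fun t => ((t - e) ^ 2 / 2 + k) * f'' t) volume c d := by
    apply hint'.continuousOn_mul
    exact (Continuous.continuousOn (by fun_prop))
  have key : ∫ t in c..d, (((t - e) ^ 2 / 2 + k) * f'' t - f t)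
      = (((d - e) ^ 2 / 2 + k) * g d - (d - e) * f d)
        - (((c - e) ^ 2 / 2 + k) * g c - (c - e) * f c) := by
    apply intervalIntegral.integral_eq_sub_of_hasDerivAt_of_le hcd
    · apply ContinuousOn.sub
      · exact (Continuous.continuousOn (by fun_prop)).mul (hg.mono hIcc)
      · exact (Continuous.continuousOn (by fun_prop)).mul (hf.mono hIcc)
    · intro t ht
      have htab := hIoo ht
      have h1 : HasDerivAt (fun t : ℝ => (t - e) ^ 2 / 2 + k) (t - e) t := by
        have h0 : HasDerivAt (fun t : ℝ => t - e) 1 t := (hasDerivAt_id t).sub_const e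
        have := ((h0.pow 2).div_const 2).add_const k
        refine this.congr_deriv ?_; ring
      have h2 : HasDerivAt (fun t : ℝ => t - e) 1 t := (hasDerivAt_id t).sub_const e
      have hA := h1.mul (hg' t htab)
      have hB := h2.mul (hfg t htab)
      have := hA.sub hB
      refine this.congr_deriv ?_
      ring
    · exact hPf.sub hfi
  rw [intervalIntegral.integral_sub hPf hfi] at key
  linarith

lemma my_poly_ineq (u w : ℝ) (hu : 0 ≤ u) (hw : 0 ≤ w) :
    u ^ 5 / 20 + 2 * (w ^ 5 / 20 + (u ^ 2 - w ^ 2) / 2 * w ^ 3 / 3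
        + ((u ^ 2 - w ^ 2) / 2) ^ 2 * w) + u ^ 5 / 20
      ≤ (2 * (u + w)) ^ 3 * ((2 * (u + w)) ^ 2 / 48 + ((u - w) / 2) ^ 2) / 10 := by
  have h1 : 0 ≤ u ^ 5 := by positivity
  have h2 : 0 ≤ u ^ 4 * w := by positivity
  have h3 : 0 ≤ u ^ 3 * w ^ 2 := by positivity
  have h4 : 0 ≤ u ^ 2 * w ^ 3 := by positivity
  have h5 : 0 ≤ u * w ^ 4 := by positivity
  nlinarith [h1, h2, h3, h4, h5]


lemma my_three_cs (A1 A2 A3 B1 B2 B3 : ℝ) (hA1n : 0 ≤ A1) (hA2n : 0 ≤ A2)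
    (hA3n : 0 ≤ A3) (hB1n : 0 ≤ B1) (hB2n : 0 ≤ B2) (hB3n : 0 ≤ B3) :
    Real.sqrt A1 * Real.sqrt B1 + Real.sqrt A2 * Real.sqrt B2
      + Real.sqrt A3 * Real.sqrt B3
      ≤ Real.sqrt (A1 + A2 + A3) * Real.sqrt (B1 + B2 + B3) := by
  set a1 := Real.sqrt A1; set a2 := Real.sqrt A2; set a3 := Real.sqrt A3
  set b1 := Real.sqrt B1; set b2 := Real.sqrt B2; set b3 := Real.sqrt B3
  have ha1 : 0 ≤ a1 := Real.sqrt_nonneg _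
  have ha2 : 0 ≤ a2 := Real.sqrt_nonneg _
  have ha3 : 0 ≤ a3 := Real.sqrt_nonneg _
  have hb1 : 0 ≤ b1 := Real.sqrt_nonneg _
  have hb2 : 0 ≤ b2 := Real.sqrt_nonneg _
  have hb3 : 0 ≤ b3 := Real.sqrt_nonneg _
  have eA1 : A1 = a1 ^ 2 := (Real.sq_sqrt hA1n).symm
  have eA2 : A2 = a2 ^ 2 := (Real.sq_sqrt hA2n).symm
  have eA3 : A3 = a3 ^ 2 := (Real.sq_sqrt hA3n).symm
  have eB1 : B1 = b1 ^ 2 := (Real.sq_sqrt hB1n).symm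
  have eB2 : B2 = b2 ^ 2 := (Real.sq_sqrt hB2n).symm
  have eB3 : B3 = b3 ^ 2 := (Real.sq_sqrt hB3n).symm
  have h2 : (a1 * b1 + a2 * b2 + a3 * b3) ^ 2
      ≤ (A1 + A2 + A3) * (B1 + B2 + B3) := by
    rw [eA1, eA2, eA3, eB1, eB2, eB3]
    nlinarith [sq_nonneg (a1 * b2 - a2 * b1), sq_nonneg (a1 * b3 - a3 * b1),
      sq_nonneg (a2 * b3 - a3 * b2), mul_nonneg ha1 hb1, mul_nonneg ha2 hb2,
      mul_nonneg ha3 hb3]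
  have hlhs : 0 ≤ a1 * b1 + a2 * b2 + a3 * b3 := by positivity
  calc a1 * b1 + a2 * b2 + a3 * b3
      = Real.sqrt ((a1 * b1 + a2 * b2 + a3 * b3) ^ 2) := (Real.sqrt_sq hlhs).symm
    _ ≤ Real.sqrt ((A1 + A2 + A3) * (B1 + B2 + B3)) := Real.sqrt_le_sqrt h2
    _ = Real.sqrt (A1 + A2 + A3) * Real.sqrt (B1 + B2 + B3) :=
        Real.sqrt_mul (by linarith) _

set_option maxHeartbeats 1000000 in
/-- **Companion of Ostrowski's inequality for `f'' ∈ L²[a,b]`** (Theorem 2.2, inequality (2.23)).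
If `f` is continuous on `[a,b]` and twice continuously differentiable on `(a,b)` with second
derivative `f''` square-integrable on `[a,b]`, then for all `x ∈ [a, (a+b)/2]`,
`|(f x + f (a+b-x))/2 - (1/(b-a)) ∫_a^b f|
  ≤ (√(b-a)/π) · √((b-a)²/48 + (x - (3a+b)/4)²) · ‖f''‖₂`. -/
theorem companion_ostrowski_second_deriv_L2
    (a b : ℝ) (hab : a < b) (f f' f'' : ℝ → ℝ)
    (hcont : ContinuousOn f (Set.Icc a b))
    (hderiv : ∀ t ∈ Set.Ioo a b, HasDerivAt f (f' t) t)
    (hderiv2 : ∀ t ∈ Set.Ioo a b, HasDerivAt f' (f'' t) t)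
    (hcont2 : ContinuousOn f'' (Set.Ioo a b))
    (hL2 : IntervalIntegrable (fun t => (f'' t) ^ 2) MeasureTheory.volume a b) :
    ∀ x ∈ Set.Icc a ((a + b) / 2),
      |(f x + f (a + b - x)) / 2 - (1 / (b - a)) * ∫ t in a..b, f t|
        ≤ Real.sqrt (b - a) / Real.pi *
            Real.sqrt ((b - a) ^ 2 / 48 + (x - (3 * a + b) / 4) ^ 2) *
            Real.sqrt (∫ t in a..b, (f'' t) ^ 2) := by
  intro x hx
  obtain ⟨hax, hxm⟩ := hx
  have hab' : a ≤ b := hab.le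
  have hL : (0:ℝ) < b - a := by linarith
  have ham : a < (a + b) / 2 := by linarith
  have hmb : (a + b) / 2 < b := by linarith
  have hxb : x ≤ b := by linarith
  have hay : a ≤ a + b - x := by linarith
  have hxy : x ≤ a + b - x := by linarith
  have hyb : a + b - x ≤ b := by linarith
  -- Step 1: integrability of f''
  have hsm : AEStronglyMeasurable f'' (volume.restrict (Set.Ioc a b)) := by
    have h1 : AEStronglyMeasurable f'' (volume.restrict (Set.Ioo a b)) :=
      hcont2.aestronglyMeasurable measurableSet_Ioo
    have h2 : volume.restrict (Set.Ioo a b) = volume.restrict (Set.Ioc a b) :=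
      Measure.restrict_congr_set Ioo_ae_eq_Ioc
    rwa [h2] at h1
  have hf''sq : IntegrableOn (fun t => f'' t ^ 2) (Set.Ioc a b) volume :=
    (intervalIntegrable_iff_integrableOn_Ioc_of_le hab').1 hL2
  have hf''int : IntervalIntegrable f'' volume a b := by
    rw [intervalIntegrable_iff_integrableOn_Ioc_of_le hab']
    have hbound : IntegrableOn (fun t => (1 + f'' t ^ 2) / 2) (Set.Ioc a b) volume := by
      apply Integrable.div_const
      exact (integrableOn_const measure_Ioc_lt_top.ne).add hf''sq
    apply hbound.mono' hsm
    filter_upwards with t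
    rw [Real.norm_eq_abs]
    nlinarith [sq_nonneg (|f'' t| - 1), sq_abs (f'' t)]
  -- Step 2: continuous extension g of f'
  set g : ℝ → ℝ := fun t => f' ((a + b) / 2) + ∫ s in ((a + b) / 2)..t, f'' s with hgdef
  have hgf' : ∀ t ∈ Set.Ioo a b, g t = f' t := by
    intro t ht
    have hsub : Set.uIcc ((a + b) / 2) t ⊆ Set.Ioo a b := by
      intro s hs
      obtain ⟨h1, h2⟩ := hs
      constructor
      · calc a < min ((a + b) / 2) t := lt_min ham ht.1
          _ ≤ s := h1
      · calc s ≤ max ((a + b) / 2) t := h2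
          _ < b := max_lt hmb ht.2
    have hftc : ∫ s in ((a + b) / 2)..t, f'' s = f' t - f' ((a + b) / 2) := by
      apply intervalIntegral.integral_eq_sub_of_hasDerivAt
      · exact fun s hs => hderiv2 s (hsub hs)
      · apply hf''int.mono_set
        rw [Set.uIcc_of_le hab']
        exact hsub.trans Set.Ioo_subset_Icc_self
    rw [hgdef]; simp only [hftc]; ring
  have hgcont : ContinuousOn g (Set.Icc a b) := by
    apply ContinuousOn.add continuousOn_const
    have := intervalIntegral.continuousOn_primitive_interval' hf''int
      (by rw [Set.uIcc_of_le hab']; exact ⟨ham.le, hmb.le⟩)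
    rwa [Set.uIcc_of_le hab'] at this
  have hfg : ∀ t ∈ Set.Ioo a b, HasDerivAt f (g t) t := by
    intro t ht; rw [hgf' t ht]; exact hderiv t ht
  have hg' : ∀ t ∈ Set.Ioo a b, HasDerivAt g (f'' t) t := by
    intro t ht
    apply (hderiv2 t ht).congr_of_eventuallyEq
    filter_upwards [isOpen_Ioo.mem_nhds ht] with s hs using hgf' s hs
  -- abbreviations
  set y := a + b - x with hydef
  set c2 : ℝ := ((x - a) ^ 2 - ((a + b) / 2 - x) ^ 2) / 2 with hc2def
  set T1 := ∫ t in a..x, ((t - a) ^ 2 / 2 + 0) * f'' t with hT1def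
  set T2 := ∫ t in x..y, ((t - (a + b) / 2) ^ 2 / 2 + c2) * f'' t with hT2def
  set T3 := ∫ t in y..b, ((t - b) ^ 2 / 2 + 0) * f'' t with hT3def
  set A1 := ∫ t in a..x, ((t - a) ^ 2 / 2 + 0) ^ 2 with hA1def
  set A2 := ∫ t in x..y, ((t - (a + b) / 2) ^ 2 / 2 + c2) ^ 2 with hA2def
  set A3 := ∫ t in y..b, ((t - b) ^ 2 / 2 + 0) ^ 2 with hA3def
  set B1 := ∫ t in a..x, f'' t ^ 2 with hB1def
  set B2 := ∫ t in x..y, f'' t ^ 2 with hB2def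
  set B3 := ∫ t in y..b, f'' t ^ 2 with hB3def
  set Bt := ∫ t in a..b, f'' t ^ 2 with hBtdef
  set D := (b - a) ^ 2 / 48 + (x - (3 * a + b) / 4) ^ 2 with hDdef
  -- subinterval inclusion helper
  have huIccab : Set.uIcc a b = Set.Icc a b := Set.uIcc_of_le hab'
  have hsubIcc : ∀ c d : ℝ, a ≤ c → c ≤ d → d ≤ b → Set.uIcc c d ⊆ Set.uIcc a b := by
    intro c d h1 h2 h3
    rw [huIccab, Set.uIcc_of_le h2]
    exact Set.Icc_subset_Icc h1 h3
  -- the piece identities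
  have hT1 : T1 = ((((x - a) ^ 2 / 2 + 0) * g x - (x - a) * f x)
      - (((a - a) ^ 2 / 2 + 0) * g a - (a - a) * f a)) + ∫ t in a..x, f t := by
    rw [hT1def]
    exact my_piece a b a x a 0 f g f'' le_rfl hax hxb hcont hgcont hfg hg' hf''int
  have hT2 : T2 = ((((y - (a + b) / 2) ^ 2 / 2 + c2) * g y - (y - (a + b) / 2) * f y)
      - (((x - (a + b) / 2) ^ 2 / 2 + c2) * g x - (x - (a + b) / 2) * f x))
      + ∫ t in x..y, f t := by
    rw [hT2def]
    exact my_piece a b x y ((a + b) / 2) c2 f g f'' hax hxy hyb hcont hgcont hfg hg' hf''int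
  have hT3 : T3 = ((((b - b) ^ 2 / 2 + 0) * g b - (b - b) * f b)
      - (((y - b) ^ 2 / 2 + 0) * g y - (y - b) * f y)) + ∫ t in y..b, f t := by
    rw [hT3def]
    exact my_piece a b y b b 0 f g f'' hay hyb le_rfl hcont hgcont hfg hg' hf''int
  -- Cauchy-Schwarz on each piece
  have hcs : ∀ c d e k : ℝ, a ≤ c → c ≤ d → d ≤ b →
      (∫ t in c..d, ((t - e) ^ 2 / 2 + k) * f'' t) ^ 2
        ≤ (∫ t in c..d, ((t - e) ^ 2 / 2 + k) ^ 2) * (∫ t in c..d, f'' t ^ 2) := by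
    intro c d e k h1 h2 h3
    apply my_cs_interval c d h2
    · exact (hf''int.mono_set (hsubIcc c d h1 h2 h3)).continuousOn_mul
        (Continuous.continuousOn (by fun_prop))
    · exact Continuous.intervalIntegrable (by fun_prop) _ _
    · exact hL2.mono_set (hsubIcc c d h1 h2 h3)
  have hcs1 : T1 ^ 2 ≤ A1 * B1 := by
    rw [hT1def, hA1def, hB1def]; exact hcs a x a 0 le_rfl hax hxb
  have hcs2 : T2 ^ 2 ≤ A2 * B2 := by
    rw [hT2def, hA2def, hB2def]; exact hcs x y ((a + b) / 2) c2 hax hxy hyb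
  have hcs3 : T3 ^ 2 ≤ A3 * B3 := by
    rw [hT3def, hA3def, hB3def]; exact hcs y b b 0 hay hyb le_rfl
  -- nonnegativity
  have hA1n : 0 ≤ A1 := by
    rw [hA1def]; exact intervalIntegral.integral_nonneg hax (fun t _ => sq_nonneg _)
  have hA2n : 0 ≤ A2 := by
    rw [hA2def]; exact intervalIntegral.integral_nonneg hxy (fun t _ => sq_nonneg _)
  have hA3n : 0 ≤ A3 := by
    rw [hA3def]; exact intervalIntegral.integral_nonneg hyb (fun t _ => sq_nonneg _)
  have hB1n : 0 ≤ B1 := by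
    rw [hB1def]; exact intervalIntegral.integral_nonneg hax (fun t _ => sq_nonneg _)
  have hB2n : 0 ≤ B2 := by
    rw [hB2def]; exact intervalIntegral.integral_nonneg hxy (fun t _ => sq_nonneg _)
  have hB3n : 0 ≤ B3 := by
    rw [hB3def]; exact intervalIntegral.integral_nonneg hyb (fun t _ => sq_nonneg _)
  -- sums
  have hfint : ∀ c d : ℝ, a ≤ c → c ≤ d → d ≤ b → IntervalIntegrable f volume c d := by
    intro c d h1 h2 h3
    apply ContinuousOn.intervalIntegrable
    rw [Set.uIcc_of_le h2]
    exact hcont.mono (Set.Icc_subset_Icc h1 h3)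
  have hadj : (∫ t in a..x, f t) + (∫ t in x..y, f t) + (∫ t in y..b, f t)
      = ∫ t in a..b, f t := by
    have e1 := intervalIntegral.integral_add_adjacent_intervals
      (hfint a x le_rfl hax hxb) (hfint x y hax hxy hyb)
    have e2 := intervalIntegral.integral_add_adjacent_intervals
      (hfint a y le_rfl hay hyb) (hfint y b hay hyb le_rfl)
    linarith
  have hsum : T1 + T2 + T3 = (∫ t in a..b, f t) - (b - a) / 2 * (f x + f y) := by
    rw [hT1, hT2, hT3, hc2def, hydef]
    linear_combination hadj
  have hBsum : B1 + B2 + B3 = Bt := by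
    rw [hB1def, hB2def, hB3def, hBtdef]
    have e1 := intervalIntegral.integral_add_adjacent_intervals
      (hL2.mono_set (hsubIcc a x le_rfl hax hxb)) (hL2.mono_set (hsubIcc x y hax hxy hyb))
    have e2 := intervalIntegral.integral_add_adjacent_intervals
      (hL2.mono_set (hsubIcc a y le_rfl hay hyb)) (hL2.mono_set (hsubIcc y b hay hyb le_rfl))
    linarith
  -- explicit values of the A's
  have hA1v : A1 = (x - a) ^ 5 / 20 := by
    rw [hA1def, my_poly_integral]; ring
  have hA2v : A2 = 2 * (((a + b) / 2 - x) ^ 5 / 20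
      + ((x - a) ^ 2 - ((a + b) / 2 - x) ^ 2) / 2 * ((a + b) / 2 - x) ^ 3 / 3
      + (((x - a) ^ 2 - ((a + b) / 2 - x) ^ 2) / 2) ^ 2 * ((a + b) / 2 - x)) := by
    rw [hA2def, my_poly_integral, hc2def, hydef]; ring
  have hA3v : A3 = (x - a) ^ 5 / 20 := by
    rw [hA3def, my_poly_integral, hydef]; ring
  have hDn : 0 ≤ D := by rw [hDdef]; positivity
  clear_value y c2 T1 T2 T3 A1 A2 A3 B1 B2 B3 Bt D
  have hAsum : A1 + A2 + A3 ≤ (b - a) ^ 3 * D / 10 := by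
    have hpoly := my_poly_ineq (x - a) ((a + b) / 2 - x) (by linarith) (by linarith)
    calc A1 + A2 + A3
        = (x - a) ^ 5 / 20 + 2 * (((a + b) / 2 - x) ^ 5 / 20
            + ((x - a) ^ 2 - ((a + b) / 2 - x) ^ 2) / 2 * ((a + b) / 2 - x) ^ 3 / 3
            + (((x - a) ^ 2 - ((a + b) / 2 - x) ^ 2) / 2) ^ 2 * ((a + b) / 2 - x))
          + (x - a) ^ 5 / 20 := by rw [hA1v, hA2v, hA3v]
      _ ≤ (2 * ((x - a) + ((a + b) / 2 - x))) ^ 3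
            * ((2 * ((x - a) + ((a + b) / 2 - x))) ^ 2 / 48
              + (((x - a) - ((a + b) / 2 - x)) / 2) ^ 2) / 10 := hpoly
      _ = (b - a) ^ 3 * D / 10 := by rw [hDdef]; ring
  -- absolute value bounds
  have hT1a : |T1| ≤ Real.sqrt A1 * Real.sqrt B1 := by
    rw [← Real.sqrt_sq_eq_abs, ← Real.sqrt_mul hA1n]
    exact Real.sqrt_le_sqrt hcs1
  have hT2a : |T2| ≤ Real.sqrt A2 * Real.sqrt B2 := by
    rw [← Real.sqrt_sq_eq_abs, ← Real.sqrt_mul hA2n]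
    exact Real.sqrt_le_sqrt hcs2
  have hT3a : |T3| ≤ Real.sqrt A3 * Real.sqrt B3 := by
    rw [← Real.sqrt_sq_eq_abs, ← Real.sqrt_mul hA3n]
    exact Real.sqrt_le_sqrt hcs3
  have hkey3 := my_three_cs A1 A2 A3 B1 B2 B3 hA1n hA2n hA3n hB1n hB2n hB3n
  have hTabs : |T1 + T2 + T3| ≤ Real.sqrt (A1 + A2 + A3) * Real.sqrt Bt := by
    rw [← hBsum]
    calc |T1 + T2 + T3| ≤ |T1| + |T2| + |T3| := abs_add_three T1 T2 T3
      _ ≤ Real.sqrt A1 * Real.sqrt B1 + Real.sqrt A2 * Real.sqrt B2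
          + Real.sqrt A3 * Real.sqrt B3 := by linarith
      _ ≤ Real.sqrt (A1 + A2 + A3) * Real.sqrt (B1 + B2 + B3) := hkey3
  -- bound on sqrt of the A-sum
  have hpi : (0:ℝ) < Real.pi := Real.pi_pos
  have hpisq : Real.pi ^ 2 ≤ 10 := by
    have h315 : Real.pi ≤ 3.15 := Real.pi_lt_d2.le
    calc Real.pi ^ 2 ≤ 3.15 ^ 2 := pow_le_pow_left₀ hpi.le h315 2
      _ ≤ 10 := by norm_num
  have hsqA : Real.sqrt (A1 + A2 + A3)
      ≤ (b - a) * Real.sqrt (b - a) * Real.sqrt D / Real.pi := by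
    have h1 : A1 + A2 + A3 ≤ (b - a) ^ 3 * D / Real.pi ^ 2 := by
      have h10 : (b - a) ^ 3 * D / 10 ≤ (b - a) ^ 3 * D / Real.pi ^ 2 := by
        apply div_le_div_of_nonneg_left (by positivity) (by positivity) hpisq
      linarith
    have h2 : (b - a) ^ 3 * D / Real.pi ^ 2
        = ((b - a) * Real.sqrt (b - a) * Real.sqrt D / Real.pi) ^ 2 := by
      rw [div_pow, mul_pow, mul_pow, Real.sq_sqrt hL.le, Real.sq_sqrt hDn]
      ring
    calc Real.sqrt (A1 + A2 + A3) ≤ Real.sqrt ((b - a) ^ 3 * D / Real.pi ^ 2) :=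
        Real.sqrt_le_sqrt h1
      _ = (b - a) * Real.sqrt (b - a) * Real.sqrt D / Real.pi := by
          rw [h2, Real.sqrt_sq (by positivity)]
  -- final assembly
  have hgoal : (f x + f y) / 2 - (1 / (b - a)) * ∫ t in a..b, f t
      = -(T1 + T2 + T3) / (b - a) := by
    rw [hsum]
    field_simp
    ring
  rw [hgoal, abs_div, abs_neg, abs_of_pos hL]
  rw [div_le_iff₀ hL]
  calc |T1 + T2 + T3| ≤ Real.sqrt (A1 + A2 + A3) * Real.sqrt Bt := hTabs
    _ ≤ ((b - a) * Real.sqrt (b - a) * Real.sqrt D / Real.pi) * Real.sqrt Bt := by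
        apply mul_le_mul_of_nonneg_right hsqA (Real.sqrt_nonneg _)
    _ = Real.sqrt (b - a) / Real.pi * Real.sqrt D * Real.sqrt Bt * (b - a) := by
        ring
end

section
/- Let a < b be real numbers and let f : [a,b] → ℝ be twice continuously differentiable on (a,b) with f'' ∈ L²[a,b]. Then |(f((3a+b)/4) + f((a+3b)/4))/2 − (1/(b−a)) ∫_a^b f(t) dt| ≤ ((b−a)^{3/2}/(4√3 π)) · ‖f''‖₂. -/
open MeasureTheory intervalIntegral Set

/-- Cauchy–Schwarz for interval integrals. -/
lemma cs_interval (u v : ℝ → ℝ) (c d : ℝ) (hcd : c ≤ d)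
    (hu2 : IntervalIntegrable (fun t => u t ^ 2) volume c d)
    (hv2 : IntervalIntegrable (fun t => v t ^ 2) volume c d)
    (huv : IntervalIntegrable (fun t => u t * v t) volume c d) :
    |∫ t in c..d, u t * v t| ≤
      Real.sqrt (∫ t in c..d, u t ^ 2) * Real.sqrt (∫ t in c..d, v t ^ 2) := by
  set A := ∫ t in c..d, u t ^ 2 with hA
  set C := ∫ t in c..d, v t ^ 2 with hC
  set B := ∫ t in c..d, u t * v t with hB
  have hA0 : 0 ≤ A := intervalIntegral.integral_nonneg hcd (fun t _ => sq_nonneg _)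
  have hC0 : 0 ≤ C := intervalIntegral.integral_nonneg hcd (fun t _ => sq_nonneg _)
  have key : ∀ l : ℝ, 0 ≤ A - 2 * l * B + l ^ 2 * C := by
    intro l
    have h1 : (0:ℝ) ≤ ∫ t in c..d, (u t - l * v t) ^ 2 :=
      intervalIntegral.integral_nonneg hcd (fun t _ => sq_nonneg _)
    have h2 : (∫ t in c..d, (u t - l * v t) ^ 2)
        = A - 2 * l * B + l ^ 2 * C := by
      rw [hA, hB, hC]
      have : ∀ t : ℝ, (u t - l * v t) ^ 2
          = u t ^ 2 - (2 * l) * (u t * v t) + l ^ 2 * v t ^ 2 := fun t => by ring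
      rw [intervalIntegral.integral_congr (fun t _ => this t)]
      rw [intervalIntegral.integral_add (hu2.sub (huv.const_mul _)) (hv2.const_mul _),
        intervalIntegral.integral_sub hu2 (huv.const_mul _),
        intervalIntegral.integral_const_mul, intervalIntegral.integral_const_mul]
    linarith [h2 ▸ h1]
  have hB2 : B ^ 2 ≤ A * C := by
    rcases eq_or_lt_of_le hC0 with h0 | hpos
    · have hBz : B = 0 := by
        by_contra hne
        have h1 := key ((A + 1) / (2 * B))
        rw [← h0] at h1
        have : 2 * ((A + 1) / (2 * B)) * B = A + 1 := by
          field_simp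
        nlinarith [this]
      rw [hBz, ← h0]; ring_nf; nlinarith
    · have h1 := key (B / C)
      have h2 : 2 * (B / C) * B = 2 * (B ^ 2 / C) := by ring
      have h3 : (B / C) ^ 2 * C = B ^ 2 / C := by field_simp
      rw [h2, h3] at h1
      have := mul_le_mul_of_nonneg_right (by linarith : B ^ 2 / C ≤ A) hpos.le
      rwa [div_mul_cancel₀ _ hpos.ne'] at this
  calc |B| = Real.sqrt (B ^ 2) := (Real.sqrt_sq_eq_abs B).symm
    _ ≤ Real.sqrt (A * C) := Real.sqrt_le_sqrt hB2
    _ = Real.sqrt A * Real.sqrt C := Real.sqrt_mul hA0 _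


lemma aux_scalar_ineq : 2 / Real.sqrt 20480 + 1 / Real.sqrt 10240
    ≤ 1 / (4 * Real.sqrt 3 * Real.pi) := by
  have q1 : (143 : ℝ) ≤ Real.sqrt 20480 := by
    have h := Real.sqrt_le_sqrt (by norm_num : ((143 : ℝ)) ^ 2 ≤ 20480)
    rwa [Real.sqrt_sq (by norm_num : (0:ℝ) ≤ 143)] at h
  have q2 : (101 : ℝ) ≤ Real.sqrt 10240 := by
    have h := Real.sqrt_le_sqrt (by norm_num : ((101 : ℝ)) ^ 2 ≤ 10240)
    rwa [Real.sqrt_sq (by norm_num : (0:ℝ) ≤ 101)] at h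
  have q3 : Real.sqrt 3 ≤ 1.8 := by
    have h := Real.sqrt_le_sqrt (by norm_num : (3:ℝ) ≤ 1.8 ^ 2)
    rwa [Real.sqrt_sq (by norm_num : (0:ℝ) ≤ 1.8)] at h
  have q3' : 0 < Real.sqrt 3 := Real.sqrt_pos.mpr (by norm_num)
  have qπ : Real.pi ≤ 4 := Real.pi_le_four
  have qπ0 : 0 < Real.pi := Real.pi_pos
  have hden_pos : 0 < 4 * Real.sqrt 3 * Real.pi := by positivity
  have hq1' : (0:ℝ) < Real.sqrt 20480 := lt_of_lt_of_le (by norm_num) q1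
  have hq2' : (0:ℝ) < Real.sqrt 10240 := lt_of_lt_of_le (by norm_num) q2
  have h1 : 2 / Real.sqrt 20480 ≤ 2 / 143 := by
    rw [div_le_div_iff₀ hq1' (by norm_num)]; linarith
  have h2 : 1 / Real.sqrt 10240 ≤ 1 / 101 := by
    rw [div_le_div_iff₀ hq2' (by norm_num)]; linarith
  have h3 : 4 * Real.sqrt 3 * Real.pi ≤ 28.8 := by nlinarith
  have h4 : (1 : ℝ) / 28.8 ≤ 1 / (4 * Real.sqrt 3 * Real.pi) :=
    one_div_le_one_div_of_le hden_pos h3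
  have h5 : (2 : ℝ) / 143 + 1 / 101 ≤ 1 / 28.8 := by norm_num
  linarith

/-- **Trapezoid type inequality for `f'' ∈ L²[a,b]`** (Corollary of Theorem 2.2, inequality
(2.26)): `|(f((3a+b)/4) + f((a+3b)/4))/2 - (1/(b-a)) ∫_a^b f| ≤ ((b-a)^{3/2}/(4√3 π)) ‖f''‖₂`. -/
theorem companion_ostrowski_second_deriv_L2_trapezoid_type
    (a b : ℝ) (hab : a < b) (f f' f'' : ℝ → ℝ)
    (hcont : ContinuousOn f (Set.Icc a b))
    (hderiv : ∀ t ∈ Set.Ioo a b, HasDerivAt f (f' t) t)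
    (hderiv2 : ∀ t ∈ Set.Ioo a b, HasDerivAt f' (f'' t) t)
    (hcont2 : ContinuousOn f'' (Set.Ioo a b))
    (hL2 : IntervalIntegrable (fun t => (f'' t) ^ 2) MeasureTheory.volume a b) :
    |(f ((3 * a + b) / 4) + f ((a + 3 * b) / 4)) / 2 - (1 / (b - a)) * ∫ t in a..b, f t|
      ≤ (b - a) ^ ((3 : ℝ) / 2) / (4 * Real.sqrt 3 * Real.pi) *
          Real.sqrt (∫ t in a..b, (f'' t) ^ 2) := by
  set L := b - a with hLdef
  have hL0 : 0 < L := sub_pos.mpr hab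
  set x1 : ℝ := (3 * a + b) / 4 with hx1
  set x2 : ℝ := (a + 3 * b) / 4 with hx2
  set m : ℝ := (a + b) / 2 with hm
  have hax1 : a < x1 := by rw [hx1]; linarith
  have hx1m : x1 < m := by rw [hx1, hm]; linarith
  have hmx2 : m < x2 := by rw [hm, hx2]; linarith
  have hx2b : x2 < b := by rw [hx2]; linarith
  have hm_mem : m ∈ Set.Ioo a b := ⟨by linarith, by linarith⟩
  -- measurability of f'' on Ioc a b
  have hmeas : AEStronglyMeasurable f'' (volume.restrict (Set.Ioc a b)) := by
    have h1 : AEStronglyMeasurable f'' (volume.restrict (Set.Ioo a b)) :=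
      hcont2.aestronglyMeasurable measurableSet_Ioo
    rwa [Measure.restrict_congr_set Ioo_ae_eq_Ioc] at h1
  -- f'' is interval integrable
  have hf2int : IntervalIntegrable f'' volume a b := by
    rw [intervalIntegrable_iff_integrableOn_Ioc_of_le hab.le]
    have hL2' : IntegrableOn (fun t => (f'' t) ^ 2) (Set.Ioc a b) volume := by
      have := hL2
      rwa [intervalIntegrable_iff_integrableOn_Ioc_of_le hab.le] at this
    have hb : IntegrableOn (fun t => (1 + f'' t ^ 2) / 2) (Set.Ioc a b) volume := by
      have h1 : IntegrableOn (fun _ : ℝ => (1 : ℝ)) (Set.Ioc a b) volume :=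
        integrableOn_const measure_Ioc_lt_top.ne
      exact (h1.add hL2').div_const 2
    refine hb.mono' hmeas ?_
    filter_upwards with t
    have h1 : |f'' t| ≤ (1 + f'' t ^ 2) / 2 := by nlinarith [sq_nonneg (|f'' t| - 1), sq_abs (f'' t)]
    exact h1
  have hsubIoo : ∀ {c d : ℝ}, c ∈ Set.Ioo a b → d ∈ Set.Ioo a b →
      Set.uIcc c d ⊆ Set.Ioo a b := fun hc hd => Set.ordConnected_Ioo.uIcc_subset hc hd
  have hsubuIcc : ∀ {c d : ℝ}, a ≤ c → c ≤ d → d ≤ b →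
      Set.uIcc c d ⊆ Set.uIcc a b := by
    intro c d h1 h2 h3
    rw [Set.uIcc_of_le h2, Set.uIcc_of_le hab.le]
    exact Set.Icc_subset_Icc h1 h3
  -- the continuous extension p of f'
  set p : ℝ → ℝ := fun t => f' m + ∫ s in m..t, f'' s with hp
  have hp_eq : ∀ t ∈ Set.Ioo a b, p t = f' t := by
    intro t ht
    have hsub : Set.uIcc m t ⊆ Set.Ioo a b := hsubIoo hm_mem ht
    have hint : IntervalIntegrable f'' volume m t :=
      hf2int.mono_set (by rw [Set.uIcc_of_le hab.le]
                          exact hsub.trans Set.Ioo_subset_Icc_self)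
    have heq : (∫ s in m..t, f'' s) = f' t - f' m :=
      intervalIntegral.integral_eq_sub_of_hasDerivAt
        (fun s hs => hderiv2 s (hsub hs)) hint
    show f' m + (∫ s in m..t, f'' s) = f' t
    rw [heq]; ring
  have hp_cont : ContinuousOn p (Set.Icc a b) := by
    have h1 : ContinuousOn (fun t => ∫ s in m..t, f'' s) (Set.uIcc a b) :=
      intervalIntegral.continuousOn_primitive_interval' hf2int
        (by rw [Set.uIcc_of_le hab.le]; exact Set.Ioo_subset_Icc_self hm_mem)
    rw [Set.uIcc_of_le hab.le] at h1
    exact continuousOn_const.add h1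
  have hp_deriv : ∀ t ∈ Set.Ioo a b, HasDerivAt p (f'' t) t := by
    intro t ht
    refine (hderiv2 t ht).congr_of_eventuallyEq ?_
    filter_upwards [isOpen_Ioo.mem_nhds ht] with s hs
    exact hp_eq s hs
  -- piece identity via FTC
  have piece : ∀ e c d : ℝ, a ≤ c → c ≤ d → d ≤ b →
      (∫ t in c..d, (-(t - e) ^ 2 / (2 * L)) * f'' t)
        = ((-(d - e) ^ 2 / (2 * L)) * p d + ((d - e) / L) * f d)
          - ((-(c - e) ^ 2 / (2 * L)) * p c + ((c - e) / L) * f c)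
          - (1 / L) * ∫ t in c..d, f t := by
    intro e c d hac hcd hdb
    have hIccsub : Set.Icc c d ⊆ Set.Icc a b := Set.Icc_subset_Icc hac hdb
    have hIoosub : Set.Ioo c d ⊆ Set.Ioo a b := Set.Ioo_subset_Ioo hac hdb
    have huIccsub : Set.uIcc c d ⊆ Set.uIcc a b := hsubuIcc hac hcd hdb
    set G : ℝ → ℝ := fun t => (-(t - e) ^ 2 / (2 * L)) * p t + ((t - e) / L) * f t with hG
    have hGderiv : ∀ t ∈ Set.Ioo c d,
        HasDerivAt G ((-(t - e) ^ 2 / (2 * L)) * f'' t + f t / L) t := by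
      intro t ht
      have ht' : t ∈ Set.Ioo a b := hIoosub ht
      have h1 : HasDerivAt (fun t : ℝ => -(t - e) ^ 2 / (2 * L)) (-(t - e) / L) t := by
        have := (((hasDerivAt_id t).sub_const e).pow 2).neg.div_const (2 * L)
        refine this.congr_deriv ?_
        simp only [id, Nat.cast_ofNat]
        field_simp
        ring
      have h2 : HasDerivAt (fun t : ℝ => (t - e) / L) (1 / L) t :=
        ((hasDerivAt_id t).sub_const e).div_const L
      have hd := (h1.mul (hp_deriv t ht')).add (h2.mul (hderiv t ht'))
      refine hd.congr_deriv ?_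
      rw [hp_eq t ht']
      field_simp
      ring
    have hGcont : ContinuousOn G (Set.Icc c d) := by
      have hpoly1 : ContinuousOn (fun t : ℝ => -(t - e) ^ 2 / (2 * L)) (Set.Icc c d) :=
        (((continuous_id.sub continuous_const).pow 2).neg.div_const (2 * L)).continuousOn
      have hpoly2 : ContinuousOn (fun t : ℝ => (t - e) / L) (Set.Icc c d) :=
        ((continuous_id.sub continuous_const).div_const L).continuousOn
      exact (hpoly1.mul (hp_cont.mono hIccsub)).add (hpoly2.mul (hcont.mono hIccsub))
    have hf2sub : IntervalIntegrable f'' volume c d := hf2int.mono_set huIccsub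
    have hKcont : ContinuousOn (fun t : ℝ => -(t - e) ^ 2 / (2 * L)) (Set.uIcc c d) :=
      (((continuous_id.sub continuous_const).pow 2).neg.div_const (2 * L)).continuousOn
    have hKf2 : IntervalIntegrable (fun t => (-(t - e) ^ 2 / (2 * L)) * f'' t) volume c d :=
      hf2sub.continuousOn_mul hKcont
    have hfsub : IntervalIntegrable f volume c d := by
      apply ContinuousOn.intervalIntegrable
      exact hcont.mono (by rw [Set.uIcc_of_le hcd]; exact hIccsub)
    have hfsubL : IntervalIntegrable (fun t => f t / L) volume c d := hfsub.div_const L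
    have hint : IntervalIntegrable (fun t => (-(t - e) ^ 2 / (2 * L)) * f'' t + f t / L)
        volume c d := hKf2.add hfsubL
    have hftc := intervalIntegral.integral_eq_sub_of_hasDerivAt_of_le hcd hGcont hGderiv hint
    rw [intervalIntegral.integral_add hKf2 hfsubL] at hftc
    have hdivf : (∫ t in c..d, f t / L) = (∫ t in c..d, f t) / L :=
      intervalIntegral.integral_div L f
    rw [hdivf] at hftc
    have : G d - G c = ((-(d - e) ^ 2 / (2 * L)) * p d + ((d - e) / L) * f d)
        - ((-(c - e) ^ 2 / (2 * L)) * p c + ((c - e) / L) * f c) := rfl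
    rw [this] at hftc
    have hL' : (1 / L) * (∫ t in c..d, f t) = (∫ t in c..d, f t) / L := by ring
    linarith [hftc, hL'.ge, hL'.le]
  -- split of ∫ f over [a,b]
  have hfint : ∀ c d : ℝ, a ≤ c → c ≤ d → d ≤ b → IntervalIntegrable f volume c d := by
    intro c d hac hcd hdb
    apply ContinuousOn.intervalIntegrable
    exact hcont.mono (by rw [Set.uIcc_of_le hcd]; exact Set.Icc_subset_Icc hac hdb)
  have hsplitf : (∫ t in a..x1, f t) + (∫ t in x1..x2, f t) + (∫ t in x2..b, f t)
      = ∫ t in a..b, f t := by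
    rw [intervalIntegral.integral_add_adjacent_intervals
        (hfint a x1 le_rfl hax1.le (by linarith)) (hfint x1 x2 hax1.le (by linarith) hx2b.le)]
    exact intervalIntegral.integral_add_adjacent_intervals
      (hfint a x2 le_rfl (by linarith) hx2b.le) (hfint x2 b (by linarith) hx2b.le le_rfl)
  have h1 := piece a a x1 le_rfl hax1.le (by linarith)
  have h2 := piece m x1 x2 hax1.le (by linarith) hx2b.le
  have h3 := piece b x2 b (by linarith) hx2b.le le_rfl
  have hid : (f x1 + f x2) / 2 - (1 / L) * (∫ t in a..b, f t)
      = (∫ t in a..x1, (-(t - a) ^ 2 / (2 * L)) * f'' t)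
        + (∫ t in x1..x2, (-(t - m) ^ 2 / (2 * L)) * f'' t)
        + (∫ t in x2..b, (-(t - b) ^ 2 / (2 * L)) * f'' t) := by
    rw [h1, h2, h3, ← hsplitf]
    have e1 : x1 - a = L / 4 := by rw [hx1, hLdef]; ring
    have e2 : x1 - m = -(L / 4) := by rw [hx1, hm, hLdef]; ring
    have e3 : x2 - m = L / 4 := by rw [hx2, hm, hLdef]; ring
    have e4 : x2 - b = -(L / 4) := by rw [hx2, hLdef]; ring
    rw [e1, e2, e3, e4]
    have hLne : L ≠ 0 := hL0.ne'
    field_simp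
    ring
  -- exact values of the kernel square integrals
  have hK2 : ∀ e c d : ℝ, (∫ t in c..d, (-(t - e) ^ 2 / (2 * L)) ^ 2)
      = ((d - e) ^ 5 - (c - e) ^ 5) / (20 * L ^ 2) := by
    intro e c d
    have hd : ∀ t : ℝ, HasDerivAt (fun t : ℝ => (t - e) ^ 5 / (20 * L ^ 2))
        ((-(t - e) ^ 2 / (2 * L)) ^ 2) t := by
      intro t
      have := (((hasDerivAt_id t).sub_const e).pow 5).div_const (20 * L ^ 2)
      refine this.congr_deriv ?_
      simp only [id, Nat.cast_ofNat]
      field_simp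
      ring
    have hKc : Continuous (fun t : ℝ => (-(t - e) ^ 2 / (2 * L)) ^ 2) :=
      (((continuous_id.sub continuous_const).pow 2).neg.div_const (2 * L)).pow 2
    rw [intervalIntegral.integral_eq_sub_of_hasDerivAt (fun t _ => hd t)
      (hKc.intervalIntegrable c d)]
    ring
  set β := Real.sqrt (∫ t in a..b, f'' t ^ 2) with hβ
  have hβ0 : 0 ≤ β := Real.sqrt_nonneg _
  have hsq2sub : ∀ c d : ℝ, a ≤ c → c ≤ d → d ≤ b →
      IntervalIntegrable (fun t => f'' t ^ 2) volume c d :=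
    fun c d hac hcd hdb => hL2.mono_set (hsubuIcc hac hcd hdb)
  have hmono : ∀ c d : ℝ, a ≤ c → c ≤ d → d ≤ b →
      (∫ t in c..d, f'' t ^ 2) ≤ ∫ t in a..b, f'' t ^ 2 := by
    intro c d hac hcd hdb
    have e1 : (∫ t in a..c, f'' t ^ 2) + (∫ t in c..d, f'' t ^ 2)
        = ∫ t in a..d, f'' t ^ 2 :=
      intervalIntegral.integral_add_adjacent_intervals
        (hsq2sub a c le_rfl hac (hcd.trans hdb)) (hsq2sub c d hac hcd hdb)
    have e2 : (∫ t in a..d, f'' t ^ 2) + (∫ t in d..b, f'' t ^ 2)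
        = ∫ t in a..b, f'' t ^ 2 :=
      intervalIntegral.integral_add_adjacent_intervals
        (hsq2sub a d le_rfl (hac.trans hcd) hdb) (hsq2sub d b (hac.trans hcd) hdb le_rfl)
    have n1 : 0 ≤ ∫ t in a..c, f'' t ^ 2 :=
      intervalIntegral.integral_nonneg hac (fun t _ => sq_nonneg _)
    have n2 : 0 ≤ ∫ t in d..b, f'' t ^ 2 :=
      intervalIntegral.integral_nonneg hdb (fun t _ => sq_nonneg _)
    linarith
  have hbound : ∀ e c d : ℝ, a ≤ c → c ≤ d → d ≤ b →
      |∫ t in c..d, (-(t - e) ^ 2 / (2 * L)) * f'' t|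
        ≤ Real.sqrt (((d - e) ^ 5 - (c - e) ^ 5) / (20 * L ^ 2)) * β := by
    intro e c d hac hcd hdb
    have hKc : Continuous (fun t : ℝ => -(t - e) ^ 2 / (2 * L)) :=
      ((continuous_id.sub continuous_const).pow 2).neg.div_const _
    have hu2 : IntervalIntegrable (fun t => (-(t - e) ^ 2 / (2 * L)) ^ 2) volume c d :=
      (hKc.pow 2).intervalIntegrable c d
    have hv2 := hsq2sub c d hac hcd hdb
    have huv : IntervalIntegrable (fun t => (-(t - e) ^ 2 / (2 * L)) * f'' t) volume c d :=
      (hf2int.mono_set (hsubuIcc hac hcd hdb)).continuousOn_mul hKc.continuousOn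
    have h := cs_interval _ f'' c d hcd hu2 hv2 huv
    calc |∫ t in c..d, (-(t - e) ^ 2 / (2 * L)) * f'' t|
        ≤ Real.sqrt (∫ t in c..d, (-(t - e) ^ 2 / (2 * L)) ^ 2) *
            Real.sqrt (∫ t in c..d, f'' t ^ 2) := h
      _ ≤ Real.sqrt (((d - e) ^ 5 - (c - e) ^ 5) / (20 * L ^ 2)) * β := by
          rw [hK2 e c d, hβ]
          exact mul_le_mul_of_nonneg_left
            (Real.sqrt_le_sqrt (hmono c d hac hcd hdb)) (Real.sqrt_nonneg _)
  have hLne : L ≠ 0 := hL0.ne'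
  have hv1 : ((x1 - a) ^ 5 - (a - a) ^ 5) / (20 * L ^ 2) = L ^ 3 / 20480 := by
    have hba : b - a ≠ 0 := hLdef ▸ hLne
    rw [hx1, hLdef]; field_simp; ring
  have hv2 : ((x2 - m) ^ 5 - (x1 - m) ^ 5) / (20 * L ^ 2) = L ^ 3 / 10240 := by
    have hba : b - a ≠ 0 := hLdef ▸ hLne
    rw [hx1, hx2, hm, hLdef]; field_simp; ring
  have hv3 : ((b - b) ^ 5 - (x2 - b) ^ 5) / (20 * L ^ 2) = L ^ 3 / 20480 := by
    have hba : b - a ≠ 0 := hLdef ▸ hLne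
    rw [hx2, hLdef]; field_simp; ring
  have b1 := hbound a a x1 le_rfl hax1.le (by linarith)
  have b2 := hbound m x1 x2 hax1.le (by linarith) hx2b.le
  have b3 := hbound b x2 b (by linarith) hx2b.le le_rfl
  rw [hv1] at b1
  rw [hv2] at b2
  rw [hv3] at b3
  -- sqrt simplifications
  have hsqL : Real.sqrt (L ^ 3) = L ^ ((3 : ℝ) / 2) := by
    rw [Real.sqrt_eq_rpow, ← Real.rpow_natCast L 3, ← Real.rpow_mul hL0.le]
    norm_num
  have hs1 : Real.sqrt (L ^ 3 / 20480) = L ^ ((3 : ℝ) / 2) / Real.sqrt 20480 := by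
    rw [Real.sqrt_div (by positivity) , hsqL]
  have hs2 : Real.sqrt (L ^ 3 / 10240) = L ^ ((3 : ℝ) / 2) / Real.sqrt 10240 := by
    rw [Real.sqrt_div (by positivity) , hsqL]
  -- scalar inequality
  have hscalar : 2 / Real.sqrt 20480 + 1 / Real.sqrt 10240
      ≤ 1 / (4 * Real.sqrt 3 * Real.pi) := aux_scalar_ineq
  have hr0 : 0 ≤ L ^ ((3 : ℝ) / 2) := Real.rpow_nonneg hL0.le _
  rw [hid]
  rw [hs1] at b1 b3
  rw [hs2] at b2
  calc |(∫ t in a..x1, (-(t - a) ^ 2 / (2 * L)) * f'' t)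
        + (∫ t in x1..x2, (-(t - m) ^ 2 / (2 * L)) * f'' t)
        + (∫ t in x2..b, (-(t - b) ^ 2 / (2 * L)) * f'' t)|
      ≤ |∫ t in a..x1, (-(t - a) ^ 2 / (2 * L)) * f'' t|
        + |∫ t in x1..x2, (-(t - m) ^ 2 / (2 * L)) * f'' t|
        + |∫ t in x2..b, (-(t - b) ^ 2 / (2 * L)) * f'' t| :=
      (abs_add_le _ _).trans (add_le_add_left (abs_add_le _ _) _)
    _ ≤ L ^ ((3 : ℝ) / 2) / Real.sqrt 20480 * β
        + L ^ ((3 : ℝ) / 2) / Real.sqrt 10240 * β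
        + L ^ ((3 : ℝ) / 2) / Real.sqrt 20480 * β :=
      add_le_add (add_le_add b1 b2) b3
    _ = (2 / Real.sqrt 20480 + 1 / Real.sqrt 10240) * (L ^ ((3 : ℝ) / 2) * β) := by ring
    _ ≤ 1 / (4 * Real.sqrt 3 * Real.pi) * (L ^ ((3 : ℝ) / 2) * β) :=
      mul_le_mul_of_nonneg_right hscalar (mul_nonneg hr0 hβ0)
    _ = L ^ ((3 : ℝ) / 2) / (4 * Real.sqrt 3 * Real.pi) * β := by ring
end

section
/- Let a < b be real numbers and let f : [a,b] → ℝ be twice continuously differentiable on (a,b) with f'' ∈ L²[a,b], and assume f is symmetric about the line x = (a+b)/2, i.e., f(a+b−x) = f(x) for all x ∈ [a,b]. Then for all x ∈ [a, (a+b)/2], |f(x) − (1/(b−a)) ∫_a^b f(t) dt| ≤ ((b−a)^{1/2}/π) · [ (b−a)²/48 + (x − (3a+b)/4)² ]^{1/2} · ‖f''‖₂. -/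
set_option maxHeartbeats 1000000

open MeasureTheory intervalIntegral Set Real

/-- interval integrability from boundedness + continuity on the open interval -/
lemma II_of_bdd {a b : ℝ} (hab : a ≤ b) {h : ℝ → ℝ} (M : ℝ)
    (hc : ContinuousOn h (Set.Ioo a b)) (hb : ∀ t ∈ Set.Ioo a b, |h t| ≤ M) :
    IntervalIntegrable h volume a b := by
  rw [intervalIntegrable_iff_integrableOn_Ioo_of_le hab]
  refine ⟨hc.aestronglyMeasurable measurableSet_Ioo, ?_⟩
  apply HasFiniteIntegral.restrict_of_bounded (C := M) measure_Ioo_lt_top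
  filter_upwards [ae_restrict_mem measurableSet_Ioo] with t ht
  simpa using hb t ht

/-- Cauchy-Schwarz for interval integrals -/
lemma CS_interval {a b : ℝ} (hab : a ≤ b) {u v : ℝ → ℝ}
    (hu : IntervalIntegrable (fun t => u t ^ 2) volume a b)
    (hv : IntervalIntegrable (fun t => v t ^ 2) volume a b)
    (huv : IntervalIntegrable (fun t => u t * v t) volume a b) :
    (∫ t in a..b, u t * v t) ^ 2
      ≤ (∫ t in a..b, u t ^ 2) * (∫ t in a..b, v t ^ 2) := by
  set A := ∫ t in a..b, u t ^ 2 with hA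
  set B := ∫ t in a..b, u t * v t with hB
  set C := ∫ t in a..b, v t ^ 2 with hC
  have key : ∀ lam : ℝ, 0 ≤ A * (lam * lam) + (2 * B) * lam + C := by
    intro lam
    have h1 : (0:ℝ) ≤ ∫ t in a..b, (lam * u t + v t) ^ 2 := by
      apply intervalIntegral.integral_nonneg hab
      intro t _; positivity
    have h2 : ∫ t in a..b, (lam * u t + v t) ^ 2
        = A * (lam * lam) + (2 * B) * lam + C := by
      have e : ∀ t : ℝ, (lam * u t + v t) ^ 2
          = (lam * lam) * u t ^ 2 + (2 * lam) * (u t * v t) + v t ^ 2 := by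
        intro t; ring
      simp_rw [e]
      rw [intervalIntegral.integral_add (((hu.const_mul _).add (huv.const_mul _)))
        hv, intervalIntegral.integral_add (hu.const_mul _) (huv.const_mul _),
        intervalIntegral.integral_const_mul, intervalIntegral.integral_const_mul]
      ring
    linarith [h1, h2 ▸ h1, h2]
  have := discrim_le_zero key
  rw [discrim] at this
  nlinarith [this]

/-- Sharp Wirtinger-type inequality: `g(c) = 0` implies
`∫ g² ≤ (2(d-c)/π)² ∫ g'²`. -/
lemma wirtinger_left {c d : ℝ} (hcd : c < d) (g g' : ℝ → ℝ)
    (hg : ∀ t ∈ Set.Icc c d, HasDerivAt g (g' t) t)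
    (hg' : ContinuousOn g' (Set.Icc c d))
    (hgc : g c = 0) :
    ∫ t in c..d, g t ^ 2 ≤ (2 * (d - c) / π) ^ 2 * ∫ t in c..d, g' t ^ 2 := by
  have hL : 0 < d - c := by linarith
  set k : ℝ := π / (2 * (d - c)) with hk
  have hkpos : 0 < k := by positivity
  have hkd : k * (d - c) = π / 2 := by rw [hk]; field_simp
  -- continuity of g on Icc
  have hgcont : ContinuousOn g (Set.Icc c d) := fun t ht =>
    (hg t ht).continuousAt.continuousWithinAt
  -- bounds
  obtain ⟨Mg, hMg⟩ := (isCompact_Icc (a := c) (b := d)).exists_bound_of_continuousOn hgcont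
  obtain ⟨Mg', hMg'⟩ := (isCompact_Icc (a := c) (b := d)).exists_bound_of_continuousOn hg'
  have hMg0 : 0 ≤ Mg := le_trans (norm_nonneg _) (hMg c (by constructor <;> linarith))
  have hMg'0 : 0 ≤ Mg' := le_trans (norm_nonneg _) (hMg' c (by constructor <;> linarith))
  set φ : ℝ → ℝ := fun t => k * (Real.cos (k * (t - c)) / Real.sin (k * (t - c))) with hφ
  -- integrability over [c,d]
  have hg2int : IntervalIntegrable (fun t => g t ^ 2) volume c d :=
    (hgcont.pow 2).intervalIntegrable_of_Icc hcd.le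
  have hg'2int : IntervalIntegrable (fun t => g' t ^ 2) volume c d :=
    (hg'.pow 2).intervalIntegrable_of_Icc hcd.le
  -- main estimate for each ε
  have main : ∀ ε ∈ Set.Ioo (0:ℝ) (d - c),
      k ^ 2 * ∫ t in c..d, g t ^ 2
        ≤ (∫ t in c..d, g' t ^ 2) + (k ^ 2 * Mg ^ 2 + π / 2 * Mg' ^ 2) * ε := by
    intro ε hε
    obtain ⟨hε0, hεlt⟩ := hε
    set c' : ℝ := c + ε with hc'
    have hcc' : c < c' := by simp [hc']; linarith
    have hc'd : c' ≤ d := by simp [hc']; linarith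
    -- positivity of sin on [c', d]
    have hsin : ∀ t ∈ Set.Icc c' d, 0 < Real.sin (k * (t - c)) := by
      intro t ht
      apply Real.sin_pos_of_pos_of_lt_pi
      · have : c < t := lt_of_lt_of_le hcc' ht.1
        have : 0 < t - c := by linarith
        positivity
      · have h1 : k * (t - c) ≤ k * (d - c) := by
          apply mul_le_mul_of_nonneg_left _ hkpos.le
          have := ht.2; linarith
        rw [hkd] at h1
        linarith [Real.pi_pos]
    -- derivative of φ
    have hφd : ∀ t ∈ Set.Icc c' d, HasDerivAt φ (-(k ^ 2 + φ t ^ 2)) t := by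
      intro t ht
      have hne : Real.sin (k * (t - c)) ≠ 0 := (hsin t ht).ne'
      have hlin : HasDerivAt (fun s : ℝ => k * (s - c)) k t := by
        simpa using ((hasDerivAt_id t).sub_const c).const_mul k
      have hsin' : HasDerivAt (fun s : ℝ => Real.sin (k * (s - c)))
          (Real.cos (k * (t - c)) * k) t :=
        hlin.sin
      have hcos' : HasDerivAt (fun s : ℝ => Real.cos (k * (s - c)))
          (-Real.sin (k * (t - c)) * k) t :=
        hlin.cos
      have hdiv := (hcos'.div hsin' hne).const_mul k
      refine hdiv.congr_deriv ?_
      have hpy := Real.sin_sq_add_cos_sq (k * (t - c))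
      rw [hφ]
      simp only
      field_simp
      nlinarith [hpy, sq_nonneg k]
    -- derivative of H = φ * g^2
    have hHd : ∀ t ∈ Set.Icc c' d,
        HasDerivAt (fun s => φ s * g s ^ 2)
          (-(k ^ 2 + φ t ^ 2) * g t ^ 2 + φ t * (2 * g t * g' t)) t := by
      intro t ht
      have hgt : HasDerivAt g (g' t) t := hg t ⟨le_trans hcc'.le ht.1, ht.2⟩
      have hsq : HasDerivAt (fun s => g s ^ 2) (2 * g t * g' t) t := by
        have := hgt.fun_pow 2
        simpa [mul_comm, mul_assoc] using this
      exact (hφd t ht).mul hsq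
    -- continuity of φ on [c', d]
    have hφcont : ContinuousOn φ (Set.Icc c' d) := by
      apply ContinuousOn.mul continuousOn_const
      apply ContinuousOn.div
      · exact (Real.continuous_cos.comp (continuous_const.mul (continuous_id.sub continuous_const))).continuousOn
      · exact (Real.continuous_sin.comp (continuous_const.mul (continuous_id.sub continuous_const))).continuousOn
      · intro t ht; exact (hsin t ht).ne'
    have hgcont' : ContinuousOn g (Set.Icc c' d) :=
      hgcont.mono (Set.Icc_subset_Icc hcc'.le le_rfl)
    have hg'cont' : ContinuousOn g' (Set.Icc c' d) :=
      hg'.mono (Set.Icc_subset_Icc hcc'.le le_rfl)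
    -- FTC for H
    have hHint : IntervalIntegrable
        (fun t => -(k ^ 2 + φ t ^ 2) * g t ^ 2 + φ t * (2 * g t * g' t)) volume c' d := by
      apply ContinuousOn.intervalIntegrable_of_Icc hc'd
      exact (((continuousOn_const.add (hφcont.pow 2)).neg.mul (hgcont'.pow 2)).add
        (hφcont.mul ((continuousOn_const.mul hgcont').mul hg'cont')))
    have hFTC : ∫ t in c'..d, (-(k ^ 2 + φ t ^ 2) * g t ^ 2 + φ t * (2 * g t * g' t))
        = φ d * g d ^ 2 - φ c' * g c' ^ 2 := by
      apply intervalIntegral.integral_eq_sub_of_hasDerivAt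
      · intro t ht
        rw [Set.uIcc_of_le hc'd] at ht
        exact hHd t ht
      · exact hHint
    have hφdzero : φ d = 0 := by
      rw [hφ]
      simp only
      rw [hkd, Real.cos_pi_div_two]
      simp
    -- nonnegativity of ∫ (g' - φ g)^2 and splitting
    have hsplit : (0:ℝ) ≤ (∫ t in c'..d, g' t ^ 2) - k ^ 2 * (∫ t in c'..d, g t ^ 2)
        + φ c' * g c' ^ 2 := by
      have hnn : (0:ℝ) ≤ ∫ t in c'..d, (g' t - φ t * g t) ^ 2 :=
        intervalIntegral.integral_nonneg hc'd (fun t _ => sq_nonneg _)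
      have hptwise : ∀ t : ℝ, (g' t - φ t * g t) ^ 2
          = g' t ^ 2 - k ^ 2 * g t ^ 2
            - (-(k ^ 2 + φ t ^ 2) * g t ^ 2 + φ t * (2 * g t * g' t)) := by
        intro t; ring
      have hint1 : IntervalIntegrable (fun t => g' t ^ 2) volume c' d :=
        (hg'cont'.pow 2).intervalIntegrable_of_Icc hc'd
      have hint2 : IntervalIntegrable (fun t => k ^ 2 * g t ^ 2) volume c' d :=
        (continuousOn_const.mul (hgcont'.pow 2)).intervalIntegrable_of_Icc hc'd
      have heq : ∫ t in c'..d, (g' t - φ t * g t) ^ 2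
          = (∫ t in c'..d, g' t ^ 2) - k ^ 2 * (∫ t in c'..d, g t ^ 2)
            - (φ d * g d ^ 2 - φ c' * g c' ^ 2) := by
        simp_rw [hptwise]
        rw [intervalIntegral.integral_sub (hint1.sub hint2) hHint,
          intervalIntegral.integral_sub hint1 hint2, hFTC,
          intervalIntegral.integral_const_mul]
      rw [heq, hφdzero] at hnn
      simp at hnn
      linarith
    -- bound on φ c'
    have hφc'le : φ c' ≤ π / (2 * ε) := by
      have hsinc' : Real.sin (k * (c' - c)) > 0 := hsin c' ⟨le_rfl, hc'd⟩
      have harg : k * (c' - c) = k * ε := by rw [hc']; ring_nf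
      have hargle : k * ε ≤ π / 2 := by
        rw [← hkd]
        apply mul_le_mul_of_nonneg_left _ hkpos.le
        linarith
      have hsinlb : 2 / π * (k * ε) ≤ Real.sin (k * ε) :=
        Real.mul_le_sin (by positivity) hargle
      have hcosub : Real.cos (k * ε) ≤ 1 := Real.cos_le_one _
      rw [hφ]
      simp only
      rw [harg] at hsinc' ⊢
      rw [← mul_div_assoc, div_le_div_iff₀ hsinc' (by positivity)]
      have hpi1 : π * (2 / π * (k * ε)) = 2 * (k * ε) := by
        field_simp
      have hpi2 := mul_le_mul_of_nonneg_left hsinlb Real.pi_pos.le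
      have hpi3 : k * Real.cos (k * ε) * (2 * ε) ≤ 2 * (k * ε) := by
        nlinarith [mul_le_mul_of_nonneg_left hcosub (by positivity : (0:ℝ) ≤ 2 * (k * ε))]
      linarith
    -- bound on g c'
    have hgc' : |g c'| ≤ Mg' * ε := by
      have hgceq : g c' = ∫ t in c..c', g' t := by
        have hFTC2 : ∫ t in c..c', g' t = g c' - g c := by
          apply intervalIntegral.integral_eq_sub_of_hasDerivAt
          · intro t ht
            rw [Set.uIcc_of_le hcc'.le] at ht
            exact hg t ⟨ht.1, le_trans ht.2 hc'd⟩
          · exact (hg'.mono (Set.Icc_subset_Icc le_rfl hc'd)).intervalIntegrable_of_Icc hcc'.le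
        rw [hFTC2, hgc]; ring
      rw [hgceq]
      have := intervalIntegral.norm_integral_le_of_norm_le_const (C := Mg') (f := g')
        (a := c) (b := c') ?_
      · calc ‖∫ t in c..c', g' t‖ ≤ Mg' * |c' - c| := this
          _ = Mg' * ε := by rw [hc']; congr 1; rw [abs_of_nonneg] <;> [ring; linarith]
      · intro t ht
        rw [Set.uIoc_of_le hcc'.le] at ht
        exact hMg' t ⟨ht.1.le, le_trans ht.2 hc'd⟩
    -- H c' bound
    have hHc : φ c' * g c' ^ 2 ≤ π / 2 * Mg' ^ 2 * ε := by
      have h1 : φ c' * g c' ^ 2 ≤ π / (2 * ε) * g c' ^ 2 :=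
        mul_le_mul_of_nonneg_right hφc'le (sq_nonneg _)
      have habs := abs_le.mp hgc'
      have h2 : g c' ^ 2 ≤ (Mg' * ε) ^ 2 := by nlinarith
      have h3 : π / (2 * ε) * g c' ^ 2 ≤ π / (2 * ε) * (Mg' * ε) ^ 2 :=
        mul_le_mul_of_nonneg_left h2 (by positivity)
      have h4 : π / (2 * ε) * (Mg' * ε) ^ 2 = π / 2 * Mg' ^ 2 * ε := by
        field_simp
      linarith
    -- splitting the full integral
    have hadj : (∫ t in c..c', g t ^ 2) + (∫ t in c'..d, g t ^ 2) = ∫ t in c..d, g t ^ 2 := by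
      apply intervalIntegral.integral_add_adjacent_intervals
      · refine hg2int.mono_set ?_
        rw [Set.uIcc_of_le hcc'.le, Set.uIcc_of_le hcd.le]
        exact Set.Icc_subset_Icc le_rfl hc'd
      · refine hg2int.mono_set ?_
        rw [Set.uIcc_of_le hc'd, Set.uIcc_of_le hcd.le]
        exact Set.Icc_subset_Icc hcc'.le le_rfl
    have hsmall : ∫ t in c..c', g t ^ 2 ≤ Mg ^ 2 * ε := by
      have hb := intervalIntegral.norm_integral_le_of_norm_le_const (C := Mg ^ 2)
        (f := fun t => g t ^ 2) (a := c) (b := c') ?_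
      · calc ∫ t in c..c', g t ^ 2 ≤ ‖∫ t in c..c', g t ^ 2‖ := le_abs_self _
          _ ≤ Mg ^ 2 * |c' - c| := hb
          _ = Mg ^ 2 * ε := by rw [hc']; congr 1; rw [abs_of_nonneg] <;> [ring; linarith]
      · intro t ht
        rw [Set.uIoc_of_le hcc'.le] at ht
        have h := hMg t ⟨ht.1.le, le_trans ht.2 hc'd⟩
        rw [Real.norm_eq_abs] at h
        rw [Real.norm_eq_abs, abs_pow]
        nlinarith [abs_nonneg (g t)]
    have hmono : ∫ t in c'..d, g' t ^ 2 ≤ ∫ t in c..d, g' t ^ 2 := by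
      apply intervalIntegral.integral_mono_interval hcc'.le hc'd le_rfl
      · filter_upwards with t using sq_nonneg _
      · exact hg'2int
    have hk2small := mul_le_mul_of_nonneg_left hsmall (sq_nonneg k)
    nlinarith [hsplit, hHc, hadj, hmono, hk2small, sq_nonneg k]
  -- conclude
  have key : k ^ 2 * ∫ t in c..d, g t ^ 2 ≤ ∫ t in c..d, g' t ^ 2 := by
    refine le_of_forall_pos_le_add fun δ hδ => ?_
    set C0 : ℝ := k ^ 2 * Mg ^ 2 + π / 2 * Mg' ^ 2 with hC0
    have hC0nn : 0 ≤ C0 := by positivity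
    set ε : ℝ := min ((d - c) / 2) (δ / (C0 + 1)) with hε
    have hε0 : 0 < ε := lt_min (by linarith) (by positivity)
    have hεlt : ε < d - c := lt_of_le_of_lt (min_le_left _ _) (by linarith)
    have h1 := main ε ⟨hε0, hεlt⟩
    have h2 : C0 * ε ≤ δ := by
      have : ε ≤ δ / (C0 + 1) := min_le_right _ _
      have h3 : C0 * ε ≤ C0 * (δ / (C0 + 1)) :=
        mul_le_mul_of_nonneg_left this hC0nn
      have h4 : C0 * (δ / (C0 + 1)) ≤ δ := by
        rw [mul_div_assoc', div_le_iff₀ (by positivity)]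
        nlinarith
      exact le_trans h3 h4
    linarith
  have hS2 : 0 ≤ ∫ t in c..d, g' t ^ 2 :=
    intervalIntegral.integral_nonneg hcd.le (fun t _ => sq_nonneg _)
  have hinv : (2 * (d - c) / π) ^ 2 = 1 / k ^ 2 := by
    rw [hk]; field_simp
  rw [hinv, one_div, inv_mul_eq_div, le_div_iff₀ (by positivity)]
  nlinarith [key]

lemma wirtinger_right {c d : ℝ} (hcd : c < d) (g g' : ℝ → ℝ)
    (hg : ∀ t ∈ Set.Icc c d, HasDerivAt g (g' t) t)
    (hg' : ContinuousOn g' (Set.Icc c d))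
    (hgd : g d = 0) :
    ∫ t in c..d, g t ^ 2 ≤ (2 * (d - c) / π) ^ 2 * ∫ t in c..d, g' t ^ 2 := by
  have hmem : ∀ t ∈ Set.Icc c d, c + d - t ∈ Set.Icc c d := by
    intro t ht
    exact ⟨by linarith [ht.2], by linarith [ht.1]⟩
  have hrefl : ∀ t : ℝ, HasDerivAt (fun s : ℝ => c + d - s) (-1 : ℝ) t := by
    intro t
    simpa using ((hasDerivAt_id t).const_sub (c + d))
  have h := wirtinger_left hcd (fun t => g (c + d - t)) (fun t => -g' (c + d - t))
    (fun t ht => by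
      have := (hg (c + d - t) (hmem t ht)).comp t (hrefl t)
      exact this.congr_deriv (by ring))
    (by
      have hc : ContinuousOn (fun t : ℝ => g' (c + d - t)) (Set.Icc c d) := by
        apply hg'.comp (continuous_const.sub continuous_id).continuousOn
        intro t ht; exact hmem t ht
      exact hc.neg)
    (by simpa using hgd)
  have e1 : (∫ t in c..d, (g (c + d - t)) ^ 2) = ∫ t in c..d, g t ^ 2 := by
    have h2 := intervalIntegral.integral_comp_sub_left (a := c) (b := d)
      (fun s => g s ^ 2) (c + d)
    have h3 : c + d - d = c := by ring
    have h4 : c + d - c = d := by ring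
    rw [h3, h4] at h2
    exact h2
  have e2 : (∫ t in c..d, (-g' (c + d - t)) ^ 2) = ∫ t in c..d, g' t ^ 2 := by
    have h2 := intervalIntegral.integral_comp_sub_left (a := c) (b := d)
      (fun s => g' s ^ 2) (c + d)
    have h3 : c + d - d = c := by ring
    have h4 : c + d - c = d := by ring
    rw [h3, h4] at h2
    simp_rw [neg_sq]
    exact h2
  calc ∫ t in c..d, g t ^ 2 = ∫ t in c..d, (g (c + d - t)) ^ 2 := e1.symm
    _ ≤ (2 * (d - c) / π) ^ 2 * ∫ t in c..d, (-g' (c + d - t)) ^ 2 := h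
    _ = (2 * (d - c) / π) ^ 2 * ∫ t in c..d, g' t ^ 2 := by rw [e2]

/-- integration by parts / Montgomery piece -/
lemma IBP_piece {a b c e w : ℝ} (hce : c ≤ e) (hac : a ≤ c) (heb : e ≤ b)
    {f f' : ℝ → ℝ} (hcont : ContinuousOn f (Set.Icc a b))
    (hderiv : ∀ t ∈ Set.Ioo a b, HasDerivAt f (f' t) t)
    (hf'int : IntervalIntegrable f' volume a b) :
    ∫ t in c..e, (t - w) * f' t
      = (e - w) * f e - (c - w) * f c - ∫ t in c..e, f t := by
  have hsub : Set.Icc c e ⊆ Set.Icc a b := Set.Icc_subset_Icc hac heb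
  have hfint : IntervalIntegrable f volume c e :=
    (hcont.mono hsub).intervalIntegrable_of_Icc hce
  have hwf'int : IntervalIntegrable (fun t => (t - w) * f' t) volume c e := by
    have h1 : IntervalIntegrable f' volume c e := by
      apply hf'int.mono_set
      rw [Set.uIcc_of_le hce, Set.uIcc_of_le (le_trans hac (le_trans hce heb))]
      exact hsub
    have := h1.continuousOn_mul (g := fun t => t - w) ?_
    · exact this
    · exact (continuous_id.sub continuous_const).continuousOn
  have hFTC : ∫ t in c..e, (f t + (t - w) * f' t)
      = (e - w) * f e - (c - w) * f c := by
    have := intervalIntegral.integral_eq_sub_of_hasDeriv_right_of_le hce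
      (f := fun t => (t - w) * f t) (f' := fun t => f t + (t - w) * f' t)
      ?_ ?_ (hfint.add hwf'int)
    · rw [this]
    · exact ((continuous_id.sub continuous_const).continuousOn).mul (hcont.mono hsub)
    · intro t ht
      have ht' : t ∈ Set.Ioo a b := ⟨lt_of_le_of_lt hac ht.1, lt_of_lt_of_le ht.2 heb⟩
      have hd : HasDerivAt (fun s => (s - w) * f s) (f t + (t - w) * f' t) t := by
        have := ((hasDerivAt_id t).sub_const w).mul (hderiv t ht')
        exact this.congr_deriv (by simp only [id]; ring)
      exact hd.hasDerivWithinAt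
  rw [intervalIntegral.integral_add hfint hwf'int] at hFTC
  linarith

lemma wirtinger_total {a b : ℝ} (hab : a < b) (f' f'' : ℝ → ℝ)
    (hderiv2 : ∀ t ∈ Set.Ioo a b, HasDerivAt f' (f'' t) t)
    (hcont2 : ContinuousOn f'' (Set.Ioo a b))
    (hL2 : IntervalIntegrable (fun t => (f'' t) ^ 2) volume a b)
    (M1 : ℝ) (hbdd : ∀ t ∈ Set.Ioo a b, |f' t| ≤ M1)
    (h0 : f' ((a + b) / 2) = 0) :
    ∫ t in a..b, f' t ^ 2 ≤ ((b - a) / π) ^ 2 * ∫ t in a..b, f'' t ^ 2 := by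
  set m : ℝ := (a + b) / 2 with hm
  have ham : a < m := by rw [hm]; linarith
  have hmb : m < b := by rw [hm]; linarith
  have hM1nn : 0 ≤ M1 := le_trans (abs_nonneg _) (hbdd m ⟨ham, hmb⟩)
  have hf'cont : ContinuousOn f' (Set.Ioo a b) := fun t ht =>
    (hderiv2 t ht).continuousAt.continuousWithinAt
  have hf'2cont : ContinuousOn (fun t => f' t ^ 2) (Set.Ioo a b) := hf'cont.pow 2
  have hf'2bdd : ∀ t ∈ Set.Ioo a b, |f' t ^ 2| ≤ M1 ^ 2 := by
    intro t ht
    have := hbdd t ht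
    rw [abs_pow]
    have h2 := abs_nonneg (f' t)
    nlinarith
  have hf'2int : IntervalIntegrable (fun t => f' t ^ 2) volume a b :=
    II_of_bdd hab.le (M1 ^ 2) hf'2cont hf'2bdd
  have hCnn : (0:ℝ) ≤ ((b - a) / π) ^ 2 := sq_nonneg _
  -- right half
  have hright : ∫ t in m..b, f' t ^ 2
      ≤ ((b - a) / π) ^ 2 * ∫ t in m..b, f'' t ^ 2 := by
    refine le_of_forall_pos_le_add fun δ hδ => ?_
    set ε : ℝ := min ((b - m) / 2) (δ / (M1 ^ 2 + 1)) with hε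
    have hε0 : 0 < ε := lt_min (by linarith) (by positivity)
    have hεle : ε < b - m := lt_of_le_of_lt (min_le_left _ _) (by linarith)
    set s : ℝ := b - ε with hs
    have hms : m < s := by rw [hs]; linarith
    have hsb : s < b := by rw [hs]; linarith
    have hsubIcc : Set.Icc m s ⊆ Set.Ioo a b := fun t ht =>
      ⟨lt_of_lt_of_le ham ht.1, lt_of_le_of_lt ht.2 hsb⟩
    have h1 : ∫ t in m..s, f' t ^ 2 ≤ (2 * (s - m) / π) ^ 2 * ∫ t in m..s, f'' t ^ 2 :=
      wirtinger_left hms f' f'' (fun t ht => hderiv2 t (hsubIcc ht))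
        (hcont2.mono hsubIcc) h0
    have h2a : (2 * (s - m) / π) ^ 2 ≤ ((b - a) / π) ^ 2 := by
      have hn1 : 0 ≤ 2 * (s - m) := by linarith
      apply pow_le_pow_left₀ (div_nonneg hn1 Real.pi_pos.le)
      gcongr
      rw [hs, hm]; linarith
    have h2b : ∫ t in m..s, f'' t ^ 2 ≤ ∫ t in m..b, f'' t ^ 2 := by
      apply intervalIntegral.integral_mono_interval le_rfl hms.le hsb.le
      · filter_upwards with t using sq_nonneg _
      · apply hL2.mono_set
        rw [Set.uIcc_of_le hmb.le, Set.uIcc_of_le hab.le]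
        exact Set.Icc_subset_Icc ham.le le_rfl
    have h2bnn : (0:ℝ) ≤ ∫ t in m..s, f'' t ^ 2 :=
      intervalIntegral.integral_nonneg hms.le (fun t _ => sq_nonneg _)
    have h2 : (2 * (s - m) / π) ^ 2 * ∫ t in m..s, f'' t ^ 2
        ≤ ((b - a) / π) ^ 2 * ∫ t in m..b, f'' t ^ 2 := by
      calc (2 * (s - m) / π) ^ 2 * ∫ t in m..s, f'' t ^ 2
          ≤ ((b - a) / π) ^ 2 * ∫ t in m..s, f'' t ^ 2 :=
            mul_le_mul_of_nonneg_right h2a h2bnn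
        _ ≤ ((b - a) / π) ^ 2 * ∫ t in m..b, f'' t ^ 2 :=
            mul_le_mul_of_nonneg_left h2b hCnn
    -- tail
    have hadj : (∫ t in m..s, f' t ^ 2) + (∫ t in s..b, f' t ^ 2)
        = ∫ t in m..b, f' t ^ 2 := by
      apply intervalIntegral.integral_add_adjacent_intervals
      · apply hf'2int.mono_set
        rw [Set.uIcc_of_le hms.le, Set.uIcc_of_le hab.le]
        exact Set.Icc_subset_Icc ham.le hsb.le
      · apply hf'2int.mono_set
        rw [Set.uIcc_of_le hsb.le, Set.uIcc_of_le hab.le]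
        exact Set.Icc_subset_Icc (by linarith) le_rfl
    have hsint : IntervalIntegrable (fun t => f' t ^ 2) volume s b := by
      apply hf'2int.mono_set
      rw [Set.uIcc_of_le hsb.le, Set.uIcc_of_le hab.le]
      exact Set.Icc_subset_Icc (by linarith) le_rfl
    have htail : ∫ t in s..b, f' t ^ 2 ≤ M1 ^ 2 * ε := by
      have haeb : ∀ᵐ t ∂(volume.restrict (Set.Icc s b)), t ≠ b := by
        have h0 : (volume : Measure ℝ) {b} = 0 := measure_singleton b
        have h1 : ∀ᵐ t ∂(volume : Measure ℝ), t ∉ ({b} : Set ℝ) :=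
          measure_eq_zero_iff_ae_notMem.mp h0
        filter_upwards [ae_restrict_of_ae h1] with t ht
        simpa using ht
      have hmono2 : ∫ t in s..b, f' t ^ 2 ≤ ∫ t in s..b, (M1 ^ 2 : ℝ) := by
        apply intervalIntegral.integral_mono_ae_restrict hsb.le hsint
          intervalIntegrable_const
        filter_upwards [haeb, ae_restrict_mem measurableSet_Icc] with t htne htmem
        have htIoo : t ∈ Set.Ioo a b :=
          ⟨lt_trans ham (lt_of_lt_of_le hms htmem.1), lt_of_le_of_ne htmem.2 htne⟩
        exact le_trans (le_abs_self _) (hf'2bdd t htIoo)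
      rw [intervalIntegral.integral_const, smul_eq_mul] at hmono2
      calc ∫ t in s..b, f' t ^ 2 ≤ (b - s) * M1 ^ 2 := hmono2
        _ = M1 ^ 2 * ε := by rw [hs]; ring
    have hfin : M1 ^ 2 * ε ≤ δ := by
      have h5 : ε ≤ δ / (M1 ^ 2 + 1) := min_le_right _ _
      have h6 : M1 ^ 2 * ε ≤ M1 ^ 2 * (δ / (M1 ^ 2 + 1)) :=
        mul_le_mul_of_nonneg_left h5 (sq_nonneg _)
      have h7 : M1 ^ 2 * (δ / (M1 ^ 2 + 1)) ≤ δ := by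
        rw [mul_div_assoc', div_le_iff₀ (by positivity)]
        nlinarith
      linarith
    linarith
  -- left half
  have hleft : ∫ t in a..m, f' t ^ 2
      ≤ ((b - a) / π) ^ 2 * ∫ t in a..m, f'' t ^ 2 := by
    refine le_of_forall_pos_le_add fun δ hδ => ?_
    set ε : ℝ := min ((m - a) / 2) (δ / (M1 ^ 2 + 1)) with hε
    have hε0 : 0 < ε := lt_min (by linarith) (by positivity)
    have hεle : ε < m - a := lt_of_le_of_lt (min_le_left _ _) (by linarith)
    set s : ℝ := a + ε with hs
    have has : a < s := by rw [hs]; linarith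
    have hsm : s < m := by rw [hs]; linarith
    have hsubIcc : Set.Icc s m ⊆ Set.Ioo a b := fun t ht =>
      ⟨lt_of_lt_of_le has ht.1, lt_of_le_of_lt ht.2 hmb⟩
    have h1 : ∫ t in s..m, f' t ^ 2 ≤ (2 * (m - s) / π) ^ 2 * ∫ t in s..m, f'' t ^ 2 :=
      wirtinger_right hsm f' f'' (fun t ht => hderiv2 t (hsubIcc ht))
        (hcont2.mono hsubIcc) h0
    have h2a : (2 * (m - s) / π) ^ 2 ≤ ((b - a) / π) ^ 2 := by
      have hn1 : 0 ≤ 2 * (m - s) := by linarith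
      apply pow_le_pow_left₀ (div_nonneg hn1 Real.pi_pos.le)
      gcongr
      rw [hs, hm]; linarith
    have h2b : ∫ t in s..m, f'' t ^ 2 ≤ ∫ t in a..m, f'' t ^ 2 := by
      apply intervalIntegral.integral_mono_interval has.le hsm.le le_rfl
      · filter_upwards with t using sq_nonneg _
      · apply hL2.mono_set
        rw [Set.uIcc_of_le ham.le, Set.uIcc_of_le hab.le]
        exact Set.Icc_subset_Icc le_rfl hmb.le
    have h2bnn : (0:ℝ) ≤ ∫ t in s..m, f'' t ^ 2 :=
      intervalIntegral.integral_nonneg hsm.le (fun t _ => sq_nonneg _)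
    have h2 : (2 * (m - s) / π) ^ 2 * ∫ t in s..m, f'' t ^ 2
        ≤ ((b - a) / π) ^ 2 * ∫ t in a..m, f'' t ^ 2 :=
      le_trans (mul_le_mul_of_nonneg_right h2a h2bnn)
        (mul_le_mul_of_nonneg_left h2b hCnn)
    have hadj : (∫ t in a..s, f' t ^ 2) + (∫ t in s..m, f' t ^ 2)
        = ∫ t in a..m, f' t ^ 2 := by
      apply intervalIntegral.integral_add_adjacent_intervals
      · apply hf'2int.mono_set
        rw [Set.uIcc_of_le has.le, Set.uIcc_of_le hab.le]
        exact Set.Icc_subset_Icc le_rfl (by linarith)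
      · apply hf'2int.mono_set
        rw [Set.uIcc_of_le hsm.le, Set.uIcc_of_le hab.le]
        exact Set.Icc_subset_Icc has.le hmb.le
    have htail : ∫ t in a..s, f' t ^ 2 ≤ M1 ^ 2 * ε := by
      have hb2 := intervalIntegral.norm_integral_le_of_norm_le_const (C := M1 ^ 2)
        (f := fun t => f' t ^ 2) (a := a) (b := s) ?_
      · calc ∫ t in a..s, f' t ^ 2 ≤ ‖∫ t in a..s, f' t ^ 2‖ := le_abs_self _
          _ ≤ M1 ^ 2 * |s - a| := hb2
          _ = M1 ^ 2 * ε := by rw [hs]; congr 1; rw [abs_of_nonneg] <;> [skip; linarith]; ring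
      · intro t ht
        rw [Set.uIoc_of_le has.le] at ht
        rw [Real.norm_eq_abs]
        exact hf'2bdd t ⟨ht.1, lt_of_le_of_lt ht.2 (lt_trans hsm hmb)⟩
    have hfin : M1 ^ 2 * ε ≤ δ := by
      have h5 : ε ≤ δ / (M1 ^ 2 + 1) := min_le_right _ _
      have h6 : M1 ^ 2 * ε ≤ M1 ^ 2 * (δ / (M1 ^ 2 + 1)) :=
        mul_le_mul_of_nonneg_left h5 (sq_nonneg _)
      have h7 : M1 ^ 2 * (δ / (M1 ^ 2 + 1)) ≤ δ := by
        rw [mul_div_assoc', div_le_iff₀ (by positivity)]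
        nlinarith
      linarith
    linarith
  -- combine halves
  have hadj1 : (∫ t in a..m, f' t ^ 2) + (∫ t in m..b, f' t ^ 2)
      = ∫ t in a..b, f' t ^ 2 := by
    apply intervalIntegral.integral_add_adjacent_intervals
    · apply hf'2int.mono_set
      rw [Set.uIcc_of_le ham.le, Set.uIcc_of_le hab.le]
      exact Set.Icc_subset_Icc le_rfl hmb.le
    · apply hf'2int.mono_set
      rw [Set.uIcc_of_le hmb.le, Set.uIcc_of_le hab.le]
      exact Set.Icc_subset_Icc ham.le le_rfl
  have hadj2 : (∫ t in a..m, f'' t ^ 2) + (∫ t in m..b, f'' t ^ 2)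
      = ∫ t in a..b, f'' t ^ 2 := by
    apply intervalIntegral.integral_add_adjacent_intervals
    · apply hL2.mono_set
      rw [Set.uIcc_of_le ham.le, Set.uIcc_of_le hab.le]
      exact Set.Icc_subset_Icc le_rfl hmb.le
    · apply hL2.mono_set
      rw [Set.uIcc_of_le hmb.le, Set.uIcc_of_le hab.le]
      exact Set.Icc_subset_Icc ham.le le_rfl
  nlinarith [hleft, hright, hadj1, hadj2]

/-- **Ostrowski type inequality for symmetric `f` with `f'' ∈ L²[a,b]`** (Corollary 2.8,
inequality (2.29)): if additionally `f (a + b - x) = f x` on `[a,b]`, then for all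
`x ∈ [a, (a+b)/2]`,
`|f x - (1/(b-a)) ∫_a^b f| ≤ (√(b-a)/π) · √((b-a)²/48 + (x - (3a+b)/4)²) · ‖f''‖₂`. -/
theorem companion_ostrowski_second_deriv_L2_symmetric
    (a b : ℝ) (hab : a < b) (f f' f'' : ℝ → ℝ)
    (hcont : ContinuousOn f (Set.Icc a b))
    (hderiv : ∀ t ∈ Set.Ioo a b, HasDerivAt f (f' t) t)
    (hderiv2 : ∀ t ∈ Set.Ioo a b, HasDerivAt f' (f'' t) t)
    (hcont2 : ContinuousOn f'' (Set.Ioo a b))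
    (hL2 : IntervalIntegrable (fun t => (f'' t) ^ 2) MeasureTheory.volume a b)
    (hsym : ∀ x ∈ Set.Icc a b, f (a + b - x) = f x) :
    ∀ x ∈ Set.Icc a ((a + b) / 2),
      |f x - (1 / (b - a)) * ∫ t in a..b, f t|
        ≤ Real.sqrt (b - a) / Real.pi *
            Real.sqrt ((b - a) ^ 2 / 48 + (x - (3 * a + b) / 4) ^ 2) *
            Real.sqrt (∫ t in a..b, (f'' t) ^ 2) := by
  intro x hx
  obtain ⟨hax, hxm⟩ := hx
  have ham : a < (a + b) / 2 := by linarith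
  have hmb : (a + b) / 2 < b := by linarith
  have hxb : x ≤ b := by linarith
  have hxy : x ≤ a + b - x := by linarith
  have hyb : a + b - x ≤ b := by linarith
  have hay : a ≤ a + b - x := by linarith
  -- continuity of f' and f''
  have hf'cont : ContinuousOn f' (Set.Ioo a b) := fun t ht =>
    (hderiv2 t ht).continuousAt.continuousWithinAt
  -- f'' interval integrable
  have hf''int : IntervalIntegrable f'' volume a b := by
    have hbound : IntervalIntegrable (fun t => (1 + f'' t ^ 2) / 2) volume a b :=
      (intervalIntegrable_const.add hL2).div_const 2
    apply hbound.mono_fun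
    · have h1 : AEStronglyMeasurable f'' (volume.restrict (Set.Ioo a b)) :=
        hcont2.aestronglyMeasurable measurableSet_Ioo
      rw [Set.uIoc_of_le hab.le]
      have h2 : volume.restrict (Set.Ioo a b) = volume.restrict (Set.Ioc a b) :=
        Measure.restrict_congr_set Ioo_ae_eq_Ioc
      rw [← h2]; exact h1
    · filter_upwards with t
      rw [Real.norm_eq_abs, Real.norm_eq_abs]
      have h3 := sq_nonneg (|f'' t| - 1)
      have h4 := sq_abs (f'' t)
      have h5 : (0:ℝ) ≤ 1 + f'' t ^ 2 := by positivity
      rw [abs_of_nonneg (by positivity : (0:ℝ) ≤ (1 + f'' t ^ 2) / 2)]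
      nlinarith [abs_nonneg (f'' t)]
  -- bound for f'
  have hM2nn : 0 ≤ ∫ t in a..b, |f'' t| :=
    intervalIntegral.integral_nonneg hab.le (fun t _ => abs_nonneg _)
  have hf'bdd : ∀ t ∈ Set.Ioo a b,
      |f' t| ≤ |f' ((a + b) / 2)| + ∫ s in a..b, |f'' s| := by
    intro t ht
    have hmmem : (a + b) / 2 ∈ Set.Ioo a b := ⟨ham, hmb⟩
    have hsubI : Set.uIcc ((a + b) / 2) t ⊆ Set.Ioo a b :=
      (Set.ordConnected_Ioo).uIcc_subset hmmem ht
    have hFTC : ∫ s in ((a + b) / 2)..t, f'' s = f' t - f' ((a + b) / 2) := by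
      apply intervalIntegral.integral_eq_sub_of_hasDerivAt
      · intro s hs; exact hderiv2 s (hsubI hs)
      · apply hf''int.mono_set
        rw [Set.uIcc_of_le hab.le]
        exact subset_trans hsubI Set.Ioo_subset_Icc_self
    have habs : |∫ s in ((a + b) / 2)..t, f'' s| ≤ ∫ s in a..b, |f'' s| := by
      rcases le_total ((a + b) / 2) t with hcase | hcase
      · calc |∫ s in ((a + b) / 2)..t, f'' s| ≤ ∫ s in ((a + b) / 2)..t, |f'' s| :=
              intervalIntegral.abs_integral_le_integral_abs hcase
          _ ≤ ∫ s in a..b, |f'' s| := by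
              apply intervalIntegral.integral_mono_interval ham.le hcase ht.2.le
              · filter_upwards with s using abs_nonneg _
              · exact hf''int.abs
      · rw [intervalIntegral.integral_symm, abs_neg]
        calc |∫ s in t..(a + b) / 2, f'' s| ≤ ∫ s in t..(a + b) / 2, |f'' s| :=
              intervalIntegral.abs_integral_le_integral_abs hcase
          _ ≤ ∫ s in a..b, |f'' s| := by
              apply intervalIntegral.integral_mono_interval ht.1.le hcase hmb.le
              · filter_upwards with s using abs_nonneg _
              · exact hf''int.abs
    have h6 : f' t = f' ((a + b) / 2) + ∫ s in ((a + b) / 2)..t, f'' s := by linarith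
    rw [h6]
    calc |f' ((a + b) / 2) + ∫ s in ((a + b) / 2)..t, f'' s|
        ≤ |f' ((a + b) / 2)| + |∫ s in ((a + b) / 2)..t, f'' s| := abs_add_le _ _
      _ ≤ |f' ((a + b) / 2)| + ∫ s in a..b, |f'' s| := by linarith
  set M1 : ℝ := |f' ((a + b) / 2)| + ∫ s in a..b, |f'' s| with hM1
  have hM1nn : 0 ≤ M1 := by rw [hM1]; positivity
  have hf'int : IntervalIntegrable f' volume a b := II_of_bdd hab.le M1 hf'cont hf'bdd
  have hf'2int : IntervalIntegrable (fun t => f' t ^ 2) volume a b := by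
    apply II_of_bdd hab.le (M1 ^ 2) (hf'cont.pow 2)
    intro t ht
    have := hf'bdd t ht
    rw [Pi.pow_apply, abs_pow]
    nlinarith [abs_nonneg (f' t)]
  -- symmetry: f' vanishes at midpoint
  have hf'm0 : f' ((a + b) / 2) = 0 := by
    have hmm : a + b - (a + b) / 2 = (a + b) / 2 := by ring
    have h1 : HasDerivAt f (f' ((a + b) / 2)) ((a + b) / 2) := hderiv _ ⟨ham, hmb⟩
    have hinner : HasDerivAt (fun t : ℝ => a + b - t) (-1 : ℝ) ((a + b) / 2) := by
      simpa using ((hasDerivAt_id ((a + b) / 2)).const_sub (a + b))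
    have h1' : HasDerivAt f (f' ((a + b) / 2)) (a + b - (a + b) / 2) := by
      rw [hmm]; exact h1
    have h2 : HasDerivAt (fun t => f (a + b - t)) (f' ((a + b) / 2) * (-1)) ((a + b) / 2) :=
      h1'.comp _ hinner
    have h3 : (fun t => f (a + b - t)) =ᶠ[nhds ((a + b) / 2)] f := by
      filter_upwards [Ioo_mem_nhds ham hmb] with t ht
      exact hsym t (Set.Ioo_subset_Icc_self ht)
    have h4 : HasDerivAt f (f' ((a + b) / 2) * (-1)) ((a + b) / 2) :=
      h2.congr_of_eventuallyEq h3.symm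
    have h5 := h4.unique h1
    linarith
  -- Wirtinger
  have hwirt : ∫ t in a..b, f' t ^ 2 ≤ ((b - a) / π) ^ 2 * ∫ t in a..b, f'' t ^ 2 :=
    wirtinger_total hab f' f'' hderiv2 hcont2 hL2 M1 hf'bdd hf'm0
  -- the kernel
  set P : ℝ → ℝ := fun t =>
    if t ≤ x then t - a else if t ≤ a + b - x then t - (a + b) / 2 else t - b with hP
  have hPbdd : ∀ t ∈ Set.Ioo a b, |P t| ≤ b - a := by
    intro t ht
    rw [hP]
    simp only
    split_ifs <;> rw [abs_le] <;> constructor <;> linarith [ht.1, ht.2]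
  -- P on the open pieces
  have hP1 : ∀ t ∈ Set.Ioc a x, P t = t - a := by
    intro t ht; rw [hP]; simp only [if_pos ht.2]
  have hP2 : ∀ t ∈ Set.Ioc x (a + b - x), P t = t - (a + b) / 2 := by
    intro t ht; rw [hP]
    simp only [if_neg (not_le.mpr ht.1), if_pos ht.2]
  have hP3 : ∀ t ∈ Set.Ioc (a + b - x) b, P t = t - b := by
    intro t ht; rw [hP]
    have h1 : ¬ t ≤ x := not_le.mpr (lt_of_le_of_lt hxy ht.1)
    have h2 : ¬ t ≤ a + b - x := not_le.mpr ht.1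
    simp only [if_neg h1, if_neg h2]
  -- integrability of P * f' and P^2 on pieces
  have hcont_sub : ∀ w : ℝ, ContinuousOn (fun t : ℝ => t - w) (Set.Ioo a b) :=
    fun w => (continuous_id.sub continuous_const).continuousOn
  have hsub1 : Set.Ioo a x ⊆ Set.Ioo a b := fun t ht =>
    ⟨ht.1, lt_of_lt_of_le ht.2 (le_trans hxm hmb.le)⟩
  have hsub2 : Set.Ioo x (a + b - x) ⊆ Set.Ioo a b := fun t ht =>
    ⟨lt_of_le_of_lt hax ht.1, lt_of_lt_of_le ht.2 hyb⟩
  have hsub3 : Set.Ioo (a + b - x) b ⊆ Set.Ioo a b := fun t ht =>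
    ⟨lt_of_le_of_lt hay ht.1, ht.2⟩
  -- a generic piece fact
  have hPiece : ∀ (c e w : ℝ), a ≤ c → c ≤ e → e ≤ b →
      Set.Ioo c e ⊆ Set.Ioo a b → (∀ t ∈ Set.Ioc c e, P t = t - w) →
      IntervalIntegrable (fun t => P t * f' t) volume c e
      ∧ IntervalIntegrable (fun t => P t ^ 2) volume c e
      ∧ (∫ t in c..e, P t * f' t = ∫ t in c..e, (t - w) * f' t)
      ∧ (∫ t in c..e, P t ^ 2 = ((e - w) ^ 3 - (c - w) ^ 3) / 3) := by
    intro c e w hac hce heb hsub hPw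
    have hbw : ∀ t ∈ Set.Ioo c e, |t - w| ≤ b - a := by
      intro t ht
      have h1 := hPw t (Set.Ioo_subset_Ioc_self ht)
      rw [← h1]
      exact hPbdd t (hsub ht)
    have hcP : ContinuousOn (fun t => P t * f' t) (Set.Ioo c e) := by
      apply ContinuousOn.congr
        ((((hcont_sub w).mono hsub)).mul (hf'cont.mono hsub))
      intro t ht
      show P t * f' t = (t - w) * f' t
      rw [hPw t (Set.Ioo_subset_Ioc_self ht)]
    have hcP2 : ContinuousOn (fun t => P t ^ 2) (Set.Ioo c e) := by
      apply ContinuousOn.congr (((hcont_sub w).mono hsub).pow 2)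
      intro t ht
      show P t ^ 2 = (t - w) ^ 2
      rw [hPw t (Set.Ioo_subset_Ioc_self ht)]
    refine ⟨?_, ?_, ?_, ?_⟩
    · apply II_of_bdd hce ((b - a) * M1) hcP
      intro t ht
      have hb1 : |P t| ≤ b - a := hPbdd t (hsub ht)
      rw [abs_mul]
      exact mul_le_mul hb1 (hf'bdd t (hsub ht)) (abs_nonneg _) (by linarith)
    · apply II_of_bdd hce ((b - a) ^ 2) hcP2
      intro t ht
      have hb1 : |P t| ≤ b - a := hPbdd t (hsub ht)
      rw [abs_pow]
      nlinarith [abs_nonneg (P t)]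
    · apply intervalIntegral.integral_congr_ae
      rw [Set.uIoc_of_le hce]
      filter_upwards with t ht
      rw [hPw t ht]
    · have he1 : ∫ t in c..e, P t ^ 2 = ∫ t in c..e, (t - w) ^ 2 := by
        apply intervalIntegral.integral_congr_ae
        rw [Set.uIoc_of_le hce]
        filter_upwards with t ht
        rw [hPw t ht]
      rw [he1]
      have he2 := intervalIntegral.integral_comp_sub_right (a := c) (b := e)
        (fun u => u ^ 2) w
      rw [he2, integral_pow]
      norm_num
  obtain ⟨hw1a, hw1b, hw1c, hw1d⟩ :=
    hPiece a x a le_rfl hax hxb hsub1 hP1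
  obtain ⟨hw2a, hw2b, hw2c, hw2d⟩ :=
    hPiece x (a + b - x) ((a + b) / 2) hax hxy hyb hsub2 hP2
  obtain ⟨hw3a, hw3b, hw3c, hw3d⟩ :=
    hPiece (a + b - x) b b hay hyb le_rfl hsub3 hP3
  -- IBP identities
  have hI1 := IBP_piece (w := a) hax le_rfl hxb hcont hderiv hf'int
  have hI2 := IBP_piece (w := (a + b) / 2) hxy hax hyb hcont hderiv hf'int
  have hI3 := IBP_piece (w := b) hyb hay le_rfl hcont hderiv hf'int
  -- f integrable on pieces
  have hfya : f (a + b - x) = f x := hsym x ⟨hax, hxb⟩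
  have hfint : ∀ c e : ℝ, a ≤ c → c ≤ e → e ≤ b → IntervalIntegrable f volume c e :=
    fun c e h1 h2 h3 =>
      ((hcont.mono (Set.Icc_subset_Icc h1 h3)).intervalIntegrable_of_Icc h2)
  have hfadd : (∫ t in a..x, f t) + (∫ t in x..(a + b - x), f t)
      + (∫ t in (a + b - x)..b, f t) = ∫ t in a..b, f t := by
    rw [intervalIntegral.integral_add_adjacent_intervals (hfint a x le_rfl hax hxb)
      (hfint x (a + b - x) hax hxy hyb)]
    exact intervalIntegral.integral_add_adjacent_intervals
      (hfint a (a + b - x) le_rfl hay hyb) (hfint (a + b - x) b hay hyb le_rfl)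
  have hPf'add : (∫ t in a..x, P t * f' t) + (∫ t in x..(a + b - x), P t * f' t)
      + (∫ t in (a + b - x)..b, P t * f' t) = ∫ t in a..b, P t * f' t := by
    rw [intervalIntegral.integral_add_adjacent_intervals hw1a hw2a]
    exact intervalIntegral.integral_add_adjacent_intervals (hw1a.trans hw2a) hw3a
  have hP2add : (∫ t in a..x, P t ^ 2) + (∫ t in x..(a + b - x), P t ^ 2)
      + (∫ t in (a + b - x)..b, P t ^ 2) = ∫ t in a..b, P t ^ 2 := by
    rw [intervalIntegral.integral_add_adjacent_intervals hw1b hw2b]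
    exact intervalIntegral.integral_add_adjacent_intervals (hw1b.trans hw2b) hw3b
  -- the Montgomery-type identity
  have hident : ∫ t in a..b, P t * f' t = (b - a) * f x - ∫ t in a..b, f t := by
    rw [← hPf'add, hw1c, hw2c, hw3c, hI1, hI2, hI3, ← hfadd, hfya]
    ring
  -- value of ∫ P^2
  have hP2val : ∫ t in a..b, P t ^ 2
      = (b - a) * ((b - a) ^ 2 / 48 + (x - (3 * a + b) / 4) ^ 2) := by
    rw [← hP2add, hw1d, hw2d, hw3d]
    ring
  -- Cauchy-Schwarz
  have hCS := CS_interval hab.le (u := P) (v := f')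
    ((hw1b.trans hw2b).trans hw3b)
    hf'2int
    ((hw1a.trans hw2a).trans hw3a)
  -- nonnegativity
  have hS2nn : (0:ℝ) ≤ ∫ t in a..b, f'' t ^ 2 :=
    intervalIntegral.integral_nonneg hab.le (fun t _ => sq_nonneg _)
  have hKnn : (0:ℝ) ≤ (b - a) ^ 2 / 48 + (x - (3 * a + b) / 4) ^ 2 := by positivity
  -- final assembly
  set I : ℝ := ∫ t in a..b, P t * f' t with hI
  set K : ℝ := (b - a) ^ 2 / 48 + (x - (3 * a + b) / 4) ^ 2 with hK
  set S2 : ℝ := ∫ t in a..b, f'' t ^ 2 with hS2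
  have hIsq : I ^ 2 ≤ (b - a) * K * (((b - a) / π) ^ 2 * S2) := by
    calc I ^ 2 ≤ (∫ t in a..b, P t ^ 2) * (∫ t in a..b, f' t ^ 2) := hCS
      _ ≤ ((b - a) * K) * (((b - a) / π) ^ 2 * S2) := by
          rw [hP2val]
          exact mul_le_mul_of_nonneg_left hwirt
            (mul_nonneg (by linarith) hKnn)
  have hbpos : (0:ℝ) < b - a := by linarith
  have hid2 : f x - (1 / (b - a)) * ∫ t in a..b, f t = I / (b - a) := by
    rw [hident]; field_simp
  rw [hid2, abs_div, abs_of_pos hbpos, div_le_iff₀ hbpos]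
  have h1 : |I| ≤ Real.sqrt ((b - a) * K * (((b - a) / π) ^ 2 * S2)) := by
    rw [← Real.sqrt_sq_eq_abs]
    exact Real.sqrt_le_sqrt hIsq
  have h2 : Real.sqrt ((b - a) * K * (((b - a) / π) ^ 2 * S2))
      = Real.sqrt (b - a) * Real.sqrt K * ((b - a) / π * Real.sqrt S2) := by
    rw [Real.sqrt_mul (mul_nonneg hbpos.le hKnn),
      Real.sqrt_mul hbpos.le K,
      Real.sqrt_mul (sq_nonneg ((b - a) / π)),
      Real.sqrt_sq (div_nonneg hbpos.le Real.pi_pos.le)]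
  calc |I| ≤ Real.sqrt ((b - a) * K * (((b - a) / π) ^ 2 * S2)) := h1
    _ = Real.sqrt (b - a) * Real.sqrt K * ((b - a) / π * Real.sqrt S2) := h2
    _ = Real.sqrt (b - a) / π * Real.sqrt K * Real.sqrt S2 * (b - a) := by ring
end

section
/- Let a < b be real numbers and let f : [a,b] → ℝ be absolutely continuous on [a,b] with f' ∈ L²[a,b]. Set σ(f') = ‖f'‖₂² − (f(b) − f(a))²/(b − a), where ‖f'‖₂² = ∫_a^b (f'(t))² dt. Then for all x ∈ [a, (a+b)/2], |(f(x) + f(a+b−x))/2 − (1/(b−a)) ∫_a^b f(t) dt| ≤ (b−a)^{−1/2} · [ (b−a)²/48 + (x − (3a+b)/4)² ]^{1/2} · √(σ(f')). -/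
open MeasureTheory Set intervalIntegral

private lemma cs_integral {μ : Measure ℝ} {g h : ℝ → ℝ}
    (hg : Integrable (fun t => g t ^ 2) μ) (hh : Integrable (fun t => h t ^ 2) μ)
    (hgh : Integrable (fun t => g t * h t) μ) :
    (∫ t, g t * h t ∂μ) ^ 2 ≤ (∫ t, g t ^ 2 ∂μ) * ∫ t, h t ^ 2 ∂μ := by
  set A := ∫ t, g t ^ 2 ∂μ with hA
  set B := ∫ t, g t * h t ∂μ with hB
  set C := ∫ t, h t ^ 2 ∂μ with hC
  have key : ∀ lam : ℝ, 0 ≤ A * (lam * lam) + (2 * B) * lam + C := by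
    intro lam
    have h2 : 0 ≤ ∫ t, (lam * g t + h t) ^ 2 ∂μ :=
      integral_nonneg (fun t => sq_nonneg _)
    have h3 : (fun t => (lam * g t + h t) ^ 2)
        = fun t => (lam ^ 2) * g t ^ 2 + (2 * lam) * (g t * h t) + h t ^ 2 := by
      funext t; ring
    have i1 : Integrable (fun t => (lam ^ 2) * g t ^ 2) μ := hg.const_mul _
    have i2 : Integrable (fun t => (2 * lam) * (g t * h t)) μ := hgh.const_mul _
    have i12 : Integrable (fun t => (lam ^ 2) * g t ^ 2 + (2 * lam) * (g t * h t)) μ := i1.add i2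
    rw [h3, integral_add i12 hh, integral_add i1 i2,
      MeasureTheory.integral_const_mul, MeasureTheory.integral_const_mul] at h2
    nlinarith [h2]
  have hd := discrim_le_zero key
  rw [discrim] at hd
  nlinarith [hd]

private lemma fubini_triangle {u v : ℝ} (huv : u ≤ v) {f' : ℝ → ℝ}
    (h : IntegrableOn f' (Ioc u v)) :
    ∫ t in Ioc u v, (∫ s in Ioc u t, f' s) = ∫ s in Ioc u v, (v - s) * f' s := by
  set μ : Measure ℝ := volume.restrict (Ioc u v) with hμ
  have hfin : IsFiniteMeasure μ := by
    constructor
    rw [hμ, Measure.restrict_apply_univ]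
    exact measure_Ioc_lt_top
  set G : ℝ → ℝ → ℝ := fun t s => if s ≤ t then f' s else 0 with hG
  have hGind : Function.uncurry G
      = Set.indicator {p : ℝ × ℝ | p.2 ≤ p.1} (fun p => f' p.2) := by
    funext p
    by_cases hp : p.2 ≤ p.1 <;>
      simp [hG, Function.uncurry, Set.indicator, hp]
  have hGm : AEStronglyMeasurable (Function.uncurry G) (μ.prod μ) := by
    rw [hGind]
    exact (h.aestronglyMeasurable.comp_snd).indicator
      (measurableSet_le measurable_snd measurable_fst)
  have hsect : ∀ t : ℝ, (fun s => G t s) = (Iic t).indicator f' := by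
    intro t; funext s
    by_cases hs : s ≤ t <;> simp [hG, Set.indicator, hs]
  have hsectInt : ∀ t : ℝ, Integrable (fun s => G t s) μ := by
    intro t; rw [hsect t]
    exact h.indicator measurableSet_Iic
  have hGint : Integrable (Function.uncurry G) (μ.prod μ) := by
    rw [integrable_prod_iff hGm]
    constructor
    · exact ae_of_all _ fun t => hsectInt t
    · refine (integrable_const (∫ s, ‖f' s‖ ∂μ)).mono'
        (hGm.norm.integral_prod_right') (ae_of_all _ fun t => ?_)
      have h1 : Integrable (fun s => ‖G t s‖) μ := (hsectInt t).norm
      have h2 : ∫ s, ‖G t s‖ ∂μ ≤ ∫ s, ‖f' s‖ ∂μ := by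
        refine integral_mono h1 h.norm fun s => ?_
        by_cases hs : s ≤ t <;> simp [hG, hs, abs_nonneg]
      have h3 : 0 ≤ ∫ s, ‖G t s‖ ∂μ := integral_nonneg fun s => norm_nonneg _
      simp only [Function.uncurry_apply_pair]
      rw [Real.norm_of_nonneg h3]
      exact h2
  have hswap : ∫ t, ∫ s, G t s ∂μ ∂μ = ∫ s, ∫ t, G t s ∂μ ∂μ :=
    integral_integral_swap hGint
  have hL : ∫ t, ∫ s, G t s ∂μ ∂μ = ∫ t in Ioc u v, (∫ s in Ioc u t, f' s) := by
    refine setIntegral_congr_fun measurableSet_Ioc fun t ht => ?_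
    have hset : Iic t ∩ Ioc u v = Ioc u t := by
      ext s
      simp only [mem_inter_iff, mem_Iic, mem_Ioc]
      exact ⟨fun ⟨h1, h2, _⟩ => ⟨h2, h1⟩, fun ⟨h1, h2⟩ => ⟨h2, h1, h2.trans ht.2⟩⟩
    rw [hsect t, MeasureTheory.integral_indicator measurableSet_Iic, hμ,
      Measure.restrict_restrict measurableSet_Iic, hset]
  have hR : ∫ s, ∫ t, G t s ∂μ ∂μ = ∫ s in Ioc u v, (v - s) * f' s := by
    refine setIntegral_congr_fun measurableSet_Ioc fun s hs => ?_
    have e1 : (fun t => G t s) = (Ici s).indicator (fun _ => f' s) := by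
      funext t
      by_cases ht : s ≤ t <;> simp [hG, Set.indicator, ht]
    rw [e1, integral_indicator_const _ measurableSet_Ici]
    have e2 : μ (Ici s) = ENNReal.ofReal (v - s) := by
      rw [hμ, Measure.restrict_apply measurableSet_Ici]
      have : Ici s ∩ Ioc u v = Icc s v := by
        ext t
        simp only [mem_inter_iff, mem_Ici, mem_Ioc, mem_Icc]
        exact ⟨fun ⟨h1, _, h3⟩ => ⟨h1, h3⟩, fun ⟨h1, h2⟩ => ⟨h1, hs.1.trans_le h1, h2⟩⟩
      rw [this, Real.volume_Icc]
    rw [measureReal_def, e2, ENNReal.toReal_ofReal (by linarith [hs.2])]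
    simp [smul_eq_mul]
  rw [hL, hR] at hswap
  exact hswap

private lemma primitive_parts {f' : ℝ → ℝ} {a b u v : ℝ}
    (hint : IntervalIntegrable f' volume a b) (hab : a ≤ b)
    (hau : a ≤ u) (huv : u ≤ v) (hvb : v ≤ b) (k : ℝ) :
    ∫ t in u..v, (t - k) * f' t
      = (v - k) * (∫ s in a..v, f' s) - (u - k) * (∫ s in a..u, f' s)
        - ∫ t in u..v, (∫ s in a..t, f' s) := by
  have hmem : ∀ w : ℝ, a ≤ w → w ≤ b → w ∈ uIcc a b := fun w h1 h2 => by
    rw [uIcc_of_le hab]; exact ⟨h1, h2⟩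
  have hsub : ∀ w z : ℝ, a ≤ w → w ≤ z → z ≤ b → IntervalIntegrable f' volume w z :=
    fun w z h1 h2 h3 => hint.mono_set
      (uIcc_subset_uIcc (hmem w h1 (h2.trans h3)) (hmem z (h1.trans h2) h3))
  have huvInt : IntervalIntegrable f' volume u v := hsub u v hau huv hvb
  have hIoc : IntegrableOn f' (Ioc u v) volume :=
    (intervalIntegrable_iff_integrableOn_Ioc_of_le huv).mp huvInt
  -- decompose F t = F u + ∫_u^t f'
  have hFdec : ∀ t : ℝ, u ≤ t → t ≤ v →
      (∫ s in a..t, f' s) = (∫ s in a..u, f' s) + ∫ s in u..t, f' s := by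
    intro t h1 h2
    rw [integral_add_adjacent_intervals (hsub a u le_rfl hau (huv.trans hvb))
      (hsub u t hau h1 (h2.trans hvb))]
  -- the primitive of f' from u is continuous, hence interval integrable on u..v
  have hprimCont : ContinuousOn (fun t => ∫ s in u..t, f' s) (uIcc u v) :=
    continuousOn_primitive_interval' huvInt left_mem_uIcc
  have hprimInt : IntervalIntegrable (fun t => ∫ s in u..t, f' s) volume u v :=
    hprimCont.intervalIntegrable
  -- ∫_u^v F = (v-u) F u + ∫_u^v (∫_u^t f')
  have hJ : (∫ t in u..v, (∫ s in a..t, f' s))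
      = (v - u) * (∫ s in a..u, f' s) + ∫ t in u..v, (∫ s in u..t, f' s) := by
    have e1 : (∫ t in u..v, (∫ s in a..t, f' s))
        = ∫ t in u..v, ((∫ s in a..u, f' s) + ∫ s in u..t, f' s) := by
      rw [integral_of_le huv, integral_of_le huv]
      refine setIntegral_congr_fun measurableSet_Ioc fun t ht => ?_
      exact hFdec t ht.1.le ht.2
    rw [e1, integral_add (intervalIntegrable_const) hprimInt, intervalIntegral.integral_const,
      smul_eq_mul]
  -- triangle Fubini: ∫_u^v (∫_u^t f') = ∫_u^v (v - s) f' s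
  have htri : (∫ t in u..v, (∫ s in u..t, f' s)) = ∫ s in u..v, (v - s) * f' s := by
    have e2 : (∫ t in u..v, (∫ s in u..t, f' s))
        = ∫ t in Ioc u v, (∫ s in Ioc u t, f' s) := by
      rw [integral_of_le huv]
      refine setIntegral_congr_fun measurableSet_Ioc fun t ht => ?_
      rw [integral_of_le ht.1.le]
    rw [e2, fubini_triangle huv hIoc, ← integral_of_le huv]
  -- expand (t - k) = (t - v) + (v - k)
  have hmul : IntervalIntegrable (fun t => (v - t) * f' t) volume u v :=
    huvInt.continuousOn_mul (by fun_prop)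
  have e3 : (∫ t in u..v, (t - k) * f' t)
      = (∫ t in u..v, (v - k) * f' t) - ∫ t in u..v, (v - t) * f' t := by
    rw [← integral_sub (huvInt.const_mul _) hmul]
    congr 1; funext t; ring
  have e4 : (∫ t in u..v, (v - k) * f' t) = (v - k) * ∫ t in u..v, f' t :=
    integral_const_mul _ _
  have e5 : (∫ t in u..v, f' t) = (∫ s in a..v, f' s) - ∫ s in a..u, f' s := by
    rw [← integral_add_adjacent_intervals (hsub a u le_rfl hau (huv.trans hvb)) huvInt]
    ring
  have := hJ
  rw [htri] at this
  rw [e3, e4, e5, this]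
  ring

/-- **Companion of Ostrowski's inequality for `f' ∈ L²[a,b]`** (Theorem 2.3, inequality (2.31)).
Absolute continuity of `f` on `[a,b]` with derivative `f'` is encoded by continuity of `f`
together with the fundamental theorem of calculus identity `f x - f a = ∫_a^x f'` for
`x ∈ [a,b]`, `f'` being integrable. With
`σ(f') = ∫_a^b f'(t)² dt - (f b - f a)²/(b - a)`, for all `x ∈ [a, (a+b)/2]`,
`|(f x + f (a+b-x))/2 - (1/(b-a)) ∫_a^b f|
   ≤ (b-a)^{-1/2} · √((b-a)²/48 + (x - (3a+b)/4)²) · √(σ(f'))`. -/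
theorem companion_ostrowski_first_deriv_L2
    (a b : ℝ) (hab : a < b) (f f' : ℝ → ℝ)
    (hcont : ContinuousOn f (Set.Icc a b))
    (hint : IntervalIntegrable f' MeasureTheory.volume a b)
    (hftc : ∀ x ∈ Set.Icc a b, f x - f a = ∫ t in a..x, f' t)
    (hL2 : IntervalIntegrable (fun t => (f' t) ^ 2) MeasureTheory.volume a b)
    (σ : ℝ) (hσ : σ = (∫ t in a..b, (f' t) ^ 2) - (f b - f a) ^ 2 / (b - a)) :
    ∀ x ∈ Set.Icc a ((a + b) / 2),
      |(f x + f (a + b - x)) / 2 - (1 / (b - a)) * ∫ t in a..b, f t|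
        ≤ (Real.sqrt (b - a))⁻¹ *
            Real.sqrt ((b - a) ^ 2 / 48 + (x - (3 * a + b) / 4) ^ 2) * Real.sqrt σ := by
  intro x hx
  obtain ⟨hax, hxc⟩ := hx
  have hab' : (0:ℝ) < b - a := by linarith
  set c : ℝ := (a + b) / 2 with hc
  set y : ℝ := a + b - x with hy
  have hxc' : x ≤ c := hxc
  have hcy : c ≤ y := by rw [hc, hy]; linarith [hxc']
  have hcb : c ≤ b := by rw [hc]; linarith
  have hac : a ≤ c := by rw [hc]; linarith
  have hxb : x ≤ b := le_trans hxc' hcb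
  have hyb : y ≤ b := by rw [hy]; linarith
  have hay : a ≤ y := le_trans hac hcy
  have hxy : x ≤ y := le_trans hxc' hcy
  -- subinterval integrability of f'
  have hmem : ∀ w : ℝ, a ≤ w → w ≤ b → w ∈ uIcc a b := fun w h1 h2 => by
    rw [uIcc_of_le hab.le]; exact ⟨h1, h2⟩
  have hsub : ∀ w z : ℝ, a ≤ w → w ≤ z → z ≤ b → IntervalIntegrable f' volume w z :=
    fun w z h1 h2 h3 => hint.mono_set
      (uIcc_subset_uIcc (hmem w h1 (h2.trans h3)) (hmem z (h1.trans h2) h3))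
  -- F is continuous, hence interval integrable
  have hFcont : ContinuousOn (fun t => ∫ s in a..t, f' s) (Icc a b) := by
    have h1 : IntegrableOn f' (Icc a b) volume := by
      rw [integrableOn_Icc_iff_integrableOn_Ioc]
      exact (intervalIntegrable_iff_integrableOn_Ioc_of_le hab.le).mp hint
    have := continuousOn_primitive_interval (μ := volume) (f := f') (a := a) (b := b)
      (by rwa [uIcc_of_le hab.le])
    rwa [uIcc_of_le hab.le] at this
  have hFint : IntervalIntegrable (fun t => ∫ s in a..t, f' s) volume a b :=
    ContinuousOn.intervalIntegrable (by rwa [uIcc_of_le hab.le])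
  set m : ℝ := (f b - f a) / (b - a) with hm
  set p : ℝ → ℝ := fun t => if t ≤ x then t - a else if t ≤ y then t - c else t - b with hp
  -- values of p on pieces
  have hp1 : ∀ t ∈ Ioc a x, p t = t - a := fun t ht => if_pos ht.2
  have hp2 : ∀ t ∈ Ioc x y, p t = t - c := fun t ht => by
    rw [hp]; simp only [if_neg (not_le.mpr ht.1), if_pos ht.2]
  have hp3 : ∀ t ∈ Ioc y b, p t = t - b := fun t ht => by
    have h1 : ¬ t ≤ x := not_le.mpr (lt_of_le_of_lt hxy ht.1)
    have h2 : ¬ t ≤ y := not_le.mpr ht.1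
    rw [hp]; simp only [if_neg h1, if_neg h2]
  -- congruence helper
  have hcongr : ∀ (u v : ℝ), u ≤ v → ∀ (g q : ℝ → ℝ), (∀ t ∈ Ioc u v, g t = q t) →
      (∫ t in u..v, g t) = ∫ t in u..v, q t := by
    intro u v huv g q hgq
    rw [integral_of_le huv, integral_of_le huv]
    exact setIntegral_congr_fun measurableSet_Ioc hgq
  -- integrability of p, p*f', p^2 on the three pieces, and on a..b
  have hIoc3 : Ioc a x ∪ Ioc x y ∪ Ioc y b = Ioc a b := by
    rw [Ioc_union_Ioc_eq_Ioc hax hxy, Ioc_union_Ioc_eq_Ioc (hax.trans hxy) hyb]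
  have hpieceInt : ∀ (g q : ℝ → ℝ) (u v : ℝ), u ≤ v → (∀ t ∈ Ioc u v, g t = q t) →
      IntervalIntegrable q volume u v → IntegrableOn g (Ioc u v) volume := by
    intro g q u v huv hgq hq
    exact ((intervalIntegrable_iff_integrableOn_Ioc_of_le huv).mp hq).congr_fun
      (fun t ht => (hgq t ht).symm) measurableSet_Ioc
  have hpInt : IntervalIntegrable p volume a b := by
    rw [intervalIntegrable_iff_integrableOn_Ioc_of_le hab.le, ← hIoc3]
    exact ((hpieceInt p (fun t => t - a) a x hax hp1
        (ContinuousOn.intervalIntegrable (by fun_prop))).union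
      (hpieceInt p (fun t => t - c) x y hxy hp2
        (ContinuousOn.intervalIntegrable (by fun_prop)))).union
      (hpieceInt p (fun t => t - b) y b hyb hp3
        (ContinuousOn.intervalIntegrable (by fun_prop)))
  have hp2Int : IntervalIntegrable (fun t => p t ^ 2) volume a b := by
    rw [intervalIntegrable_iff_integrableOn_Ioc_of_le hab.le, ← hIoc3]
    exact ((hpieceInt _ (fun t => (t - a) ^ 2) a x hax
        (fun t ht => by rw [hp1 t ht])
        (ContinuousOn.intervalIntegrable (by fun_prop))).union
      (hpieceInt _ (fun t => (t - c) ^ 2) x y hxy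
        (fun t ht => by rw [hp2 t ht])
        (ContinuousOn.intervalIntegrable (by fun_prop)))).union
      (hpieceInt _ (fun t => (t - b) ^ 2) y b hyb
        (fun t ht => by rw [hp3 t ht])
        (ContinuousOn.intervalIntegrable (by fun_prop)))
  have hpfInt : IntervalIntegrable (fun t => p t * f' t) volume a b := by
    rw [intervalIntegrable_iff_integrableOn_Ioc_of_le hab.le, ← hIoc3]
    exact ((hpieceInt _ (fun t => (t - a) * f' t) a x hax
        (fun t ht => by rw [hp1 t ht])
        ((hsub a x le_rfl hax hxb).continuousOn_mul (by fun_prop))).union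
      (hpieceInt _ (fun t => (t - c) * f' t) x y hxy
        (fun t ht => by rw [hp2 t ht])
        ((hsub x y hax hxy hyb).continuousOn_mul (by fun_prop)))).union
      (hpieceInt _ (fun t => (t - b) * f' t) y b hyb
        (fun t ht => by rw [hp3 t ht])
        ((hsub y b hay hyb le_rfl).continuousOn_mul (by fun_prop)))
  -- splitting into adjacent intervals
  have hsplit : ∀ g : ℝ → ℝ, IntervalIntegrable g volume a b →
      (∫ t in a..b, g t)
        = (∫ t in a..x, g t) + (∫ t in x..y, g t) + ∫ t in y..b, g t := by
    intro g hg
    have hsubg : ∀ w z : ℝ, a ≤ w → w ≤ z → z ≤ b → IntervalIntegrable g volume w z :=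
      fun w z h1 h2 h3 => hg.mono_set
        (uIcc_subset_uIcc (hmem w h1 (h2.trans h3)) (hmem z (h1.trans h2) h3))
    rw [integral_add_adjacent_intervals (hsubg a x le_rfl hax hxb) (hsubg x y hax hxy hyb),
      integral_add_adjacent_intervals (hsubg a y le_rfl hay hyb) (hsubg y b hay hyb le_rfl)]
  -- total integral of p * f'
  have hS : (∫ t in a..b, p t * f' t)
      = (b - a) / 2 * ((∫ s in a..x, f' s) + (∫ s in a..y, f' s))
        - ∫ t in a..b, (∫ s in a..t, f' s) := by
    have e1 : (∫ t in a..x, p t * f' t) = ∫ t in a..x, (t - a) * f' t :=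
      hcongr a x hax _ _ (fun t ht => by rw [hp1 t ht])
    have e2 : (∫ t in x..y, p t * f' t) = ∫ t in x..y, (t - c) * f' t :=
      hcongr x y hxy _ _ (fun t ht => by rw [hp2 t ht])
    have e3 : (∫ t in y..b, p t * f' t) = ∫ t in y..b, (t - b) * f' t :=
      hcongr y b hyb _ _ (fun t ht => by rw [hp3 t ht])
    have q1 := primitive_parts hint hab.le le_rfl hax hxb a
    have q2 := primitive_parts hint hab.le hax hxy hyb c
    have q3 := primitive_parts hint hab.le hay hyb le_rfl b
    have hca : x - a - (x - c) = (b - a) / 2 := by rw [hc]; ring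
    have hcb2 : y - c - (y - b) = (b - a) / 2 := by rw [hc]; ring
    rw [hsplit _ hpfInt, e1, e2, e3, q1, q2, q3, hsplit _ hFint]
    linear_combination (∫ s in a..x, f' s) * hca + (∫ s in a..y, f' s) * hcb2
  -- elementary integrals
  have hlin : ∀ u v k : ℝ, (∫ t in u..v, (t - k)) = (v - k) ^ 2 / 2 - (u - k) ^ 2 / 2 := by
    intro u v k
    rw [integral_comp_sub_right (fun t => t) k, integral_id]
    ring
  have hsq : ∀ u v k : ℝ, (∫ t in u..v, (t - k) ^ 2) = ((v - k) ^ 3 - (u - k) ^ 3) / 3 := by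
    intro u v k
    rw [integral_comp_sub_right (fun t => t ^ 2) k, integral_pow]
    norm_num
  -- total integral of p
  have hp0 : (∫ t in a..b, p t) = 0 := by
    rw [hsplit _ hpInt,
      hcongr a x hax _ _ (fun t ht => hp1 t ht),
      hcongr x y hxy _ _ (fun t ht => hp2 t ht),
      hcongr y b hyb _ _ (fun t ht => hp3 t ht),
      hlin, hlin, hlin, hy, hc]
    ring
  -- total integral of p ^ 2
  have hp2tot : (∫ t in a..b, p t ^ 2)
      = (b - a) * ((b - a) ^ 2 / 48 + (x - (3 * a + b) / 4) ^ 2) := by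
    rw [hsplit _ hp2Int,
      hcongr a x hax _ _ (fun t ht => by rw [hp1 t ht]),
      hcongr x y hxy _ _ (fun t ht => by rw [hp2 t ht]),
      hcongr y b hyb _ _ (fun t ht => by rw [hp3 t ht]),
      hsq, hsq, hsq, hy, hc]
    ring
  -- ∫ f' = f b - f a
  have hIf' : (∫ t in a..b, f' t) = f b - f a :=
    (hftc b (right_mem_Icc.mpr hab.le)).symm
  -- σ as the integral of (f' - m)^2
  have hQint : IntervalIntegrable (fun t => (f' t - m) ^ 2) volume a b := by
    have e : (fun t => (f' t - m) ^ 2)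
        = fun t => f' t ^ 2 - (2 * m) * f' t + m * m := by
      funext t; ring
    rw [e]
    exact (hL2.sub (hint.const_mul _)).add intervalIntegrable_const
  have hσ2 : σ = ∫ t in a..b, (f' t - m) ^ 2 := by
    have e : (fun t => (f' t - m) ^ 2)
        = fun t => f' t ^ 2 - (2 * m) * f' t + m * m := by
      funext t; ring
    rw [e, integral_add (hL2.sub (hint.const_mul _)) intervalIntegrable_const,
      integral_sub hL2 (hint.const_mul _), intervalIntegral.integral_const_mul, hIf',
      intervalIntegral.integral_const, smul_eq_mul, hσ, hm]
    field_simp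
    ring
  have hσnn : 0 ≤ σ := by
    rw [hσ2]
    exact intervalIntegral.integral_nonneg hab.le (fun t _ => sq_nonneg _)
  -- Cauchy-Schwarz
  have hPQint : IntervalIntegrable (fun t => p t * (f' t - m)) volume a b := by
    have e : (fun t => p t * (f' t - m)) = fun t => p t * f' t - m * p t := by
      funext t; ring
    rw [e]
    exact hpfInt.sub (hpInt.const_mul _)
  have hcs : (∫ t in a..b, p t * (f' t - m)) ^ 2
      ≤ (∫ t in a..b, p t ^ 2) * ∫ t in a..b, (f' t - m) ^ 2 := by
    rw [integral_of_le hab.le, integral_of_le hab.le, integral_of_le hab.le]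
    exact cs_integral
      ((intervalIntegrable_iff_integrableOn_Ioc_of_le hab.le).mp hp2Int)
      ((intervalIntegrable_iff_integrableOn_Ioc_of_le hab.le).mp hQint)
      ((intervalIntegrable_iff_integrableOn_Ioc_of_le hab.le).mp hPQint)
  -- value of B
  have hBval : (∫ t in a..b, p t * (f' t - m))
      = (b - a) / 2 * ((∫ s in a..x, f' s) + (∫ s in a..y, f' s))
        - ∫ t in a..b, (∫ s in a..t, f' s) := by
    have e : (fun t => p t * (f' t - m)) = fun t => p t * f' t - m * p t := by
      funext t; ring
    rw [e, integral_sub hpfInt (hpInt.const_mul _), intervalIntegral.integral_const_mul, hp0, hS]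
    ring
  -- the left-hand side equals B / (b - a)
  have hfx : f x = f a + ∫ s in a..x, f' s := by
    have := hftc x ⟨hax, hxb⟩; linarith
  have hfy : f y = f a + ∫ s in a..y, f' s := by
    have := hftc y ⟨hay, hyb⟩; linarith
  have hIf : (∫ t in a..b, f t) = (b - a) * f a + ∫ t in a..b, (∫ s in a..t, f' s) := by
    have e1 : (∫ t in a..b, f t) = ∫ t in a..b, (f a + ∫ s in a..t, f' s) := by
      refine hcongr a b hab.le _ _ (fun t ht => ?_)
      have := hftc t ⟨ht.1.le, ht.2⟩; linarith
    rw [e1, integral_add intervalIntegrable_const hFint,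
      intervalIntegral.integral_const, smul_eq_mul]
  have hgoal_eq : (f x + f y) / 2 - (1 / (b - a)) * ∫ t in a..b, f t
      = (∫ t in a..b, p t * (f' t - m)) / (b - a) := by
    rw [hBval, hfx, hfy, hIf]
    field_simp
    ring
  -- put everything together
  have hC : (0:ℝ) ≤ (b - a) ^ 2 / 48 + (x - (3 * a + b) / 4) ^ 2 := by positivity
  have habs : |∫ t in a..b, p t * (f' t - m)|
      ≤ Real.sqrt ((b - a) * ((b - a) ^ 2 / 48 + (x - (3 * a + b) / 4) ^ 2))
        * Real.sqrt σ := by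
    have h1 : (∫ t in a..b, p t * (f' t - m)) ^ 2
        ≤ ((b - a) * ((b - a) ^ 2 / 48 + (x - (3 * a + b) / 4) ^ 2)) * σ := by
      rw [← hp2tot, hσ2]
      exact hcs
    have h2 := Real.sqrt_le_sqrt h1
    rw [Real.sqrt_sq_eq_abs,
      Real.sqrt_mul (mul_nonneg hab'.le hC) σ] at h2
    rwa [← Real.sqrt_mul (mul_nonneg hab'.le hC) σ, Real.sqrt_mul (mul_nonneg hab'.le hC)]
  rw [hgoal_eq, abs_div, abs_of_pos hab']
  rw [Real.sqrt_mul hab'.le] at habs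
  have hs0 : (0:ℝ) < Real.sqrt (b - a) := Real.sqrt_pos.mpr hab'
  have step : |∫ t in a..b, p t * (f' t - m)| / (b - a)
      ≤ (Real.sqrt (b - a) * Real.sqrt ((b - a) ^ 2 / 48 + (x - (3 * a + b) / 4) ^ 2)
          * Real.sqrt σ) / (b - a) := by
    gcongr
  refine step.trans (le_of_eq ?_)
  have key : (Real.sqrt (b - a))⁻¹ * (b - a) = Real.sqrt (b - a) := by
    nth_rewrite 1 [← Real.mul_self_sqrt hab'.le]
    field_simp
    rw [Real.sqrt_sq hs0.le, Real.mul_self_sqrt hab'.le]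
  rw [div_eq_iff hab'.ne']
  linear_combination -(Real.sqrt ((b - a) ^ 2 / 48 + (x - (3 * a + b) / 4) ^ 2)
    * Real.sqrt σ) * key
end
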